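/- arXiv:1909.13388 — 5 statements merged into one kernel-verified Lean document; each statement's English description precedes it below -/
import Mathlib

section
/- Let n ≥ 2 and 1 ≤ m < n. Then the number of ordered pairs (u, v) of n-cycles on [n] such that the product u∘v fixes every element of [m] equals ((n−1)!)² / (m! · binom(n−1, m)) = (n−1)! · (n−1−m)!; equivalently, m!·binom(n−1,m) times this number of pairs equals ((n−1)!)². In particular, the probability that the product of two independent uniformly random n-cycles fixes every element of [m] is 1/(m!·binom(n−1,m)). -/
open Equiv Finset

noncomputable section

/-- The number of cycles of a permutation of `Fin n`, counting fixed points as cycles. -/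
def cycleCount {n : ℕ} (σ : Equiv.Perm (Fin n)) : ℕ :=
  σ.cycleType.card + (Finset.univ.filter fun x => σ x = x).card

/-- A permutation of `Fin n` consisting of a single cycle of length `n`
(equivalently, having exactly one cycle, fixed points counting as cycles). -/
def IsFullCycle {n : ℕ} (σ : Equiv.Perm (Fin n)) : Prop :=
  cycleCount σ = 1

/-- `σ` separates the first `m` elements (`1, …, m`, i.e. indices `0, …, m-1`):
they lie in pairwise distinct cycles of `σ`. -/
def Separates {n : ℕ} (m : ℕ) (σ : Equiv.Perm (Fin n)) : Prop :=
  ∀ i j : Fin n, (i : ℕ) < m → (j : ℕ) < m → i ≠ j → ¬ σ.SameCycle i j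

/-- `C_m(N, k)`: the number of permutations of `[N]` with exactly `k` cycles
that separate the first `m` elements. -/
def sepCount (N m k : ℕ) : ℕ :=
  Nat.card {σ : Equiv.Perm (Fin N) // cycleCount σ = k ∧ Separates m σ}

/-- `C(N, k)`: the signless Stirling number of the first kind, i.e. the number of
permutations of `[N]` with exactly `k` cycles (fixed points counting as cycles). -/
def stirlingCycle (N k : ℕ) : ℕ :=
  Nat.card {σ : Equiv.Perm (Fin N) // cycleCount σ = k}


set_option linter.unusedSectionVars false
set_option maxHeartbeats 1000000

namespace IsoProbAux

open Equiv.Perm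

/-- `σ` has a single cycle covering everything (fixed point counts when type is a singleton). -/
def FC {β : Type*} (σ : Equiv.Perm β) : Prop := ∀ x y, σ.SameCycle x y

variable {α : Type} [Fintype α] [DecidableEq α]

lemma mul_swap_fix (v : Equiv.Perm α) (a : α) : (Equiv.swap a (v a) * v) a = a := by
  simp [Equiv.swap_apply_right]

lemma ne_iff (v : Equiv.Perm α) (a : α) :
    ∀ x : α, x ≠ a ↔ (Equiv.swap a (v a) * v) x ≠ a := by
  intro x
  constructor
  · intro hx h
    exact hx ((Equiv.swap a (v a) * v).injective (h.trans (mul_swap_fix v a).symm))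
  · intro h hx; exact h (by rw [hx]; exact mul_swap_fix v a)

/-- Contract the point `a` out of the permutation `v`. -/
def contract (a : α) (v : Equiv.Perm α) : Equiv.Perm {x : α // x ≠ a} :=
  (Equiv.swap a (v a) * v).subtypePerm (fun x => (ne_iff v a x).symm)

lemma contract_apply_coe (a : α) (v : Equiv.Perm α) (x : {x : α // x ≠ a}) :
    (contract a v x : α) = Equiv.swap a (v a) (v x) := rfl


lemma pow_fix (P : Equiv.Perm α) (a : α) (hPa : P a = a) : ∀ j : ℕ, (P ^ j) a = a := by
  intro j; induction j with
  | zero => rfl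
  | succ j ih => rw [pow_succ, Equiv.Perm.mul_apply, hPa, ih]

lemma P_apply (v : Equiv.Perm α) (a x : α) (hx : x ≠ a) :
    (Equiv.swap a (v a) * v) x = if v x = a then v a else v x := by
  rw [Equiv.Perm.mul_apply]
  rcases eq_or_ne (v x) a with h | h
  · rw [if_pos h, h, Equiv.swap_apply_left]
  · rw [if_neg h]
    exact Equiv.swap_apply_of_ne_of_ne h (fun hb => hx (v.injective hb))

lemma orbit_fwd (v : Equiv.Perm α) (a : α) (hva : v a ≠ a) :
    ∀ (k : ℕ) (x : α), x ≠ a → (v ^ k) x ≠ a →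
      ∃ j : ℕ, ((Equiv.swap a (v a) * v) ^ j) x = (v ^ k) x := by
  intro k
  induction k using Nat.strong_induction_on with
  | _ k IH =>
    match k with
    | 0 => exact fun x hx _ => ⟨0, rfl⟩
    | Nat.succ k =>
      intro x hx hk1
      have hsucc : ∀ (w : Equiv.Perm α) (l : ℕ) (y : α), (w ^ (l+1)) y = w ((w ^ l) y) := by
        intro w l y; rw [pow_succ', Equiv.Perm.mul_apply]
      by_cases h : (v ^ k) x = a
      · match k, h with
        | 0, h => exact absurd h hx
        | Nat.succ k', h =>
          have hk' : (v ^ k') x ≠ a := by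
            intro he
            apply hva
            have : (v ^ (k' + 1)) x = v a := by rw [hsucc, he]
            rw [h] at this
            exact this.symm
          obtain ⟨j, hj⟩ := IH k' (by omega) x hx hk'
          refine ⟨j + 1, ?_⟩
          rw [hsucc, hj, P_apply v a _ hk']
          have hva2 : v ((v ^ k') x) = a := by rw [← hsucc]; exact h
          rw [if_pos hva2, hsucc (v) (k'+1), h]
      · obtain ⟨j, hj⟩ := IH k (by omega) x hx h
        refine ⟨j + 1, ?_⟩
        rw [hsucc, hj, P_apply v a _ h, hsucc]
        have : v ((v ^ k) x) ≠ a := by rw [← hsucc]; exact hk1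
        rw [if_neg this]

lemma orbit_bwd (v : Equiv.Perm α) (a : α) :
    ∀ (j : ℕ) (x : α), x ≠ a → v.SameCycle x (((Equiv.swap a (v a) * v) ^ j) x) := by
  intro j
  induction j with
  | zero => exact fun x _ => Equiv.Perm.SameCycle.refl v x
  | succ j ih =>
    intro x hx
    set P := Equiv.swap a (v a) * v with hP
    have hz : (P ^ j) x ≠ a := fun h =>
      hx ((P ^ j).injective (h.trans (pow_fix P a (mul_swap_fix v a) j).symm))
    have step : v.SameCycle ((P ^ j) x) (P ((P ^ j) x)) := by
      rw [hP, P_apply v a _ hz]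
      split_ifs with h
      · refine ⟨2, ?_⟩
        rw [show (2:ℤ) = ((2:ℕ):ℤ) from rfl, zpow_natCast, pow_succ, pow_one,
          Equiv.Perm.mul_apply, h]
      · exact ⟨1, by simp [hP]⟩
    have hstep : (P ^ (j+1)) x = P ((P ^ j) x) := by rw [pow_succ', Equiv.Perm.mul_apply]
    rw [hstep]
    exact (ih x hx).trans step


lemma sc_iff (v : Equiv.Perm α) (a : α) (hva : v a ≠ a) {x y : α} (hx : x ≠ a) (hy : y ≠ a) :
    v.SameCycle x y ↔ (Equiv.swap a (v a) * v).SameCycle x y := by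
  constructor
  · intro h
    obtain ⟨k, _, hk⟩ := h.exists_pow_eq'
    obtain ⟨j, hj⟩ := orbit_fwd v a hva k x hx (by rw [hk]; exact hy)
    exact ⟨j, by rw [zpow_natCast, hj, hk]⟩
  · intro h
    obtain ⟨j, _, hj⟩ := h.exists_pow_eq'
    have := orbit_bwd v a j x hx
    rwa [hj] at this

lemma contract_sameCycle (v : Equiv.Perm α) (a : α) (x y : {z : α // z ≠ a}) :
    (contract a v).SameCycle x y ↔ (Equiv.swap a (v a) * v).SameCycle (x : α) (y : α) := by
  constructor
  · rintro ⟨k, hk⟩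
    refine ⟨k, ?_⟩
    rw [contract, Equiv.Perm.subtypePerm_zpow] at hk
    exact congrArg Subtype.val hk
  · rintro ⟨k, hk⟩
    refine ⟨k, ?_⟩
    rw [contract, Equiv.Perm.subtypePerm_zpow]
    exact Subtype.ext hk

lemma fc_contract (v : Equiv.Perm α) (a : α) (hva : v a ≠ a) :
    FC v ↔ FC (contract a v) := by
  constructor
  · intro h x y
    exact (contract_sameCycle v a x y).mpr ((sc_iff v a hva x.2 y.2).mp (h x y))
  · intro h
    have key : ∀ x : α, x ≠ a → ∀ y : α, y ≠ a → v.SameCycle x y := fun x hx y hy =>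
      (sc_iff v a hva hx hy).mpr ((contract_sameCycle v a ⟨x, hx⟩ ⟨y, hy⟩).mp (h _ _))
    have hia : (v⁻¹ : Equiv.Perm α) a ≠ a := fun he => hva (by conv_lhs => rw [← he, ← Equiv.Perm.mul_apply, mul_inv_cancel, Equiv.Perm.one_apply])
    have haux : ∀ x : α, x ≠ a → v.SameCycle x a := fun x hx =>
      (key x hx _ hia).trans ⟨1, by simp⟩
    intro x y
    rcases eq_or_ne x a with hxa | hx
    · rcases eq_or_ne y a with hya | hy
      · rw [hxa, hya]
      · rw [hxa]; exact (haux y hy).symm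
    · rcases eq_or_ne y a with hya | hy
      · rw [hya]; exact haux x hx
      · exact key x hx y hy

lemma fc_no_fixed {v : Equiv.Perm α} (hv : FC v) (h2 : 2 ≤ Fintype.card α) (x : α) :
    v x ≠ x := by
  intro hfix
  obtain ⟨y, hy⟩ := Fintype.exists_ne_of_one_lt_card (by omega) x
  obtain ⟨k, hk⟩ := hv x y
  rw [Equiv.Perm.zpow_apply_eq_self_of_apply_eq_self hfix k] at hk
  exact hy hk.symm

lemma contract_retract (v : Equiv.Perm α) (a : α) :
    Equiv.swap a (v a) * Equiv.Perm.ofSubtype (contract a v) = v := by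
  rw [contract, Equiv.Perm.ofSubtype_subtypePerm _ ?h₂, Equiv.swap_mul_self_mul]
  case h₂ =>
    intro x hx hxa
    apply hx
    rw [hxa]
    exact mul_swap_fix v a

lemma section_apply_a (a b : α) (hb : b ≠ a) (w : Equiv.Perm {x : α // x ≠ a}) :
    (Equiv.swap a b * Equiv.Perm.ofSubtype w) a = b := by
  rw [Equiv.Perm.mul_apply, Equiv.Perm.ofSubtype_apply_of_not_mem w (by simp), Equiv.swap_apply_left]

lemma contract_section (a b : α) (hb : b ≠ a) (w : Equiv.Perm {x : α // x ≠ a}) :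
    contract a (Equiv.swap a b * Equiv.Perm.ofSubtype w) = w := by
  set v := Equiv.swap a b * Equiv.Perm.ofSubtype w with hv
  have hva : v a = b := section_apply_a a b hb w
  have hkey : Equiv.swap a (v a) * v = Equiv.Perm.ofSubtype w := by
    rw [hva, hv, Equiv.swap_mul_self_mul]
  ext x
  rw [contract_apply_coe]
  rw [← Equiv.Perm.mul_apply, hkey, Equiv.Perm.ofSubtype_apply_coe]


def stepEquiv (g : Equiv.Perm α) (S : Finset α) (a : α) (ha : a ∈ S) (hga : g a ≠ a) :
    {v : Equiv.Perm α // FC v ∧ ∀ i ∈ S, v i = g i} ≃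
    {w : Equiv.Perm {x : α // x ≠ a} // FC w ∧
      ∀ i : {x : α // x ≠ a}, (i : α) ∈ S → w i = contract a g i} where
  toFun := fun ⟨v, hv, hvS⟩ => ⟨contract a v, by
    have hva : v a ≠ a := by rw [hvS a ha]; exact hga
    exact (fc_contract v a hva).mp hv,
    fun i hi => by
      apply Subtype.ext
      rw [contract_apply_coe, contract_apply_coe, hvS i.1 hi, hvS a ha]⟩
  invFun := fun ⟨w, hw, hwS⟩ => ⟨Equiv.swap a (g a) * Equiv.Perm.ofSubtype w, by
    have hva : (Equiv.swap a (g a) * Equiv.Perm.ofSubtype w) a = g a :=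
      section_apply_a a (g a) hga w
    have hva' : (Equiv.swap a (g a) * Equiv.Perm.ofSubtype w) a ≠ a := by rw [hva]; exact hga
    refine ⟨(fc_contract _ a hva').mpr ?_, ?_⟩
    · rw [contract_section a (g a) hga w]; exact hw
    · intro i hi
      by_cases hia : i = a
      · rw [hia]; exact hva
      · rw [Equiv.Perm.mul_apply, Equiv.Perm.ofSubtype_apply_of_mem w hia]
        have := congrArg Subtype.val (hwS ⟨i, hia⟩ hi)
        rw [contract_apply_coe] at this
        rw [this, Equiv.swap_apply_self]⟩
  left_inv := fun ⟨v, hv, hvS⟩ => by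
    apply Subtype.ext
    show Equiv.swap a (g a) * Equiv.Perm.ofSubtype (contract a v) = v
    rw [← hvS a ha]
    exact contract_retract v a
  right_inv := fun ⟨w, hw, hwS⟩ => by
    apply Subtype.ext
    exact contract_section a (g a) hga w

def baseEquiv (a : α) (h2 : 2 ≤ Fintype.card α) :
    {v : Equiv.Perm α // FC v} ≃ {x : α // x ≠ a} × {w : Equiv.Perm {x : α // x ≠ a} // FC w} where
  toFun := fun ⟨v, hv⟩ =>
    (⟨v a, fc_no_fixed hv h2 a⟩, ⟨contract a v, (fc_contract v a (fc_no_fixed hv h2 a)).mp hv⟩)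
  invFun := fun ⟨b, w, hw⟩ => ⟨Equiv.swap a (b : α) * Equiv.Perm.ofSubtype w, by
    have hva : (Equiv.swap a (b : α) * Equiv.Perm.ofSubtype w) a = (b : α) :=
      section_apply_a a (b : α) b.2 w
    have hva' : (Equiv.swap a (b : α) * Equiv.Perm.ofSubtype w) a ≠ a := by rw [hva]; exact b.2
    refine (fc_contract _ a hva').mpr ?_
    rw [contract_section a (b : α) b.2 w]; exact hw⟩
  left_inv := fun ⟨v, hv⟩ => by
    apply Subtype.ext
    exact contract_retract v a
  right_inv := fun ⟨b, w, hw⟩ => by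
    refine Prod.ext ?_ ?_
    · exact Subtype.ext (section_apply_a a (b : α) b.2 w)
    · exact Subtype.ext (contract_section a (b : α) b.2 w)


lemma card_subtype_ne' (a : α) : Fintype.card {x : α // x ≠ a} = Fintype.card α - 1 := by
  have h1 : Fintype.card {x : α // x = a} = 1 := Fintype.card_subtype_eq a
  have := Fintype.card_subtype_compl (fun x : α => x = a)
  rw [h1] at this
  exact this

lemma key : ∀ (N : ℕ) (α : Type) [Fintype α] [DecidableEq α] (g : Equiv.Perm α) (S : Finset α),
    Fintype.card α = N → FC g → S ≠ Finset.univ →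
    Nat.card {v : Equiv.Perm α // FC v ∧ ∀ i ∈ S, v i = g i} =
      Nat.factorial (Fintype.card α - S.card - 1) := by
  intro N
  induction N using Nat.strong_induction_on with
  | _ N IH =>
    intro α _ _ g S hN hg hS
    rcases S.eq_empty_or_nonempty with rfl | ⟨a, ha⟩
    · -- S = ∅
      have hne : Nonempty α := by
        by_contra h
        rw [not_nonempty_iff] at h
        exact hS Finset.univ_eq_empty.symm
      have h1 : 1 ≤ Fintype.card α := Fintype.card_pos
      by_cases h2 : 2 ≤ Fintype.card α
      · obtain ⟨a⟩ := hne
        have e0 : {v : Equiv.Perm α // FC v ∧ ∀ i ∈ (∅ : Finset α), v i = g i} ≃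
            {v : Equiv.Perm α // FC v} := Equiv.subtypeEquivRight (fun v => by simp)
        rw [Nat.card_congr (e0.trans (baseEquiv a h2)), Nat.card_prod]
        have hga : g a ≠ a := fc_no_fixed hg h2 a
        have hg' : FC (contract a g) := (fc_contract g a hga).mp hg
        have hcs : Fintype.card {x : α // x ≠ a} = Fintype.card α - 1 := card_subtype_ne' a
        have e1 : {w : Equiv.Perm {x : α // x ≠ a} // FC w} ≃
            {w : Equiv.Perm {x : α // x ≠ a} // FC w ∧
              ∀ i ∈ (∅ : Finset {x : α // x ≠ a}), w i = contract a g i} :=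
          (Equiv.subtypeEquivRight (fun v => by simp)).symm
        rw [Nat.card_congr e1]
        rw [IH (N - 1) (by omega) {x : α // x ≠ a} (contract a g) ∅ (by omega) hg'
          (by
            have : Nonempty {x : α // x ≠ a} := by
              rw [← Fintype.card_pos_iff]; omega
            intro h
            exact Finset.univ_nonempty.ne_empty h.symm)]
        rw [Nat.card_eq_fintype_card, hcs, Finset.card_empty]
        obtain ⟨k, hk⟩ : ∃ k, Fintype.card α = k + 2 := ⟨Fintype.card α - 2, by omega⟩
        rw [hk]
        simp [Nat.factorial_succ]
      · -- card α = 1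
        have h1' : Fintype.card α = 1 := by omega
        haveI : Subsingleton α := Fintype.card_le_one_iff_subsingleton.mp (by omega)
        rw [h1']
        simp only [Finset.card_empty, Nat.sub_zero, Nat.sub_self, Nat.factorial_zero]
        rw [Nat.card_eq_one_iff_unique]
        constructor
        · exact ⟨fun u v => Subtype.ext (Equiv.ext fun x => Subsingleton.elim _ _)⟩
        · refine ⟨⟨1, fun x y => Equiv.Perm.sameCycle_one.mpr (Subsingleton.elim x y),
            fun i hi => absurd hi (Finset.notMem_empty i)⟩⟩
    · -- S nonempty, a ∈ S
      have hcS : S ⊂ Finset.univ := Finset.ssubset_iff_subset_ne.mpr ⟨Finset.subset_univ S, hS⟩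
      obtain ⟨c, hc⟩ : ∃ c, c ∉ S := by
        by_contra h
        push_neg at h
        exact hS (Finset.eq_univ_iff_forall.mpr h)
      have hca : c ≠ a := fun h => hc (h ▸ ha)
      have h2 : 2 ≤ Fintype.card α := Fintype.one_lt_card_iff_nontrivial.mpr ⟨⟨c, a, hca⟩⟩
      have hga : g a ≠ a := fc_no_fixed hg h2 a
      have hg' : FC (contract a g) := (fc_contract g a hga).mp hg
      have hcs : Fintype.card {x : α // x ≠ a} = Fintype.card α - 1 := card_subtype_ne' a
      have e2 : {w : Equiv.Perm {x : α // x ≠ a} // FC w ∧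
            ∀ i : {x : α // x ≠ a}, (i : α) ∈ S → w i = contract a g i} ≃
          {w : Equiv.Perm {x : α // x ≠ a} // FC w ∧
            ∀ i ∈ S.subtype (· ≠ a), w i = contract a g i} :=
        Equiv.subtypeEquivRight (fun w => by
          constructor
          · rintro ⟨h1, h2⟩
            exact ⟨h1, fun i hi => h2 i (Finset.mem_subtype.mp hi)⟩
          · rintro ⟨h1, h2⟩
            exact ⟨h1, fun i hi => h2 i (Finset.mem_subtype.mpr hi)⟩)
      rw [Nat.card_congr ((stepEquiv g S a ha hga).trans e2)]
      have hS'card : (S.subtype (· ≠ a)).card = S.card - 1 := by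
        rw [Finset.card_subtype, Finset.filter_ne', Finset.card_erase_of_mem ha]
      have hS'univ : S.subtype (· ≠ a) ≠ Finset.univ := by
        intro h
        have : (⟨c, hca⟩ : {x : α // x ≠ a}) ∈ S.subtype (· ≠ a) := h ▸ Finset.mem_univ _
        exact hc (Finset.mem_subtype.mp this)
      rw [IH (N - 1) (by omega) {x : α // x ≠ a} (contract a g) (S.subtype (· ≠ a))
        (by omega) hg' hS'univ]
      rw [hcs, hS'card]
      have hSlt : S.card < Fintype.card α := by
        have := Finset.card_lt_card hcS
        rwa [Finset.card_univ] at this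
      have hS1 : 1 ≤ S.card := Finset.card_pos.mpr ⟨a, ha⟩
      congr 1
      omega

end IsoProbAux

namespace IsoProbAux

lemma card_sigma_const {l : Type*} [Finite l] (F : l → Type*) [∀ i, Finite (F i)] (k : ℕ)
    (h : ∀ i, Nat.card (F i) = k) : Nat.card (Σ i, F i) = Nat.card l * k := by
  have e : ∀ i, Nonempty (F i ≃ Fin k) := fun i => by
    haveI := Fintype.ofFinite (F i)
    exact ⟨Fintype.equivFinOfCardEq (by rw [← Nat.card_eq_fintype_card, h])⟩
  have E : (Σ i, F i) ≃ l × Fin k :=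
    (Equiv.sigmaCongrRight fun i => (e i).some).trans (Equiv.sigmaEquivProd l (Fin k))
  rw [Nat.card_congr E, Nat.card_prod, Nat.card_eq_fintype_card (α := Fin k), Fintype.card_fin]

lemma fc_inv {β : Type*} {u : Equiv.Perm β} (h : FC u) : FC u⁻¹ :=
  fun x y => (Equiv.Perm.sameCycle_inv).mpr (h x y)

lemma fc_finRotate {n : ℕ} (hn : 2 ≤ n) : FC (finRotate n) := by
  have hc := isCycle_finRotate_of_le hn
  have hs := support_finRotate_of_le hn
  intro x y
  exact hc.sameCycle (Equiv.Perm.mem_support.mp (hs ▸ Finset.mem_univ x))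
    (Equiv.Perm.mem_support.mp (hs ▸ Finset.mem_univ y))

lemma fc_count {n : ℕ} (hn : 2 ≤ n) :
    Nat.card {u : Equiv.Perm (Fin n) // FC u} = Nat.factorial (n - 1) := by
  have e0 : {v : Equiv.Perm (Fin n) // FC v} ≃
      {v : Equiv.Perm (Fin n) // FC v ∧ ∀ i ∈ (∅ : Finset (Fin n)), v i = (finRotate n) i} :=
    (Equiv.subtypeEquivRight (fun v => by simp)).symm
  rw [Nat.card_congr e0, key (Fintype.card (Fin n)) (Fin n) (finRotate n) ∅ rfl
    (fc_finRotate hn) (by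
      intro h
      have hpos : 0 < n := by omega
      have : (⟨0, hpos⟩ : Fin n) ∈ (∅ : Finset (Fin n)) := by
        rw [h]; exact Finset.mem_univ _
      exact absurd this (Finset.notMem_empty _))]
  simp [Fintype.card_fin]

lemma filter_lt_card (n m : ℕ) (hm : m ≤ n) :
    (Finset.univ.filter fun i : Fin n => (i : ℕ) < m).card = m := by
  have : (Finset.univ.filter fun i : Fin n => (i : ℕ) < m) =
      Finset.map (Fin.castLEEmb hm) Finset.univ := by
    ext i
    simp only [Finset.mem_filter, Finset.mem_univ, true_and, Finset.mem_map]
    constructor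
    · intro hi
      exact ⟨⟨(i : ℕ), hi⟩, Fin.ext rfl⟩
    · rintro ⟨j, rfl⟩
      exact j.2
  rw [this, Finset.card_map, Finset.card_univ, Fintype.card_fin]

end IsoProbAux

open IsoProbAux in
lemma isFullCycle_iff_fc {n : ℕ} (hn : 1 ≤ n) (σ : Equiv.Perm (Fin n)) :
    IsFullCycle σ ↔ FC σ := by
  unfold IsFullCycle cycleCount
  constructor
  · intro h
    by_cases h1 : σ = 1
    · subst h1
      rw [Equiv.Perm.cycleType_one] at h
      have hft : (Finset.univ.filter fun x : Fin n => (1 : Equiv.Perm (Fin n)) x = x) =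
          Finset.univ := Finset.filter_true_of_mem (fun x _ => rfl)
      rw [hft, Finset.card_univ, Fintype.card_fin] at h
      simp only [Multiset.card_zero, Nat.zero_add] at h
      haveI : Subsingleton (Fin n) := by
        rw [← Fintype.card_le_one_iff_subsingleton, Fintype.card_fin]; omega
      intro x y
      exact Equiv.Perm.sameCycle_one.mpr (Subsingleton.elim x y)
    · have hpos : 0 < Multiset.card σ.cycleType := Equiv.Perm.card_cycleType_pos.mpr h1
      have hc : σ.IsCycle := Equiv.Perm.card_cycleType_eq_one.mp (by omega)
      have hfix : (Finset.univ.filter fun x => σ x = x).card = 0 := by omega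
      rw [Finset.card_eq_zero] at hfix
      have hfix' : ∀ x, σ x ≠ x := by
        intro x hx
        have : x ∈ Finset.univ.filter (fun x => σ x = x) := by simp [hx]
        rw [hfix] at this
        exact absurd this (Finset.notMem_empty x)
      intro x y
      exact hc.sameCycle (hfix' x) (hfix' y)
  · intro h
    by_cases h1 : σ = 1
    · subst h1
      have hsub : ∀ x y : Fin n, x = y := fun x y => Equiv.Perm.sameCycle_one.mp (h x y)
      have hone : n = 1 := by
        by_contra hne
        have h2 : 2 ≤ n := by omega
        have h0 : 0 < n := by omega
        have h1' : 1 < n := by omega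
        have := hsub (⟨0, h0⟩ : Fin n) (⟨1, h1'⟩ : Fin n)
        simp [Fin.ext_iff] at this
      rw [Equiv.Perm.cycleType_one]
      have hft : (Finset.univ.filter fun x : Fin n => (1 : Equiv.Perm (Fin n)) x = x) =
          Finset.univ := Finset.filter_true_of_mem (fun x _ => rfl)
      rw [hft, Finset.card_univ, Fintype.card_fin]
      simp [hone]
    · obtain ⟨x, hx⟩ : ∃ x, σ x ≠ x := by
        by_contra hall
        push_neg at hall
        exact h1 (Equiv.ext hall)
      have hc : σ.IsCycle := ⟨x, hx, fun y _ => h x y⟩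
      have hfix : (Finset.univ.filter fun z => σ z = z) = ∅ := by
        rw [Finset.filter_eq_empty_iff]
        intro z _ hz
        obtain ⟨k, hk⟩ := h z x
        rw [Equiv.Perm.zpow_apply_eq_self_of_apply_eq_self hz] at hk
        rw [hk] at hz
        exact hx hz
      rw [Equiv.Perm.card_cycleType_eq_one.mpr hc, hfix]
      simp


/-- For `n ≥ 2` and `1 ≤ m < n`, the number of ordered pairs `(u, v)` of
`n`-cycles on `[n]` whose product `u ∘ v` fixes every element of `[m]` equals
`((n-1)!)² / (m! ⬝ binom(n-1, m)) = (n-1)! ⬝ (n-1-m)!`; equivalently,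
`m! ⬝ binom(n-1, m)` times this number equals `((n-1)!)²`. -/
theorem isolation_probability (n m : ℕ) (hn : 2 ≤ n) (hm1 : 1 ≤ m) (hm : m < n) :
    Nat.card {p : Equiv.Perm (Fin n) × Equiv.Perm (Fin n) //
        IsFullCycle p.1 ∧ IsFullCycle p.2 ∧ ∀ i : Fin n, (i : ℕ) < m → (p.1 * p.2) i = i} =
      Nat.factorial (n - 1) * Nat.factorial (n - 1 - m) ∧
    Nat.factorial m * Nat.choose (n - 1) m *
      Nat.card {p : Equiv.Perm (Fin n) × Equiv.Perm (Fin n) //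
        IsFullCycle p.1 ∧ IsFullCycle p.2 ∧ ∀ i : Fin n, (i : ℕ) < m → (p.1 * p.2) i = i} =
      Nat.factorial (n - 1) ^ 2 := by
  classical
  have hn1 : 1 ≤ n := by omega
  set S : Finset (Fin n) := Finset.univ.filter (fun i : Fin n => (i : ℕ) < m) with hSdef
  have hScard : S.card = m := IsoProbAux.filter_lt_card n m (by omega)
  have hSuniv : S ≠ Finset.univ := by
    intro h
    have : (⟨m, hm⟩ : Fin n) ∈ S := h ▸ Finset.mem_univ _
    rw [hSdef, Finset.mem_filter] at this
    exact absurd this.2 (by simp)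
  have E : {p : Equiv.Perm (Fin n) × Equiv.Perm (Fin n) //
        IsFullCycle p.1 ∧ IsFullCycle p.2 ∧ ∀ i : Fin n, (i : ℕ) < m → (p.1 * p.2) i = i} ≃
      Σ u : {u : Equiv.Perm (Fin n) // IsoProbAux.FC u},
        {v : Equiv.Perm (Fin n) // IsoProbAux.FC v ∧ ∀ i ∈ S, v i = (u : Equiv.Perm (Fin n))⁻¹ i} := by
    refine ⟨fun p => ⟨⟨p.1.1, (isFullCycle_iff_fc hn1 _).mp p.2.1⟩,
        ⟨p.1.2, (isFullCycle_iff_fc hn1 _).mp p.2.2.1, ?_⟩⟩,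
      fun q => ⟨(q.1.1, q.2.1), (isFullCycle_iff_fc hn1 _).mpr q.1.2,
        (isFullCycle_iff_fc hn1 _).mpr q.2.2.1, ?_⟩, fun p => rfl, fun q => rfl⟩
    · intro i hi
      rw [hSdef, Finset.mem_filter] at hi
      have := p.2.2.2 i hi.2
      rw [Equiv.Perm.mul_apply] at this
      exact (Equiv.eq_symm_apply ..).mpr this
    · intro i hi
      have hiS : i ∈ S := by rw [hSdef, Finset.mem_filter]; exact ⟨Finset.mem_univ _, hi⟩
      rw [Equiv.Perm.mul_apply, q.2.2.2 i hiS, ← Equiv.Perm.mul_apply, mul_inv_cancel, Equiv.Perm.one_apply]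
  have hfiber : ∀ u : {u : Equiv.Perm (Fin n) // IsoProbAux.FC u},
      Nat.card {v : Equiv.Perm (Fin n) //
        IsoProbAux.FC v ∧ ∀ i ∈ S, v i = (u : Equiv.Perm (Fin n))⁻¹ i} =
        Nat.factorial (n - 1 - m) := by
    intro u
    rw [IsoProbAux.key (Fintype.card (Fin n)) (Fin n) (u : Equiv.Perm (Fin n))⁻¹ S rfl
      (IsoProbAux.fc_inv u.2) hSuniv]
    rw [Fintype.card_fin, hScard]
    congr 1
    omega
  have hmain : Nat.card {p : Equiv.Perm (Fin n) × Equiv.Perm (Fin n) //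
        IsFullCycle p.1 ∧ IsFullCycle p.2 ∧ ∀ i : Fin n, (i : ℕ) < m → (p.1 * p.2) i = i} =
      Nat.factorial (n - 1) * Nat.factorial (n - 1 - m) := by
    rw [Nat.card_congr E, IsoProbAux.card_sigma_const _ (Nat.factorial (n - 1 - m)) hfiber,
      IsoProbAux.fc_count hn]
  refine ⟨hmain, ?_⟩
  rw [hmain]
  have harith : (n - 1).choose m * Nat.factorial m * Nat.factorial (n - 1 - m) =
      Nat.factorial (n - 1) := Nat.choose_mul_factorial_mul_factorial (by omega)
  rw [pow_two, ← harith]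
  ring
end
end

section
/- Let n ≥ 2 and 1 ≤ m ≤ n, and let α be the composition (1, 1, …, 1, n+1−m) of n consisting of m−1 parts equal to 1 followed by one part equal to n+1−m. Then the number of ordered pairs (u, v) of n-cycles on [n] such that the product u∘v is α-separated equals (n−1)!·(n−m)!. -/
open Equiv Finset

noncomputable section

/-- A permutation `σ` of `Fin n` is `α`-separated for a composition `α` with `k` parts
`α 0, …, α (k-1)`: every cycle of `σ` has all of its elements contained in a single
block `B_i`, where block `B_i` (for `i < k`) consists of the elements with (0-indexed)
values in `[α 0 + ⋯ + α (i-1), α 0 + ⋯ + α i)`. -/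
def AlphaSeparated {n : ℕ} (k : ℕ) (α : ℕ → ℕ) (σ : Equiv.Perm (Fin n)) : Prop :=
  ∀ x y : Fin n, σ.SameCycle x y →
    ∃ i < k, (∑ j ∈ Finset.range i, α j) ≤ (x : ℕ) ∧
      (x : ℕ) < ∑ j ∈ Finset.range (i + 1), α j ∧
      (∑ j ∈ Finset.range i, α j) ≤ (y : ℕ) ∧
      (y : ℕ) < ∑ j ∈ Finset.range (i + 1), α j


open Equiv Finset

namespace AlphaAux

attribute [local instance] Classical.propDecidable

variable {n : ℕ}

/-- "Full cycle" phrased as: all points are on the same cycle. -/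
def FC (σ : Equiv.Perm (Fin n)) : Prop := ∀ x y : Fin n, σ.SameCycle x y

lemma fc_no_fixed (hn : 2 ≤ n) {σ : Equiv.Perm (Fin n)} (hσ : FC σ) (x : Fin n) : σ x ≠ x := by
  intro hfix
  haveI : Nontrivial (Fin n) := Fin.nontrivial_iff_two_le.mpr hn
  obtain ⟨y, hy⟩ := exists_ne x
  obtain ⟨i, hi⟩ := hσ x y
  rw [Equiv.Perm.zpow_apply_eq_self_of_apply_eq_self hfix] at hi
  exact hy hi.symm

lemma fc_isCycle (hn : 2 ≤ n) {σ : Equiv.Perm (Fin n)} (hσ : FC σ) : σ.IsCycle := by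
  have p0 : Fin n := ⟨0, by omega⟩
  exact ⟨p0, fc_no_fixed hn hσ p0, fun y _ => hσ p0 y⟩

lemma fc_support (hn : 2 ≤ n) {σ : Equiv.Perm (Fin n)} (hσ : FC σ) : σ.support = univ :=
  Finset.eq_univ_iff_forall.mpr fun x => Equiv.Perm.mem_support.mpr (fc_no_fixed hn hσ x)

lemma fc_pow_ne (hn : 2 ≤ n) {σ : Equiv.Perm (Fin n)} (hσ : FC σ) {t : ℕ}
    (ht1 : 1 ≤ t) (htn : t < n) (a : Fin n) : (σ ^ t) a ≠ a := by
  intro h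
  have hid : σ ^ t = 1 := by
    ext x
    obtain ⟨i, hi⟩ := hσ a x
    have : (σ ^ t) ((σ ^ i) a) = (σ ^ i) ((σ ^ t) a) := by
      rw [← Equiv.Perm.mul_apply, ← Equiv.Perm.mul_apply, ← zpow_natCast, ← zpow_add, ← zpow_add,
        add_comm]
    rw [hi] at this
    simp [this, h, hi]
  have h1 : orderOf σ ∣ t := orderOf_dvd_of_pow_eq_one hid
  have h2 : orderOf σ = n := by
    rw [(fc_isCycle hn hσ).orderOf, fc_support hn hσ, Finset.card_univ, Fintype.card_fin]
  have := Nat.le_of_dvd ht1 h1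
  omega

lemma fc_iff (hn : 2 ≤ n) (σ : Equiv.Perm (Fin n)) : IsFullCycle σ ↔ FC σ := by
  constructor
  · intro h
    unfold IsFullCycle cycleCount at h
    rcases Nat.eq_zero_or_pos (Multiset.card σ.cycleType) with h0 | hpos
    · exfalso
      have : σ.cycleType = 0 := by
        simpa using h0
      have hσ1 : σ = 1 := Equiv.Perm.cycleType_eq_zero.mp this
      subst hσ1
      have : (univ.filter fun x : Fin n => (1 : Equiv.Perm (Fin n)) x = x) = univ := by
        simp
      rw [this] at h
      simp [Finset.card_univ] at h
      omega
    · have hc1 : Multiset.card σ.cycleType = 1 := by omega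
      have hcyc : σ.IsCycle := Equiv.Perm.card_cycleType_eq_one.mp hc1
      have hfix : (univ.filter fun x => σ x = x).card = 0 := by omega
      have hnofix : ∀ x : Fin n, σ x ≠ x := by
        intro x hx
        have : x ∈ univ.filter fun x => σ x = x := by simp [hx]
        rw [Finset.card_eq_zero] at hfix
        simp [hfix] at this
      exact fun x y => hcyc.sameCycle (hnofix x) (hnofix y)
  · intro h
    unfold IsFullCycle cycleCount
    have h1 : Multiset.card σ.cycleType = 1 :=
      Equiv.Perm.card_cycleType_eq_one.mpr (fc_isCycle hn h)
    have h2 : (univ.filter fun x => σ x = x).card = 0 := by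
      rw [Finset.card_eq_zero]
      ext x
      simp [fc_no_fixed hn h x]
    omega

end AlphaAux
namespace AlphaAux

variable {n : ℕ}

lemma sc_of_apply_eq {τ : Equiv.Perm (Fin n)} {x y : Fin n} (h : τ x = y) :
    τ.SameCycle x y := ⟨1, by simpa using h⟩

section Merge

variable {τ : Equiv.Perm (Fin n)} {c e : Fin n}

private lemma ap_ne (x : Fin n) (hxc : x ≠ c) (hxe : x ≠ e) :
    (Equiv.swap (τ c) (τ e) * τ) x = τ x := by
  rw [Equiv.Perm.mul_apply,
    Equiv.swap_apply_of_ne_of_ne (τ.injective.ne hxc) (τ.injective.ne hxe)]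

private lemma ap_c : (Equiv.swap (τ c) (τ e) * τ) c = τ e := by
  rw [Equiv.Perm.mul_apply, Equiv.swap_apply_left]

private lemma ap_e : (Equiv.swap (τ c) (τ e) * τ) e = τ c := by
  rw [Equiv.Perm.mul_apply, Equiv.swap_apply_right]

/-- key: in the merged permutation, `τ e` is still on the same cycle as `e`. -/
private lemma key_cyc (hce : ¬ τ.SameCycle c e) :
    (Equiv.swap (τ c) (τ e) * τ).SameCycle (τ e) e := by
  set τ' := Equiv.swap (τ c) (τ e) * τ with hτ'
  have hsc : τ.SameCycle (τ e) e := (Equiv.Perm.sameCycle_apply_left).mpr (Equiv.Perm.SameCycle.refl τ e)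
  obtain ⟨k0, hk0lt, hk0⟩ := hsc.exists_pow_eq'
  have hex : ∃ k : ℕ, (τ ^ k) (τ e) = e := ⟨k0, hk0⟩
  set k := Nat.find hex with hk
  have hkspec : (τ ^ k) (τ e) = e := Nat.find_spec hex
  have hmin : ∀ i, i < k → (τ ^ i) (τ e) ≠ e := fun i hi => Nat.find_min hex hi
  have hiter : ∀ i, i ≤ k → (τ' ^ i) (τ e) = (τ ^ i) (τ e) := by
    intro i hi
    induction i with
    | zero => simp
    | succ j ih =>
      have hj : j ≤ k := by omega
      have hlt : j < k := by omega
      set x := (τ ^ j) (τ e) with hx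
      have hxe : x ≠ e := hmin j hlt
      have hxc : x ≠ c := by
        intro hxc
        apply hce
        have hsc2 : τ.SameCycle e x := ⟨(j + 1 : ℕ), by
          rw [zpow_natCast, pow_succ, Equiv.Perm.mul_apply, ← hx]⟩
        exact (hxc ▸ hsc2).symm
      calc (τ' ^ (j+1)) (τ e) = τ' ((τ' ^ j) (τ e)) := by
            rw [pow_succ', Equiv.Perm.mul_apply]
        _ = τ' x := by rw [ih hj]
        _ = τ x := ap_ne x hxc hxe
        _ = (τ ^ (j+1)) (τ e) := by rw [pow_succ', Equiv.Perm.mul_apply, hx]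
  exact ⟨(k : ℤ), by rw [zpow_natCast, hiter k le_rfl, hkspec]⟩

private lemma step_all (hce : ¬ τ.SameCycle c e) (x : Fin n) :
    (Equiv.swap (τ c) (τ e) * τ).SameCycle x (τ x) := by
  by_cases hxc : x = c
  · have h1 : (Equiv.swap (τ c) (τ e) * τ).SameCycle x (τ e) :=
      sc_of_apply_eq (by rw [hxc, ap_c])
    have h2 := key_cyc hce
    have h3 : (Equiv.swap (τ c) (τ e) * τ).SameCycle e (τ x) :=
      sc_of_apply_eq (by rw [ap_e, hxc])
    exact (h1.trans h2).trans h3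
  · by_cases hxe : x = e
    · have hce' : ¬ τ.SameCycle e c := fun h => hce h.symm
      have h1 : (Equiv.swap (τ c) (τ e) * τ).SameCycle x (τ c) :=
        sc_of_apply_eq (by rw [hxe, ap_e])
      have h2 : (Equiv.swap (τ e) (τ c) * τ).SameCycle (τ c) c := key_cyc hce'
      have h2' : (Equiv.swap (τ c) (τ e) * τ).SameCycle (τ c) c := by
        rwa [Equiv.swap_comm (τ e) (τ c)] at h2
      have h3 : (Equiv.swap (τ c) (τ e) * τ).SameCycle c (τ x) :=
        sc_of_apply_eq (by rw [ap_c, hxe])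
      exact (h1.trans h2').trans h3
    · exact sc_of_apply_eq (ap_ne x hxc hxe)

/-- merging: any old-same-cycle pair is new-same-cycle. -/
lemma merge_mono (hce : ¬ τ.SameCycle c e) {x y : Fin n} (h : τ.SameCycle x y) :
    (Equiv.swap (τ c) (τ e) * τ).SameCycle x y := by
  obtain ⟨i, hilt, rfl⟩ := h.exists_pow_eq'
  clear hilt
  induction i with
  | zero => exact Equiv.Perm.SameCycle.refl _ _
  | succ j ih =>
    have hstep : (τ ^ (j+1)) x = τ ((τ ^ j) x) := by
      rw [pow_succ', Equiv.Perm.mul_apply]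
    rw [hstep]
    exact (ih ⟨(j:ℤ), by rw [zpow_natCast]⟩).trans (step_all hce ((τ ^ j) x))

lemma merge_ce (hce : ¬ τ.SameCycle c e) :
    (Equiv.swap (τ c) (τ e) * τ).SameCycle c e := by
  exact (sc_of_apply_eq ap_c).trans (key_cyc hce)

end Merge

end AlphaAux
namespace AlphaAux

attribute [local instance] Classical.propDecidable

variable {n : ℕ}

private lemma W_aux (hn : 2 ≤ n) (p₀ : Fin n) :
    ∀ (k : ℕ) (τ : Equiv.Perm (Fin n)) (B : Finset (Fin n)),
    (∀ x, ∃ y, y ∉ B ∧ τ.SameCycle x y) →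
    n ≤ k + (Finset.univ.filter (fun z => τ.SameCycle p₀ z)).card →
    ∃ v : Equiv.Perm (Fin n), FC v ∧ ∀ x ∈ B, v x = τ x := by
  intro k
  induction k with
  | zero =>
    intro τ B hB hcard
    have horb : (Finset.univ.filter (fun z => τ.SameCycle p₀ z)) = Finset.univ := by
      apply Finset.eq_univ_of_card
      have := Finset.card_le_univ (Finset.univ.filter (fun z => τ.SameCycle p₀ z))
      simp only [Finset.card_univ, Fintype.card_fin] at this ⊢
      omega
    refine ⟨τ, fun x y => ?_, fun x _ => rfl⟩
    have hx : τ.SameCycle p₀ x := by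
      have := Finset.mem_filter.mp (horb ▸ Finset.mem_univ x)
      exact this.2
    have hy : τ.SameCycle p₀ y := by
      have := Finset.mem_filter.mp (horb ▸ Finset.mem_univ y)
      exact this.2
    exact hx.symm.trans hy
  | succ k ih =>
    intro τ B hB hcard
    by_cases hfull : ∀ z, τ.SameCycle p₀ z
    · exact ⟨τ, fun x y => (hfull x).symm.trans (hfull y), fun x _ => rfl⟩
    · push_neg at hfull
      obtain ⟨y₀, hy₀⟩ := hfull
      obtain ⟨c, hcB, hc⟩ := hB p₀
      obtain ⟨e, heB, he⟩ := hB y₀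
      have hce : ¬ τ.SameCycle c e := fun h => hy₀ ((hc.trans h).trans he.symm)
      set τ' := Equiv.swap (τ c) (τ e) * τ with hτ'
      have hagree : ∀ x ∈ B, τ' x = τ x := by
        intro x hx
        exact ap_ne x (fun h => hcB (h ▸ hx)) (fun h => heB (h ▸ hx))
      have hB' : ∀ x, ∃ y, y ∉ B ∧ τ'.SameCycle x y := by
        intro x
        obtain ⟨y, hyB, hy⟩ := hB x
        exact ⟨y, hyB, merge_mono hce hy⟩
      have hsub : (Finset.univ.filter (fun z => τ.SameCycle p₀ z)) ⊂
          (Finset.univ.filter (fun z => τ'.SameCycle p₀ z)) := by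
        constructor
        · intro z hz
          simp only [Finset.mem_filter, Finset.mem_univ, true_and] at hz ⊢
          exact merge_mono hce hz
        · intro hcontra
          have he' : e ∈ Finset.univ.filter (fun z => τ'.SameCycle p₀ z) := by
            simp only [Finset.mem_filter, Finset.mem_univ, true_and]
            exact (merge_mono hce hc).trans (merge_ce hce)
          have := hcontra he'
          simp only [Finset.mem_filter, Finset.mem_univ, true_and] at this
          exact hy₀ (this.trans he.symm)
      have hlt := Finset.card_lt_card hsub
      obtain ⟨v, hv1, hv2⟩ := ih τ' B hB' (by omega)
      exact ⟨v, hv1, fun x hx => (hv2 x hx).trans (hagree x hx)⟩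

lemma exists_fc_extend (hn : 2 ≤ n) (τ : Equiv.Perm (Fin n)) (B : Finset (Fin n))
    (hB : ∀ x, ∃ y, y ∉ B ∧ τ.SameCycle x y) :
    ∃ v : Equiv.Perm (Fin n), FC v ∧ ∀ x ∈ B, v x = τ x :=
  W_aux hn ⟨0, by omega⟩ n τ B hB (by omega)

end AlphaAux
namespace AlphaAux

attribute [local instance] Classical.propDecidable

variable {n : ℕ}

private lemma iter_inj_aux (hn : 2 ≤ n) {ρ : Equiv.Perm (Fin n)} (hρfc : FC ρ) (a : Fin n)
    {i j : ℕ} (hj : j < n) (hlt : i < j) (hij : (ρ ^ (i + 1)) a = (ρ ^ (j + 1)) a) : False := by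
  have h1 : (ρ ^ (j + 1)) a = (ρ ^ (j - i)) ((ρ ^ (i + 1)) a) := by
    rw [← Equiv.Perm.mul_apply, ← pow_add]
    congr 2
    omega
  have h2 : (ρ ^ (j - i)) ((ρ ^ (i + 1)) a) = (ρ ^ (i + 1)) ((ρ ^ (j - i)) a) := by
    rw [← Equiv.Perm.mul_apply, ← Equiv.Perm.mul_apply, pow_mul_comm]
  rw [← hij, h2] at h1
  have h3 : (ρ ^ (j - i)) a = a := ((ρ ^ (i + 1)).injective h1).symm
  exact fc_pow_ne hn hρfc (by omega) (by omega) a h3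

private lemma iter_inj (hn : 2 ≤ n) {ρ : Equiv.Perm (Fin n)} (hρfc : FC ρ) (a : Fin n)
    {i j : ℕ} (hi : i < n) (hj : j < n) (hij : (ρ ^ (i + 1)) a = (ρ ^ (j + 1)) a) : i = j := by
  rcases Nat.lt_trichotomy i j with h | h | h
  · exact absurd (iter_inj_aux hn hρfc a hj h hij) (by simp)
  · exact h
  · exact absurd (iter_inj_aux hn hρfc a hi h hij.symm) (by simp)

/-- The possible values of `v a` over full cycles `v` extending `σ` on `A` are exactly
the complement of `σ '' A ∪ {s}` for a single "forbidden" point `s` not in `σ '' A`. -/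
lemma fiber_values (hn : 2 ≤ n) (σ : Equiv.Perm (Fin n)) (hσ : FC σ)
    (A : Finset (Fin n)) (hA : A.card ≤ n - 2) (a : Fin n) (ha : a ∉ A) :
    ∃ s : Fin n, (∀ x ∈ A, σ x ≠ s) ∧
      ∀ b : Fin n,
        (∃ v : Equiv.Perm (Fin n), FC v ∧ (∀ x ∈ A, v x = σ x) ∧ v a = b) ↔
        (b ≠ s ∧ ∀ x ∈ A, σ x ≠ b) := by
  set ρ := σ⁻¹ with hρ
  have hρfc : FC ρ := fun x y => (Equiv.Perm.sameCycle_inv).mpr (hσ x y)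
  -- find the first backward iterate leaving A
  have hwitb : ∃ k, k < n ∧ (ρ ^ (k + 1)) a ∉ A := by
    by_contra hcon
    push_neg at hcon
    have hinj : Set.InjOn (fun k => (ρ ^ (k + 1)) a) (Finset.range n) := by
      intro i hi j hj hij
      simp only [Finset.coe_range, Set.mem_Iio] at hi hj
      exact iter_inj hn hρfc a hi hj hij
    have hcard := Finset.card_le_card_of_injOn (fun k => (ρ ^ (k + 1)) a)
      (fun k hk => hcon k (Finset.mem_range.mp hk)) hinj
    simp only [Finset.card_range] at hcard
    omega
  have hwit : ∃ k : ℕ, (ρ ^ (k + 1)) a ∉ A := ⟨hwitb.choose, hwitb.choose_spec.2⟩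
  set t := Nat.find hwit with ht
  have htspec : (ρ ^ (t + 1)) a ∉ A := Nat.find_spec hwit
  have htmin : ∀ k, k < t → (ρ ^ (k + 1)) a ∈ A := by
    intro k hk
    have := Nat.find_min hwit hk
    simpa using this
  have htlt : t < n := by
    have := Nat.find_min' hwit hwitb.choose_spec.2
    have := hwitb.choose_spec.1
    omega
  have htn : t ≤ n - 2 := by
    have hinj : Set.InjOn (fun k => (ρ ^ (k + 1)) a) (Finset.range t) := by
      intro i hi j hj hij
      simp only [Finset.coe_range, Set.mem_Iio] at hi hj
      exact iter_inj hn hρfc a (by omega) (by omega) hij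
    have hcard := Finset.card_le_card_of_injOn (fun k => (ρ ^ (k + 1)) a)
      (fun k hk => htmin k (Finset.mem_range.mp hk)) hinj
    simp only [Finset.card_range] at hcard
    omega
  set s := (ρ ^ t) a with hs
  have hsA : ∀ x ∈ A, σ x ≠ s := by
    intro x hx hxs
    have hxe : x = (ρ ^ (t + 1)) a := by
      have h2 := congrArg (⇑σ⁻¹) hxs
      rw [← Equiv.Perm.mul_apply, inv_mul_cancel, Equiv.Perm.one_apply] at h2
      rw [h2, hs, ← Equiv.Perm.mul_apply, hρ, ← pow_succ']
    rw [hxe] at hx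
    exact htspec hx
  refine ⟨s, hsA, fun b => ⟨?_, ?_⟩⟩
  · -- forward: necessity
    rintro ⟨v, hv, hvA, rfl⟩
    constructor
    · -- v a ≠ s
      intro hvs
      have hchain : ∀ k, k ≤ t → (v ^ (k + 1)) a = (ρ ^ (t - k)) a := by
        intro k hk
        induction k with
        | zero => simpa using hvs
        | succ j ihj =>
          have hj : j ≤ t := by omega
          have hmem : (ρ ^ (t - j)) a ∈ A := by
            have he : t - j = (t - j - 1) + 1 := by omega
            rw [he]
            exact htmin _ (by omega)
          calc (v ^ (j + 2)) a = v ((v ^ (j+1)) a) := by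
                rw [pow_succ', Equiv.Perm.mul_apply]
            _ = v ((ρ ^ (t - j)) a) := by rw [ihj hj]
            _ = σ ((ρ ^ (t - j)) a) := hvA _ hmem
            _ = (ρ ^ (t - (j+1))) a := by
                rw [hρ, ← Equiv.Perm.mul_apply]
                have he : σ * σ⁻¹ ^ (t - j) = σ⁻¹ ^ (t - (j + 1)) := by
                  have h1 : t - j = (t - (j+1)) + 1 := by omega
                  rw [h1, pow_succ']
                  group
                rw [he]
      have hfix := hchain t le_rfl
      simp only [Nat.sub_self, pow_zero, Equiv.Perm.one_apply] at hfix
      exact fc_pow_ne hn hv (by omega) (by omega) a hfix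
    · -- injectivity
      intro x hx hxb
      have h2 := hvA x hx
      rw [hxb] at h2
      exact ha ((v.injective h2) ▸ hx)
  · -- backward: existence
    rintro ⟨hbs, hbA⟩
    by_cases hba : b = σ a
    · exact ⟨σ, hσ, fun x _ => rfl, hba.symm⟩
    · set τ := Equiv.swap (σ a) b * σ with hτ
      have hτA : ∀ x ∈ A, τ x = σ x := by
        intro x hx
        rw [hτ, Equiv.Perm.mul_apply, Equiv.swap_apply_of_ne_of_ne]
        · exact σ.injective.ne (fun h => ha (h ▸ hx))
        · exact hbA x hx
      have hτa : τ a = b := by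
        rw [hτ, Equiv.Perm.mul_apply, Equiv.swap_apply_left]
      have hBex : ∀ x, ∃ y, y ∉ insert a A ∧ τ.SameCycle x y := by
        intro x
        by_contra hcon
        push_neg at hcon
        have hO : ∀ y, τ.SameCycle x y → y ∈ insert a A := by
          intro y hy
          by_contra hyB
          exact hcon y hyB hy
        by_cases hax : τ.SameCycle x a
        · -- the cycle of x contains a; walk backwards along ρ to reach s, then past it
          have hchain : ∀ k, k ≤ t → τ.SameCycle x ((ρ ^ k) a) := by
            intro k hk
            induction k with
            | zero => simpa using hax
            | succ j ihj =>
              have hj : j ≤ t := by omega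
              have hmem : (ρ ^ (j + 1)) a ∈ A := htmin j (by omega)
              have happ : τ ((ρ ^ (j + 1)) a) = (ρ ^ j) a := by
                rw [hτA _ hmem, hρ, ← Equiv.Perm.mul_apply, pow_succ']
                simp [← Equiv.Perm.mul_apply, ← mul_assoc]
              exact (ihj hj).trans (sc_of_apply_eq happ).symm
          have hxs : τ.SameCycle x s := hchain t le_rfl
          have hw : τ.SameCycle x (τ⁻¹ s) := hxs.trans ⟨-1, by simp⟩
          have hwmem := hO _ hw
          rcases Finset.mem_insert.mp hwmem with hwa | hwA
          · apply hbs
            have h2 : τ (τ⁻¹ s) = s := by simp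
            rw [hwa, hτa] at h2
            exact h2
          · exact (hsA _ hwA) (by rw [← hτA _ hwA]; simp)
        · -- the cycle of x avoids a, hence stays in A : contradiction with σ full
          have hclaim : ∀ k : ℕ, (σ ^ k) x ∈ A ∧ τ.SameCycle x ((σ ^ k) x) := by
            intro k
            induction k with
            | zero =>
              refine ⟨?_, Equiv.Perm.SameCycle.refl _ _⟩
              have hx := hO x (Equiv.Perm.SameCycle.refl _ _)
              rcases Finset.mem_insert.mp hx with h1 | h2
              · exact absurd (h1 ▸ Equiv.Perm.SameCycle.refl τ x) hax
              · exact h2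
            | succ j ihj =>
              obtain ⟨hyA, hxy⟩ := ihj
              have hstep : (σ ^ (j + 1)) x = τ ((σ ^ j) x) := by
                rw [hτA _ hyA, pow_succ', Equiv.Perm.mul_apply]
              have hsc : τ.SameCycle x ((σ ^ (j + 1)) x) := by
                rw [hstep]
                exact hxy.trans (sc_of_apply_eq rfl)
              refine ⟨?_, hsc⟩
              have hmem := hO _ hsc
              rcases Finset.mem_insert.mp hmem with h1 | h2
              · exact absurd (h1 ▸ hsc) hax
              · exact h2
          have hz : ∃ z, z ∉ A := by
            by_contra hcon2
            push_neg at hcon2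
            have he : A = Finset.univ := Finset.eq_univ_iff_forall.mpr hcon2
            rw [he, Finset.card_univ, Fintype.card_fin] at hA
            omega
          obtain ⟨z, hz⟩ := hz
          obtain ⟨i, _, hi⟩ := (hσ x z).exists_pow_eq'
          exact hz (hi ▸ (hclaim i).1)
      obtain ⟨v, hv, hvB⟩ := exists_fc_extend hn τ (insert a A) hBex
      refine ⟨v, hv, fun x hx => ?_, ?_⟩
      · rw [hvB x (Finset.mem_insert_of_mem hx), hτA x hx]
      · rw [hvB a (Finset.mem_insert_self a A), hτa]

end AlphaAux
namespace AlphaAux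

attribute [local instance] Classical.propDecidable

variable {n : ℕ}

lemma count_ext (hn : 2 ≤ n) :
    ∀ (d : ℕ) (σ : Equiv.Perm (Fin n)), FC σ → ∀ A : Finset (Fin n), A.card + d = n - 1 →
    (Finset.univ.filter
      (fun v : Equiv.Perm (Fin n) => FC v ∧ ∀ x ∈ A, v x = σ x)).card = Nat.factorial d := by
  intro d
  induction d with
  | zero =>
    intro σ hσ A hA
    rw [Nat.add_zero] at hA
    -- the filter is {σ}
    have hfil : (Finset.univ.filter
        (fun v : Equiv.Perm (Fin n) => FC v ∧ ∀ x ∈ A, v x = σ x)) = {σ} := by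
      ext v
      simp only [Finset.mem_filter, Finset.mem_univ, true_and, Finset.mem_singleton]
      constructor
      · rintro ⟨hv, hvA⟩
        -- v agrees with σ on all but one point
        have hAc : Aᶜ.card = 1 := by
          rw [Finset.card_compl, Fintype.card_fin, hA]
          omega
        obtain ⟨a, hac⟩ := Finset.card_eq_one.mp hAc
        have hmem : ∀ x : Fin n, x ≠ a → x ∈ A := by
          intro x hx
          by_contra hxA
          have : x ∈ Aᶜ := Finset.mem_compl.mpr hxA
          rw [hac, Finset.mem_singleton] at this
          exact hx this
        have hva : v a = σ a := by
          obtain ⟨y, hy⟩ : ∃ y, v y = σ a := ⟨v⁻¹ (σ a), by simp⟩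
          by_cases hya : y = a
          · exact hya ▸ hy
          · have := hvA y (hmem y hya)
            rw [this] at hy
            have : y = a := σ.injective hy
            exact absurd this hya
        ext x
        by_cases hxa : x = a
        · rw [hxa]; exact congrArg Fin.val hva
        · exact congrArg Fin.val (hvA x (hmem x hxa))
      · rintro rfl
        exact ⟨hσ, fun x _ => rfl⟩
    rw [hfil, Finset.card_singleton, Nat.factorial_zero]
  | succ d ih =>
    intro σ hσ A hA
    have hAcard : A.card = n - d - 2 := by omega
    have hAle : A.card ≤ n - 2 := by omega
    have hane : A ≠ Finset.univ := by
      intro h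
      rw [h, Finset.card_univ, Fintype.card_fin] at hA
      omega
    obtain ⟨a, ha⟩ : ∃ a, a ∉ A := by
      by_contra hcon
      push_neg at hcon
      exact hane (Finset.eq_univ_iff_forall.mpr hcon)
    obtain ⟨s, hsA, hiff⟩ := fiber_values hn σ hσ A hAle a ha
    set G : Finset (Fin n) :=
      Finset.univ.filter (fun b => b ≠ s ∧ ∀ x ∈ A, σ x ≠ b) with hG
    have hGcard : G.card = d + 1 := by
      have hGc : Gᶜ = insert s (A.image σ) := by
        ext b
        simp only [hG, Finset.mem_compl, Finset.mem_filter, Finset.mem_univ, true_and,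
          Finset.mem_insert, Finset.mem_image, not_and, not_forall, not_not]
        constructor
        · intro h
          by_cases hbs : b = s
          · exact Or.inl hbs
          · obtain ⟨x, hx, hxb⟩ := h hbs
            exact Or.inr ⟨x, hx, hxb⟩
        · rintro (rfl | ⟨x, hx, rfl⟩)
          · intro h; exact absurd rfl h
          · intro _; exact ⟨x, hx, rfl⟩
      have hsnotin : s ∉ A.image σ := by
        simp only [Finset.mem_image]
        rintro ⟨x, hx, hxs⟩
        exact hsA x hx hxs
      have himg : (A.image σ).card = A.card := Finset.card_image_of_injective A σ.injective
      have h1 : Gᶜ.card = A.card + 1 := by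
        rw [hGc, Finset.card_insert_of_notMem hsnotin, himg]
      have h2 : Gᶜ.card = n - G.card := by
        rw [Finset.card_compl, Fintype.card_fin]
      have h3 : G.card ≤ n := by
        have := Finset.card_le_univ G
        simpa [Finset.card_univ] using this
      omega
    -- fiberwise count over v a
    rw [Finset.card_eq_sum_card_fiberwise (f := fun v : Equiv.Perm (Fin n) => v a) (t := G)
      (fun v hv => by
        simp only [Finset.mem_coe, Finset.mem_filter, Finset.mem_univ, true_and] at hv
        have := (hiff (v a)).mp ⟨v, hv.1, hv.2, rfl⟩
        simp only [hG, Finset.mem_coe, Finset.mem_filter, Finset.mem_univ, true_and]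
        exact this)]
    have hfib : ∀ b ∈ G,
        ((Finset.univ.filter (fun v : Equiv.Perm (Fin n) => FC v ∧ ∀ x ∈ A, v x = σ x)).filter
          (fun v => v a = b)).card = Nat.factorial d := by
      intro b hb
      simp only [hG, Finset.mem_filter, Finset.mem_univ, true_and] at hb
      obtain ⟨w, hw, hwA, hwa⟩ := (hiff b).mpr hb
      have hset : ((Finset.univ.filter
          (fun v : Equiv.Perm (Fin n) => FC v ∧ ∀ x ∈ A, v x = σ x)).filter
            (fun v => v a = b)) =
          Finset.univ.filter
            (fun v : Equiv.Perm (Fin n) => FC v ∧ ∀ x ∈ insert a A, v x = w x) := by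
        ext v
        simp only [Finset.filter_filter, Finset.mem_filter, Finset.mem_univ, true_and]
        constructor
        · rintro ⟨⟨hv, hvA⟩, hva⟩
          refine ⟨hv, fun x hx => ?_⟩
          rcases Finset.mem_insert.mp hx with rfl | hxA
          · rw [hva, hwa]
          · rw [hvA x hxA, hwA x hxA]
        · rintro ⟨hv, hvins⟩
          refine ⟨⟨hv, fun x hx => ?_⟩, ?_⟩
          · rw [hvins x (Finset.mem_insert_of_mem hx), hwA x hx]
          · rw [hvins a (Finset.mem_insert_self a A), hwa]
      rw [hset]
      exact ih w hw (insert a A) (by rw [Finset.card_insert_of_notMem ha]; omega)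
    rw [Finset.sum_congr rfl hfib, Finset.sum_const, hGcard, smul_eq_mul]
    rw [Nat.factorial_succ]

end AlphaAux
namespace AlphaAux

attribute [local instance] Classical.propDecidable

variable {n : ℕ}

lemma exists_fc (hn : 2 ≤ n) : ∃ w : Equiv.Perm (Fin n), FC w := by
  obtain ⟨k, rfl⟩ : ∃ k, n = k + 2 := ⟨n - 2, by omega⟩
  refine ⟨finRotate (k + 2), fun x y => ?_⟩
  have hx : finRotate (k + 2) x ≠ x := by
    have : x ∈ (finRotate (k + 2)).support := by
      rw [support_finRotate]; exact Finset.mem_univ x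
    exact Equiv.Perm.mem_support.mp this
  have hy : finRotate (k + 2) y ≠ y := by
    have : y ∈ (finRotate (k + 2)).support := by
      rw [support_finRotate]; exact Finset.mem_univ y
    exact Equiv.Perm.mem_support.mp this
  exact isCycle_finRotate.sameCycle hx hy

lemma fc_count (hn : 2 ≤ n) :
    (Finset.univ.filter (fun v : Equiv.Perm (Fin n) => FC v)).card = Nat.factorial (n - 1) := by
  obtain ⟨w, hw⟩ := exists_fc hn
  have h := count_ext hn (n - 1) w hw ∅ (by simp)
  rw [← h]
  apply Finset.card_bij (fun v _ => v)
  · intro v hv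
    simp only [Finset.mem_filter, Finset.mem_univ, true_and] at hv ⊢
    exact ⟨hv, fun x hx => absurd hx (Finset.notMem_empty x)⟩
  · intro v₁ h₁ v₂ h₂ h
    exact h
  · intro v hv
    simp only [Finset.mem_filter, Finset.mem_univ, true_and] at hv
    exact ⟨v, by simp [hv.1], rfl⟩

lemma card_val_lt (k : ℕ) (hk : k ≤ n) :
    (Finset.univ.filter (fun x : Fin n => (x : ℕ) < k)).card = k := by
  have h1 : (Finset.univ.filter (fun x : Fin n => (x : ℕ) < k)).image Fin.val
      = Finset.range k := by
    ext j
    simp only [Finset.mem_image, Finset.mem_filter, Finset.mem_univ, true_and,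
      Finset.mem_range]
    constructor
    · rintro ⟨x, hx, rfl⟩; exact hx
    · intro hj
      refine ⟨⟨j, by omega⟩, hj, rfl⟩
  have h2 := Finset.card_image_of_injective
    (Finset.univ.filter (fun x : Fin n => (x : ℕ) < k)) (Fin.val_injective)
  rw [h1] at h2
  rw [← h2, Finset.card_range]

lemma alphasep_iff {m : ℕ} (hn : 2 ≤ n) (hm1 : 1 ≤ m) (hm : m ≤ n) (σ : Equiv.Perm (Fin n)) :
    AlphaSeparated m (fun i => if i < m - 1 then 1 else n + 1 - m) σ ↔
      ∀ x : Fin n, (x : ℕ) < m - 1 → σ x = x := by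
  set α : ℕ → ℕ := fun i => if i < m - 1 then 1 else n + 1 - m with hα
  have hsum1 : ∀ i, i ≤ m - 1 → (∑ j ∈ Finset.range i, α j) = i := by
    intro i hi
    have : ∀ j ∈ Finset.range i, α j = 1 := by
      intro j hj
      rw [hα]
      simp only []
      rw [if_pos]
      have := Finset.mem_range.mp hj
      omega
    rw [Finset.sum_congr rfl this, Finset.sum_const, Finset.card_range, smul_eq_mul, mul_one]
  have hsumm : (∑ j ∈ Finset.range m, α j) = n := by
    have hm' : m = (m - 1) + 1 := by omega
    rw [hm', Finset.sum_range_succ, hsum1 (m - 1) le_rfl]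
    have : α (m - 1) = n + 1 - m := by
      rw [hα]; simp only []; rw [if_neg (by omega)]
    rw [this]
    omega
  constructor
  · intro hsep x hx
    obtain ⟨i, him, h1, h2, h3, h4⟩ := hsep x (σ x) (sc_of_apply_eq rfl)
    have hilt : i < m - 1 := by
      by_contra hcon
      have he : i = m - 1 := by omega
      rw [he, hsum1 (m - 1) le_rfl] at h1
      omega
    rw [hsum1 i (by omega)] at h1 h3
    rw [hsum1 (i + 1) (by omega)] at h2 h4
    apply Fin.ext
    omega
  · intro hfix x y hxy
    by_cases hx : (x : ℕ) < m - 1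
    · have hyx : y = x := by
        obtain ⟨i, hi⟩ := hxy
        rw [Equiv.Perm.zpow_apply_eq_self_of_apply_eq_self (hfix x hx)] at hi
        exact hi.symm
      refine ⟨(x : ℕ), by omega, ?_, ?_, ?_, ?_⟩
      · rw [hsum1 _ (by omega)]
      · rw [hsum1 _ (by omega)]; omega
      · rw [hsum1 _ (by omega), hyx]
      · rw [hsum1 _ (by omega), hyx]; omega
    · have hy : ¬ (y : ℕ) < m - 1 := by
        intro hy
        apply hx
        have hxy' : x = y := by
          obtain ⟨i, hi⟩ := hxy.symm
          rw [Equiv.Perm.zpow_apply_eq_self_of_apply_eq_self (hfix y hy)] at hi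
          exact hi.symm
        rw [hxy']
        exact hy
      refine ⟨m - 1, by omega, ?_, ?_, ?_, ?_⟩
      · rw [hsum1 _ le_rfl]; omega
      · have h1 : m - 1 + 1 = m := by omega
        rw [h1, hsumm]
        exact x.isLt
      · rw [hsum1 _ le_rfl]; omega
      · have h1 : m - 1 + 1 = m := by omega
        rw [h1, hsumm]
        exact y.isLt

end AlphaAux

/-- For `n ≥ 2` and `1 ≤ m ≤ n`, let `α = (1, 1, …, 1, n+1-m)` be the
composition of `n` with `m-1` parts equal to `1` followed by one part `n+1-m` (so `m`
parts in total). Then the number of ordered pairs `(u, v)` of `n`-cycles on `[n]` whose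
product `u ∘ v` is `α`-separated equals `(n-1)! (n-m)!`. -/
theorem alpha_separated_special_count (n m : ℕ) (hn : 2 ≤ n) (hm1 : 1 ≤ m) (hm : m ≤ n) :
    Nat.card {p : Equiv.Perm (Fin n) × Equiv.Perm (Fin n) //
        IsFullCycle p.1 ∧ IsFullCycle p.2 ∧
        AlphaSeparated m (fun i => if i < m - 1 then 1 else n + 1 - m) (p.1 * p.2)} =
    Nat.factorial (n - 1) * Nat.factorial (n - m) := by
  classical
  rw [Nat.card_eq_fintype_card, Fintype.card_subtype]
  set A₀ : Finset (Fin n) := Finset.univ.filter (fun x : Fin n => (x : ℕ) < m - 1) with hA₀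
  have hA₀card : A₀.card = m - 1 := AlphaAux.card_val_lt (m - 1) (by omega)
  have hfeq : (Finset.univ.filter (fun p : Equiv.Perm (Fin n) × Equiv.Perm (Fin n) =>
      IsFullCycle p.1 ∧ IsFullCycle p.2 ∧
        AlphaSeparated m (fun i => if i < m - 1 then 1 else n + 1 - m) (p.1 * p.2))) =
      (Finset.univ.filter (fun p : Equiv.Perm (Fin n) × Equiv.Perm (Fin n) =>
        AlphaAux.FC p.1 ∧ AlphaAux.FC p.2 ∧ ∀ x ∈ A₀, p.2 x = p.1⁻¹ x)) := by
    apply Finset.filter_congr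
    intro p _
    rw [AlphaAux.fc_iff hn, AlphaAux.fc_iff hn, AlphaAux.alphasep_iff hn hm1 hm]
    constructor
    · rintro ⟨h1, h2, h3⟩
      refine ⟨h1, h2, fun x hx => ?_⟩
      rw [hA₀] at hx
      simp only [Finset.mem_filter, Finset.mem_univ, true_and] at hx
      have := h3 x hx
      rw [Equiv.Perm.mul_apply] at this
      exact (Equiv.Perm.eq_inv_iff_eq).mpr this
    · rintro ⟨h1, h2, h3⟩
      refine ⟨h1, h2, fun x hx => ?_⟩
      have hx' : x ∈ A₀ := by
        rw [hA₀]; simp only [Finset.mem_filter, Finset.mem_univ, true_and]; exact hx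
      rw [Equiv.Perm.mul_apply, h3 x hx', ← Equiv.Perm.mul_apply, mul_inv_cancel, Equiv.Perm.one_apply]
  rw [hfeq]
  rw [Finset.card_eq_sum_card_fiberwise (f := fun p : Equiv.Perm (Fin n) × Equiv.Perm (Fin n) => p.1)
    (t := Finset.univ.filter (fun u : Equiv.Perm (Fin n) => AlphaAux.FC u))
    (fun p hp => by
      simp only [Finset.mem_coe, Finset.mem_filter, Finset.mem_univ, true_and] at hp ⊢
      exact hp.1)]
  have hfib : ∀ u ∈ Finset.univ.filter (fun u : Equiv.Perm (Fin n) => AlphaAux.FC u),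
      ((Finset.univ.filter (fun p : Equiv.Perm (Fin n) × Equiv.Perm (Fin n) =>
        AlphaAux.FC p.1 ∧ AlphaAux.FC p.2 ∧ ∀ x ∈ A₀, p.2 x = p.1⁻¹ x)).filter
          (fun p => p.1 = u)).card = Nat.factorial (n - m) := by
    intro u hu
    simp only [Finset.mem_filter, Finset.mem_univ, true_and] at hu
    have hucard : (Finset.univ.filter
        (fun v : Equiv.Perm (Fin n) => AlphaAux.FC v ∧ ∀ x ∈ A₀, v x = u⁻¹ x)).card
        = Nat.factorial (n - m) := by
      have huinv : AlphaAux.FC u⁻¹ := fun x y => (Equiv.Perm.sameCycle_inv).mpr (hu x y)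
      have := AlphaAux.count_ext hn (n - m) u⁻¹ huinv A₀ (by omega)
      exact this
    rw [← hucard]
    apply Finset.card_bij (fun p _ => p.2)
    · intro p hp
      simp only [Finset.filter_filter, Finset.mem_filter, Finset.mem_univ, true_and] at hp ⊢
      obtain ⟨⟨h1, h2, h3⟩, h4⟩ := hp
      subst h4
      exact ⟨h2, h3⟩
    · intro p₁ h₁ p₂ h₂ h
      simp only [Finset.filter_filter, Finset.mem_filter, Finset.mem_univ, true_and] at h₁ h₂
      have : p₁.1 = p₂.1 := h₁.2.trans h₂.2.symm
      exact Prod.ext this h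
    · intro v hv
      simp only [Finset.mem_filter, Finset.mem_univ, true_and] at hv
      refine ⟨(u, v), ?_, rfl⟩
      simp only [Finset.filter_filter, Finset.mem_filter, Finset.mem_univ, true_and]
      exact ⟨⟨hu, hv.1, hv.2⟩, trivial⟩
  rw [Finset.sum_congr rfl hfib, Finset.sum_const, smul_eq_mul, AlphaAux.fc_count hn]
end
end

section
/- Let n ≥ 1, 0 ≤ m ≤ n, and k ≥ 1. Then the sum, over all ordered pairs (s, π) where s is an n-cycle on [n] and π is a permutation of [n] with exactly k cycles that separates [m], of the number of exceedances of the pair (s, π), equals (n−1)! · ( binom(n−m, 2) + m(n−m) ) · C_m(n−1, k). -/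
open Equiv Finset

noncomputable section

/-- The number of exceedances of the pair `(s, π)`, where the linear order `<_s` lists the
elements of `Fin n` in the order `0, s 0, s² 0, …, s^(n-1) 0` (`0` playing the role of the
element `1` of `[n]`): an exceedance is an `x` with `x <_s π x`, i.e. `x` occurs at an
earlier position `a` than the position `b` of `π x`. -/
def exceedCount {n : ℕ} [NeZero n] (s π : Equiv.Perm (Fin n)) : ℕ :=
  Nat.card {x : Fin n // ∃ a b : ℕ, a < b ∧ b < n ∧ (s ^ a) 0 = x ∧ (s ^ b) 0 = π x}

namespace TotalExc

open Equiv.Perm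

variable {n : ℕ}

/-- The same-cycle setoid. -/
abbrev scs (σ : Equiv.Perm (Fin n)) : Setoid (Fin n) :=
  ⟨σ.SameCycle, ⟨Equiv.Perm.SameCycle.refl σ, Equiv.Perm.SameCycle.symm, Equiv.Perm.SameCycle.trans⟩⟩

lemma quot_eq {σ : Equiv.Perm (Fin n)} {x y : Fin n} :
    (Quotient.mk (scs σ) x = Quotient.mk (scs σ) y) ↔ σ.SameCycle x y := by
  rw [Quotient.eq]; rfl

lemma cycleCount_eq_card_quot (σ : Equiv.Perm (Fin n)) :
    cycleCount σ = Nat.card (Quotient (scs σ)) := by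
  classical
  let f : Fin n → {c // c ∈ σ.cycleFactorsFinset} ⊕ {x : Fin n // σ x = x} := fun x =>
    if h : σ x = x then Sum.inr ⟨x, h⟩ else
      Sum.inl ⟨σ.cycleOf x, Equiv.Perm.cycleOf_mem_cycleFactorsFinset_iff.mpr
        (Equiv.Perm.mem_support.mpr h)⟩
  have hresp : ∀ x y : Fin n, σ.SameCycle x y → f x = f y := by
    intro x y hxy
    by_cases hx : σ x = x
    · have : x = y := hxy.eq_of_left hx
      subst this; rfl
    · have hy : ¬ σ y = y := fun hy => hx (by
        have : y = x := hxy.symm.eq_of_left hy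
        rwa [this] at hy)
      simp only [f, dif_neg hx, dif_neg hy]
      exact congrArg _ (Subtype.ext hxy.cycleOf_eq)
  let F : Quotient (scs σ) → {c // c ∈ σ.cycleFactorsFinset} ⊕ {x : Fin n // σ x = x} :=
    Quotient.lift f hresp
  have hFinj : Function.Injective F := by
    intro a b
    induction a using Quotient.ind
    induction b using Quotient.ind
    rename_i x y
    intro hxy
    have hxy' : f x = f y := hxy
    rw [quot_eq]
    by_cases hx : σ x = x <;> by_cases hy : σ y = y
    · simp only [f, dif_pos hx, dif_pos hy, Sum.inr.injEq, Subtype.mk.injEq] at hxy'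
      rw [hxy']
    · simp [f, dif_pos hx, dif_neg hy] at hxy'
    · simp [f, dif_neg hx, dif_pos hy] at hxy'
    · simp only [f, dif_neg hx, dif_neg hy, Sum.inl.injEq, Subtype.mk.injEq] at hxy'
      have hy' : y ∈ (σ.cycleOf x).support := by
        rw [hxy']
        exact Equiv.Perm.mem_support_cycleOf_iff.mpr
          ⟨Equiv.Perm.SameCycle.refl _ _, Equiv.Perm.mem_support.mpr hy⟩
      exact (Equiv.Perm.mem_support_cycleOf_iff.mp hy').1
  have hFsurj : Function.Surjective F := by
    rintro (⟨c, hc⟩ | ⟨x, hx⟩)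
    · obtain ⟨hcyc, hmem⟩ := Equiv.Perm.mem_cycleFactorsFinset_iff.mp hc
      obtain ⟨x, hx, -⟩ := hcyc
      have hxs : x ∈ c.support := Equiv.Perm.mem_support.mpr hx
      have hσx : σ x ≠ x := by rw [← hmem x hxs]; exact hx
      refine ⟨Quotient.mk _ x, ?_⟩
      show f x = _
      simp only [f, dif_neg hσx]
      exact congrArg _ (Subtype.ext (Equiv.Perm.cycle_is_cycleOf hxs hc).symm)
    · exact ⟨Quotient.mk _ x, by show f x = _; simp only [f, dif_pos hx]⟩
  have := Nat.card_congr (Equiv.ofBijective F ⟨hFinj, hFsurj⟩)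
  rw [this, Nat.card_sum, cycleCount]
  congr 1
  · rw [Nat.card_eq_fintype_card, Fintype.card_coe, Equiv.Perm.cycleType_def,
      Multiset.card_map]
    rfl
  · rw [Nat.card_eq_fintype_card, Fintype.card_subtype]

lemma cycleCount_conj (τ σ : Equiv.Perm (Fin n)) :
    cycleCount (τ * σ * τ⁻¹) = cycleCount σ := by
  rw [cycleCount_eq_card_quot, cycleCount_eq_card_quot]
  refine (Nat.card_congr ?_).symm
  refine ⟨Quotient.map τ ?_, Quotient.map τ.symm ?_, ?_, ?_⟩
  · intro a b hab
    show (τ * σ * τ⁻¹).SameCycle (τ a) (τ b)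
    rw [Equiv.Perm.sameCycle_conj]
    simpa using (show σ.SameCycle a b from hab)
  · intro a b hab
    show σ.SameCycle (τ.symm a) (τ.symm b)
    have hab' : (τ * σ * τ⁻¹).SameCycle a b := hab
    rw [Equiv.Perm.sameCycle_conj] at hab'
    simpa using hab'
  · intro a; induction a using Quotient.ind; simp [Quotient.map_mk]
  · intro a; induction a using Quotient.ind; simp [Quotient.map_mk]

lemma cycleCount_inv (σ : Equiv.Perm (Fin n)) : cycleCount σ⁻¹ = cycleCount σ := by
  rw [cycleCount_eq_card_quot, cycleCount_eq_card_quot]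
  exact Nat.card_congr (Quotient.congrRight fun x y => Equiv.Perm.sameCycle_inv)


lemma step_sameCycle (p : Fin (n + 1)) (e : Equiv.Perm (Fin n)) (x : Fin n) :
    (Equiv.Perm.decomposeFin.symm (p, e)).SameCycle x.succ (e x).succ := by
  set σ := Equiv.Perm.decomposeFin.symm (p, e) with hσ
  have hs : σ x.succ = Equiv.swap 0 p (e x).succ := Equiv.Perm.decomposeFin_symm_apply_succ e p x
  by_cases h : (e x).succ = p
  · have h1 : σ x.succ = 0 := by rw [hs, h, Equiv.swap_apply_right]
    have h2 : σ 0 = p := Equiv.Perm.decomposeFin_symm_apply_zero p e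
    have c1 : σ.SameCycle x.succ 0 := ⟨1, by simpa using h1⟩
    have c2 : σ.SameCycle 0 (e x).succ := ⟨1, by simpa using h2.trans h.symm⟩
    exact c1.trans c2
  · have h1 : σ x.succ = (e x).succ := by
      rw [hs, Equiv.swap_apply_of_ne_of_ne (Fin.succ_ne_zero _) h]
    exact ⟨1, by simpa using h1⟩

lemma sameCycle_succ_of (p : Fin (n + 1)) (e : Equiv.Perm (Fin n)) {a b : Fin n}
    (h : e.SameCycle a b) :
    (Equiv.Perm.decomposeFin.symm (p, e)).SameCycle a.succ b.succ := by
  obtain ⟨i, -, rfl⟩ := h.exists_pow_eq'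
  clear h
  induction i with
  | zero => simpa using Equiv.Perm.SameCycle.refl _ _
  | succ j ih =>
    have : (e ^ (j + 1)) a = e ((e ^ j) a) := by rw [pow_succ']; rfl
    rw [this]
    exact ih.trans (step_sameCycle p e _)

/-- Going back: mapping `Fin (n+1)` down to `Fin n`, sending `0` to `q`. -/
def phi (q : Fin n) : Fin (n + 1) → Fin n := Fin.cases q (fun x => x)

@[simp] lemma phi_zero (q : Fin n) : phi q 0 = q := rfl
@[simp] lemma phi_succ (q : Fin n) (x : Fin n) : phi q x.succ = x := rfl

lemma sameCycle_back (q : Fin n) (e : Equiv.Perm (Fin n)) (k : ℕ) (a : Fin n) :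
    e.SameCycle a (phi q (((Equiv.Perm.decomposeFin.symm (q.succ, e) : Equiv.Perm (Fin (n+1))) ^ k) a.succ)) := by
  set σ := Equiv.Perm.decomposeFin.symm (q.succ, e) with hσ
  induction k with
  | zero => simpa [phi] using Equiv.Perm.SameCycle.refl _ _
  | succ j ih =>
    have hstep : (σ ^ (j + 1)) a.succ = σ ((σ ^ j) a.succ) := by rw [pow_succ']; rfl
    rw [hstep]
    rcases Fin.eq_zero_or_eq_succ ((σ ^ j) a.succ) with h0 | ⟨x, hx⟩
    · rw [h0] at ih ⊢
      have : σ 0 = q.succ := Equiv.Perm.decomposeFin_symm_apply_zero _ e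
      rw [this, phi_succ]
      simpa using ih
    · rw [hx] at ih ⊢
      rw [phi_succ] at ih
      have hs : σ x.succ = Equiv.swap 0 q.succ (e x).succ :=
        Equiv.Perm.decomposeFin_symm_apply_succ e q.succ x
      by_cases h : (e x) = q
      · have h1 : σ x.succ = 0 := by rw [hs, h, Equiv.swap_apply_right]
        rw [h1, phi_zero, ← h]
        exact ih.trans ⟨1, by simp⟩
      · have h1 : σ x.succ = (e x).succ := by
          rw [hs, Equiv.swap_apply_of_ne_of_ne (Fin.succ_ne_zero _)
            (fun hc => h (Fin.succ_injective _ hc))]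
        rw [h1, phi_succ]
        exact ih.trans ⟨1, by simp⟩

lemma sameCycle_of_succ (q : Fin n) (e : Equiv.Perm (Fin n)) {a b : Fin n}
    (h : (Equiv.Perm.decomposeFin.symm (q.succ, e)).SameCycle a.succ b.succ) :
    e.SameCycle a b := by
  obtain ⟨i, -, hi⟩ := h.exists_pow_eq'
  have := sameCycle_back q e i a
  rw [hi, phi_succ] at this
  exact this

lemma sameCycle_zero_succ (q : Fin n) (e : Equiv.Perm (Fin n)) (b : Fin n) :
    (Equiv.Perm.decomposeFin.symm (q.succ, e)).SameCycle 0 b.succ ↔ e.SameCycle q b := by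
  constructor
  · intro h
    have h0 : (Equiv.Perm.decomposeFin.symm (q.succ, e)).SameCycle q.succ 0 :=
      (show (Equiv.Perm.decomposeFin.symm (q.succ, e)).SameCycle 0 q.succ from
        ⟨1, by simp⟩).symm
    exact sameCycle_of_succ q e (h0.trans h)
  · intro h
    have h1 : (Equiv.Perm.decomposeFin.symm (q.succ, e)).SameCycle 0 q.succ := ⟨1, by simp⟩
    exact h1.trans (sameCycle_succ_of _ e h)

lemma sameCycle_succ_iff (q : Fin n) (e : Equiv.Perm (Fin n)) (a b : Fin n) :
    (Equiv.Perm.decomposeFin.symm (q.succ, e)).SameCycle a.succ b.succ ↔ e.SameCycle a b :=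
  ⟨sameCycle_of_succ q e, sameCycle_succ_of _ e⟩

-- p = 0 case
lemma sameCycle_succ_iff_zero (e : Equiv.Perm (Fin n)) (a b : Fin n) :
    (Equiv.Perm.decomposeFin.symm ((0 : Fin (n+1)), e)).SameCycle a.succ b.succ ↔ e.SameCycle a b := by
  constructor
  · intro h
    set σ := Equiv.Perm.decomposeFin.symm ((0 : Fin (n+1)), e) with hσ
    have key : ∀ (k : ℕ) (a : Fin n), ∃ x : Fin n, (σ ^ k) a.succ = x.succ ∧ e.SameCycle a x := by
      intro k
      induction k with
      | zero => exact fun a => ⟨a, by simp, Equiv.Perm.SameCycle.refl _ _⟩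
      | succ j ih =>
        intro a
        obtain ⟨x, hx, hsc⟩ := ih a
        have hstep : (σ ^ (j + 1)) a.succ = σ ((σ ^ j) a.succ) := by rw [pow_succ']; rfl
        refine ⟨e x, ?_, hsc.trans ⟨1, by simp⟩⟩
        rw [hstep, hx]
        have : σ x.succ = Equiv.swap 0 0 (e x).succ :=
          Equiv.Perm.decomposeFin_symm_apply_succ e 0 x
        simpa using this
    obtain ⟨i, -, hi⟩ := h.exists_pow_eq'
    obtain ⟨x, hx, hsc⟩ := key i a
    rw [hi] at hx
    rw [show b = x from Fin.succ_injective _ hx]; exact hsc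
  · intro h
    exact sameCycle_succ_of _ e h

lemma sameCycle_zero_iff_zero (e : Equiv.Perm (Fin n)) (y : Fin (n+1)) :
    (Equiv.Perm.decomposeFin.symm ((0 : Fin (n+1)), e)).SameCycle 0 y ↔ y = 0 := by
  constructor
  · intro h
    exact (h.eq_of_left (by simp [Function.IsFixedPt])).symm
  · rintro rfl; exact Equiv.Perm.SameCycle.refl _ _


lemma cycleCount_insert (q : Fin n) (e : Equiv.Perm (Fin n)) :
    cycleCount (Equiv.Perm.decomposeFin.symm (q.succ, e)) = cycleCount e := by
  rw [cycleCount_eq_card_quot, cycleCount_eq_card_quot]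
  refine (Nat.card_congr ?_).symm
  set σ := Equiv.Perm.decomposeFin.symm (q.succ, e) with hσ
  refine Equiv.ofBijective
    (Quotient.map Fin.succ (fun a b hab => ?_)) ⟨?_, ?_⟩
  · exact (sameCycle_succ_iff q e a b).mpr (show e.SameCycle a b from hab)
  · intro a b
    induction a using Quotient.ind
    induction b using Quotient.ind
    rename_i x y
    intro hxy
    simp only [Quotient.map_mk] at hxy
    rw [quot_eq] at hxy ⊢
    exact (sameCycle_succ_iff q e x y).mp hxy
  · intro c
    induction c using Quotient.ind
    rename_i y
    rcases Fin.eq_zero_or_eq_succ y with rfl | ⟨x, rfl⟩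
    · exact ⟨Quotient.mk _ q, by
        simp only [Quotient.map_mk]
        rw [quot_eq]
        exact ((sameCycle_zero_succ q e q).mpr (Equiv.Perm.SameCycle.refl _ _)).symm⟩
    · exact ⟨Quotient.mk _ x, by simp only [Quotient.map_mk]⟩

lemma cycleCount_fixzero (e : Equiv.Perm (Fin n)) :
    cycleCount (Equiv.Perm.decomposeFin.symm ((0 : Fin (n+1)), e)) = cycleCount e + 1 := by
  rw [cycleCount_eq_card_quot, cycleCount_eq_card_quot]
  rw [← Finite.card_option]
  refine (Nat.card_congr ?_).symm
  set σ := Equiv.Perm.decomposeFin.symm ((0 : Fin (n+1)), e) with hσ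
  refine Equiv.ofBijective (fun o => o.elim (Quotient.mk _ (0 : Fin (n+1)))
    (Quotient.map Fin.succ (fun a b hab => ?_))) ⟨?_, ?_⟩
  · exact (sameCycle_succ_iff_zero e a b).mpr (show e.SameCycle a b from hab)
  · intro o₁ o₂
    match o₁, o₂ with
    | none, none => intro _; rfl
    | none, some c =>
      induction c using Quotient.ind
      rename_i x
      intro hc
      exfalso
      simp only [Option.elim, Quotient.map_mk] at hc
      rw [quot_eq] at hc
      exact Fin.succ_ne_zero x ((sameCycle_zero_iff_zero e _).mp hc)
    | some c, none =>
      induction c using Quotient.ind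
      rename_i x
      intro hc
      exfalso
      simp only [Option.elim, Quotient.map_mk] at hc
      rw [quot_eq] at hc
      exact Fin.succ_ne_zero x ((sameCycle_zero_iff_zero e _).mp hc.symm)
    | some c₁, some c₂ =>
      induction c₁ using Quotient.ind
      induction c₂ using Quotient.ind
      rename_i x y
      intro hc
      simp only [Option.elim, Quotient.map_mk] at hc
      rw [quot_eq] at hc
      congr 1
      rw [quot_eq]
      exact (sameCycle_succ_iff_zero e x y).mp hc
  · intro c
    induction c using Quotient.ind
    rename_i y
    rcases Fin.eq_zero_or_eq_succ y with rfl | ⟨x, rfl⟩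
    · exact ⟨none, rfl⟩
    · exact ⟨some (Quotient.mk _ x), by simp only [Option.elim, Quotient.map_mk]⟩


open scoped Classical

/-- `σ` separates the elements of `S`. -/
def SepOn {n : ℕ} (S : Finset (Fin n)) (σ : Equiv.Perm (Fin n)) : Prop :=
  ∀ i ∈ S, ∀ j ∈ S, i ≠ j → ¬ σ.SameCycle i j

def countOn (n : ℕ) (S : Finset (Fin n)) (k : ℕ) : ℕ :=
  (univ.filter fun σ : Equiv.Perm (Fin n) => cycleCount σ = k ∧ SepOn S σ).card

def NF (n : ℕ) (S : Finset (Fin n)) (x : Fin n) (k : ℕ) : ℕ :=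
  (univ.filter fun σ : Equiv.Perm (Fin n) => cycleCount σ = k ∧ SepOn S σ ∧ σ x ≠ x).card

lemma sepOn_conj {S : Finset (Fin n)} (τ σ : Equiv.Perm (Fin n)) :
    SepOn (S.image τ) (τ * σ * τ⁻¹) ↔ SepOn S σ := by
  constructor
  · intro h i hi j hj hij hsc
    refine h (τ i) (Finset.mem_image_of_mem τ hi) (τ j) (Finset.mem_image_of_mem τ hj)
      (fun hc => hij (τ.injective hc)) ?_
    rw [Equiv.Perm.sameCycle_conj]
    simpa using hsc
  · intro h i hi j hj hij hsc
    obtain ⟨a, ha, rfl⟩ := Finset.mem_image.mp hi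
    obtain ⟨b, hb, rfl⟩ := Finset.mem_image.mp hj
    rw [Equiv.Perm.sameCycle_conj] at hsc
    simp only [Equiv.Perm.inv_def, Equiv.symm_apply_apply] at hsc
    exact h a ha b hb (fun hc => hij (congrArg τ hc)) hsc

lemma NF_conj (S : Finset (Fin n)) (x : Fin n) (k : ℕ) (τ : Equiv.Perm (Fin n)) :
    NF n S x k = NF n (S.image τ) (τ x) k := by
  refine Finset.card_nbij' (fun σ => τ * σ * τ⁻¹) (fun σ => τ⁻¹ * σ * τ) ?_ ?_ ?_ ?_
  · intro σ hσ
    simp only [Finset.mem_coe, Finset.mem_filter, Finset.mem_univ, true_and] at hσ ⊢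
    obtain ⟨h1, h2, h3⟩ := hσ
    refine ⟨by rw [cycleCount_conj]; exact h1, (sepOn_conj τ σ).mpr h2, ?_⟩
    intro hc
    simp only [Equiv.Perm.mul_apply, Equiv.Perm.inv_def, Equiv.symm_apply_apply] at hc
    exact h3 (τ.injective hc)
  · intro σ hσ
    simp only [Finset.mem_coe, Finset.mem_filter, Finset.mem_univ, true_and] at hσ ⊢
    obtain ⟨h1, h2, h3⟩ := hσ
    have himg : Finset.image (fun a => τ⁻¹ a) (S.image τ) = S := by
      ext a
      constructor
      · intro h
        obtain ⟨b, hb, rfl⟩ := Finset.mem_image.mp h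
        obtain ⟨c, hc, rfl⟩ := Finset.mem_image.mp hb
        simpa using hc
      · intro ha
        exact Finset.mem_image.mpr ⟨τ a, Finset.mem_image_of_mem _ ha, by simp⟩
    have hconj := sepOn_conj (S := S.image τ) τ⁻¹ σ
    simp only [inv_inv] at hconj
    rw [show Finset.image (⇑τ⁻¹) (S.image τ) = S from himg] at hconj
    refine ⟨?_, ?_, ?_⟩
    · have hcc := cycleCount_conj τ⁻¹ σ
      simp only [inv_inv] at hcc
      rw [hcc]; exact h1
    · exact hconj.mpr h2
    · intro hc
      simp only [Equiv.Perm.mul_apply] at hc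
      apply h3
      have : σ (τ x) = τ x := by
        have := congrArg τ hc
        simpa using this
      exact this
  · intro σ _
    ext y
    simp [mul_assoc, Equiv.Perm.mul_apply]
  · intro σ _
    ext y
    simp [mul_assoc, Equiv.Perm.mul_apply]

lemma countOn_conj (S : Finset (Fin n)) (k : ℕ) (τ : Equiv.Perm (Fin n)) :
    countOn n S k = countOn n (S.image τ) k := by
  refine Finset.card_nbij' (fun σ => τ * σ * τ⁻¹) (fun σ => τ⁻¹ * σ * τ) ?_ ?_ ?_ ?_
  · intro σ hσ
    simp only [Finset.mem_coe, Finset.mem_filter, Finset.mem_univ, true_and] at hσ ⊢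
    obtain ⟨h1, h2⟩ := hσ
    exact ⟨by rw [cycleCount_conj]; exact h1, (sepOn_conj τ σ).mpr h2⟩
  · intro σ hσ
    simp only [Finset.mem_coe, Finset.mem_filter, Finset.mem_univ, true_and] at hσ ⊢
    obtain ⟨h1, h2⟩ := hσ
    have himg : Finset.image (fun a => τ⁻¹ a) (S.image τ) = S := by
      ext a
      constructor
      · intro h
        obtain ⟨b, hb, rfl⟩ := Finset.mem_image.mp h
        obtain ⟨c, hc, rfl⟩ := Finset.mem_image.mp hb
        simpa using hc
      · intro ha
        exact Finset.mem_image.mpr ⟨τ a, Finset.mem_image_of_mem _ ha, by simp⟩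
    have hconj := sepOn_conj (S := S.image τ) τ⁻¹ σ
    simp only [inv_inv] at hconj
    rw [show Finset.image (⇑τ⁻¹) (S.image τ) = S from himg] at hconj
    constructor
    · have hcc := cycleCount_conj τ⁻¹ σ
      simp only [inv_inv] at hcc
      rw [hcc]; exact h1
    · exact hconj.mpr h2
  · intro σ _; ext y; simp [mul_assoc, Equiv.Perm.mul_apply]
  · intro σ _; ext y; simp [mul_assoc, Equiv.Perm.mul_apply]

lemma exists_perm_image {S T : Finset (Fin n)} (h : S.card = T.card) :
    ∃ τ : Equiv.Perm (Fin n), S.image τ = T := by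
  classical
  let e : {x // x ∈ S} ≃ {x // x ∈ T} := Finset.equivOfCardEq h
  refine ⟨e.extendSubtype, ?_⟩
  apply Finset.eq_of_subset_of_card_le
  · intro y hy
    obtain ⟨x, hx, rfl⟩ := Finset.mem_image.mp hy
    exact e.extendSubtype_mem x hx
  · rw [Finset.card_image_of_injective _ (Equiv.injective _), ← h]

lemma countOn_card_eq {S T : Finset (Fin n)} (h : S.card = T.card) (k : ℕ) :
    countOn n S k = countOn n T k := by
  obtain ⟨τ, hτ⟩ := exists_perm_image h
  rw [countOn_conj S k τ, hτ]

lemma image_swap_of_mem {T : Finset (Fin n)} {a b : Fin n} (ha : a ∈ T) (hb : b ∈ T) :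
    T.image (Equiv.swap a b) = T := by
  apply Finset.eq_of_subset_of_card_le
  · intro y hy
    obtain ⟨x, hx, rfl⟩ := Finset.mem_image.mp hy
    rcases eq_or_ne x a with rfl | hxa
    · rwa [Equiv.swap_apply_left]
    rcases eq_or_ne x b with rfl | hxb
    · rwa [Equiv.swap_apply_right]
    · rwa [Equiv.swap_apply_of_ne_of_ne hxa hxb]
  · rw [Finset.card_image_of_injective _ (Equiv.injective _)]

lemma image_swap_of_not_mem {T : Finset (Fin n)} {a b : Fin n} (ha : a ∉ T) (hb : b ∉ T) :
    T.image (Equiv.swap a b) = T := by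
  apply Finset.eq_of_subset_of_card_le
  · intro y hy
    obtain ⟨x, hx, rfl⟩ := Finset.mem_image.mp hy
    rw [Equiv.swap_apply_of_ne_of_ne (fun hc => ha (by rw [← hc]; exact hx))
      (fun hc => hb (by rw [← hc]; exact hx))]
    exact hx
  · rw [Finset.card_image_of_injective _ (Equiv.injective _)]

lemma NF_move {S T : Finset (Fin n)} {x y : Fin n} (h : S.card = T.card)
    (hxy : x ∈ S ↔ y ∈ T) (k : ℕ) : NF n S x k = NF n T y k := by
  obtain ⟨τ, hτ⟩ := exists_perm_image h
  rw [NF_conj S x k τ, hτ]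
  set x' := τ x with hx'
  have hx'T : x' ∈ T ↔ x ∈ S := by
    constructor
    · intro hx'T
      rw [← hτ] at hx'T
      obtain ⟨a, ha, hax⟩ := Finset.mem_image.mp hx'T
      rwa [← τ.injective hax]
    · intro hxS
      rw [← hτ]
      exact Finset.mem_image_of_mem _ hxS
  by_cases hm : x ∈ S
  · have h1 : x' ∈ T := hx'T.mpr hm
    have h2 : y ∈ T := hxy.mp hm
    rw [NF_conj T x' k (Equiv.swap x' y), image_swap_of_mem h1 h2, Equiv.swap_apply_left]
  · have h1 : x' ∉ T := fun hc => hm (hx'T.mp hc)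
    have h2 : y ∉ T := fun hc => hm (hxy.mpr hc)
    rw [NF_conj T x' k (Equiv.swap x' y), image_swap_of_not_mem h1 h2, Equiv.swap_apply_left]


lemma sepOn_image_succ_iff (q : Fin n) (e : Equiv.Perm (Fin n)) (S' : Finset (Fin n)) :
    SepOn (S'.image Fin.succ) (Equiv.Perm.decomposeFin.symm (q.succ, e)) ↔ SepOn S' e := by
  constructor
  · intro h a ha b hb hab hsc
    exact h a.succ (Finset.mem_image_of_mem _ ha) b.succ (Finset.mem_image_of_mem _ hb)
      (fun hc => hab (Fin.succ_injective _ hc)) ((sameCycle_succ_iff q e a b).mpr hsc)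
  · intro h i hi j hj hij hsc
    obtain ⟨a, ha, rfl⟩ := Finset.mem_image.mp hi
    obtain ⟨b, hb, rfl⟩ := Finset.mem_image.mp hj
    exact h a ha b hb (fun hc => hij (congrArg Fin.succ hc))
      ((sameCycle_succ_iff q e a b).mp hsc)

lemma sepOn_insert_zero_iff (q : Fin n) (e : Equiv.Perm (Fin n)) (T' : Finset (Fin n)) :
    SepOn (insert 0 (T'.image Fin.succ)) (Equiv.Perm.decomposeFin.symm (q.succ, e)) ↔
      (SepOn (insert q T') e ∧ q ∉ T') := by
  set σ := Equiv.Perm.decomposeFin.symm (q.succ, e) with hσ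
  constructor
  · intro h
    have hqT : q ∉ T' := by
      intro hq
      exact h 0 (Finset.mem_insert_self _ _) q.succ
        (Finset.mem_insert_of_mem (Finset.mem_image_of_mem _ hq))
        (Fin.succ_ne_zero q).symm
        ((sameCycle_zero_succ q e q).mpr (Equiv.Perm.SameCycle.refl _ _))
    refine ⟨?_, hqT⟩
    intro i hi j hj hij hsc
    rcases Finset.mem_insert.mp hi with rfl | hiT
    · rcases Finset.mem_insert.mp hj with rfl | hjT
      · exact hij rfl
      · exact h 0 (Finset.mem_insert_self _ _) j.succ
          (Finset.mem_insert_of_mem (Finset.mem_image_of_mem _ hjT))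
          (Fin.succ_ne_zero j).symm
          ((sameCycle_zero_succ i e j).mpr hsc)
    · rcases Finset.mem_insert.mp hj with rfl | hjT
      · exact h 0 (Finset.mem_insert_self _ _) i.succ
          (Finset.mem_insert_of_mem (Finset.mem_image_of_mem _ hiT))
          (Fin.succ_ne_zero i).symm
          ((sameCycle_zero_succ j e i).mpr hsc.symm)
      · exact h i.succ (Finset.mem_insert_of_mem (Finset.mem_image_of_mem _ hiT)) j.succ
          (Finset.mem_insert_of_mem (Finset.mem_image_of_mem _ hjT))
          (fun hc => hij (Fin.succ_injective _ hc))
          ((sameCycle_succ_iff q e i j).mpr hsc)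
  · rintro ⟨h, hqT⟩
    intro i hi j hj hij hsc
    rcases Finset.mem_insert.mp hi with rfl | hiT
    · rcases Finset.mem_insert.mp hj with rfl | hjT
      · exact hij rfl
      · obtain ⟨b, hb, rfl⟩ := Finset.mem_image.mp hjT
        exact h q (Finset.mem_insert_self _ _) b (Finset.mem_insert_of_mem hb)
          (fun hc => hqT (hc ▸ hb)) ((sameCycle_zero_succ q e b).mp hsc)
    · rcases Finset.mem_insert.mp hj with rfl | hjT
      · obtain ⟨a, ha, rfl⟩ := Finset.mem_image.mp hiT
        exact h q (Finset.mem_insert_self _ _) a (Finset.mem_insert_of_mem ha)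
          (fun hc => hqT (hc ▸ ha)) ((sameCycle_zero_succ q e a).mp hsc.symm)
      · obtain ⟨a, ha, rfl⟩ := Finset.mem_image.mp hiT
        obtain ⟨b, hb, rfl⟩ := Finset.mem_image.mp hjT
        exact h a (Finset.mem_insert_of_mem ha) b (Finset.mem_insert_of_mem hb)
          (fun hc => hij (congrArg Fin.succ hc)) ((sameCycle_succ_iff q e a b).mp hsc)

lemma decomposeFin_fst (σ : Equiv.Perm (Fin (n+1))) :
    (Equiv.Perm.decomposeFin σ).1 = σ 0 := by
  conv_rhs => rw [← Equiv.Perm.decomposeFin.symm_apply_apply σ]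
  exact (Equiv.Perm.decomposeFin_symm_apply_zero _ _).symm

lemma decomposeFin_eq (σ : Equiv.Perm (Fin (n+1))) :
    σ = Equiv.Perm.decomposeFin.symm
      ((Equiv.Perm.decomposeFin σ).1, (Equiv.Perm.decomposeFin σ).2) :=
  (Equiv.Perm.decomposeFin.symm_apply_apply σ).symm

lemma NF_zero_notmem (S' : Finset (Fin n)) (k : ℕ) :
    NF (n+1) (S'.image Fin.succ) 0 k = n * countOn n S' k := by
  have key : NF (n+1) (S'.image Fin.succ) 0 k =
      ((univ : Finset (Fin (n+1) × Equiv.Perm (Fin n))).filter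
        (fun pe => pe.1 ≠ 0 ∧ (cycleCount pe.2 = k ∧ SepOn S' pe.2))).card := by
    refine Finset.card_nbij' (fun σ => Equiv.Perm.decomposeFin σ)
      (fun pe => Equiv.Perm.decomposeFin.symm pe) ?_ ?_ ?_ ?_
    · intro σ hσ
      simp only [Finset.mem_coe, Finset.mem_filter, Finset.mem_univ, true_and] at hσ ⊢
      obtain ⟨h1, h2, h3⟩ := hσ
      have hp : (Equiv.Perm.decomposeFin σ).1 ≠ 0 := by rw [decomposeFin_fst]; exact h3
      have hσeq : σ = Equiv.Perm.decomposeFin.symm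
          ((((Equiv.Perm.decomposeFin σ).1.pred hp)).succ, (Equiv.Perm.decomposeFin σ).2) := by
        rw [Fin.succ_pred]
        exact decomposeFin_eq σ
      rw [hσeq, cycleCount_insert] at h1
      rw [hσeq, sepOn_image_succ_iff] at h2
      exact ⟨hp, h1, h2⟩
    · rintro ⟨p, e⟩ hpe
      simp only [Finset.mem_coe, Finset.mem_filter, Finset.mem_univ, true_and] at hpe ⊢
      obtain ⟨hp, h1, h2⟩ := hpe
      have hpq : p = (p.pred hp).succ := (Fin.succ_pred p hp).symm
      rw [hpq]
      refine ⟨?_, ?_, ?_⟩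
      · rw [cycleCount_insert]; exact h1
      · rw [sepOn_image_succ_iff]; exact h2
      · rw [Equiv.Perm.decomposeFin_symm_apply_zero]
        exact Fin.succ_ne_zero _
    · intro σ _
      exact Equiv.Perm.decomposeFin.symm_apply_apply σ
    · intro pe _
      exact Equiv.Perm.decomposeFin.apply_symm_apply pe
  rw [key, Finset.card_filter, Fintype.sum_prod_type]
  have hinner : ∀ p : Fin (n+1),
      (∑ e : Equiv.Perm (Fin n), if p ≠ 0 ∧ (cycleCount e = k ∧ SepOn S' e) then 1 else 0) =
        if p ≠ 0 then countOn n S' k else 0 := by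
    intro p
    by_cases hp : p ≠ 0
    · rw [if_pos hp, countOn, Finset.card_filter]
      refine Finset.sum_congr rfl (fun e _ => ?_)
      by_cases h2 : cycleCount e = k ∧ SepOn S' e
      · rw [if_pos ⟨hp, h2⟩, if_pos h2]
      · rw [if_neg (fun hc => h2 hc.2), if_neg h2]
    · rw [if_neg hp]
      exact Finset.sum_eq_zero (fun e _ => by rw [if_neg (fun hc => hp hc.1)])
  rw [Finset.sum_congr rfl (fun p _ => hinner p), ← Finset.sum_filter, Finset.sum_const,
    smul_eq_mul]
  congr 1
  rw [Finset.filter_ne', Finset.card_erase_of_mem (Finset.mem_univ _), Finset.card_univ,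
    Fintype.card_fin]
  omega

lemma NF_zero_mem (T' : Finset (Fin n)) (k : ℕ) :
    NF (n+1) (insert 0 (T'.image Fin.succ)) 0 k =
      ∑ q : Fin n, if q ∉ T' then countOn n (insert q T') k else 0 := by
  have key : NF (n+1) (insert 0 (T'.image Fin.succ)) 0 k =
      ((univ : Finset (Fin n × Equiv.Perm (Fin n))).filter
        (fun qe => qe.1 ∉ T' ∧ (cycleCount qe.2 = k ∧ SepOn (insert qe.1 T') qe.2))).card := by
    refine Finset.card_bij'
      (fun σ hσ => (((Equiv.Perm.decomposeFin σ).1).pred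
          (by rw [decomposeFin_fst]; exact ((Finset.mem_filter.mp hσ).2).2.2),
        (Equiv.Perm.decomposeFin σ).2))
      (fun qe _ => Equiv.Perm.decomposeFin.symm (qe.1.succ, qe.2)) ?_ ?_ ?_ ?_
    · intro σ hσ
      simp only [Finset.mem_filter, Finset.mem_univ, true_and] at hσ ⊢
      obtain ⟨h1, h2, h3⟩ := hσ
      have hp : (Equiv.Perm.decomposeFin σ).1 ≠ 0 := by rw [decomposeFin_fst]; exact h3
      have hσeq : σ = Equiv.Perm.decomposeFin.symm
          ((((Equiv.Perm.decomposeFin σ).1.pred hp)).succ, (Equiv.Perm.decomposeFin σ).2) := by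
        rw [Fin.succ_pred]
        exact decomposeFin_eq σ
      rw [hσeq, cycleCount_insert] at h1
      rw [hσeq, sepOn_insert_zero_iff] at h2
      exact ⟨h2.2, h1, h2.1⟩
    · rintro ⟨q, e⟩ hpe
      simp only [Finset.mem_filter, Finset.mem_univ, true_and] at hpe ⊢
      obtain ⟨hq, h1, h2⟩ := hpe
      refine ⟨?_, ?_, ?_⟩
      · rw [cycleCount_insert]; exact h1
      · rw [sepOn_insert_zero_iff]; exact ⟨h2, hq⟩
      · rw [Equiv.Perm.decomposeFin_symm_apply_zero]
        exact Fin.succ_ne_zero _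
    · intro σ hσ
      simp only [Fin.succ_pred]
      exact (decomposeFin_eq σ).symm
    · rintro ⟨q, e⟩ _
      simp only [Equiv.apply_symm_apply, Fin.pred_succ]
  rw [key, Finset.card_filter, Fintype.sum_prod_type]
  refine Finset.sum_congr rfl (fun q _ => ?_)
  by_cases hq : q ∉ T'
  · rw [if_pos hq, countOn, Finset.card_filter]
    refine Finset.sum_congr rfl (fun e _ => ?_)
    by_cases h2 : cycleCount e = k ∧ SepOn (insert q T') e
    · rw [if_pos ⟨hq, h2⟩, if_pos h2]
    · rw [if_neg (fun hc => h2 hc.2), if_neg h2]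
  · rw [if_neg hq]
    refine Finset.sum_eq_zero (fun e _ => ?_)
    rw [if_neg (fun hc => hq hc.1)]


def lowF (n m : ℕ) : Finset (Fin n) := univ.filter (fun i => (i : ℕ) < m)

lemma card_lowF {n m : ℕ} (h : m ≤ n) : (lowF n m).card = m := by
  refine Finset.card_eq_of_bijective (fun i hi => ⟨i, lt_of_lt_of_le hi h⟩) ?_ ?_ ?_
  · intro a ha
    simp only [lowF, Finset.mem_filter] at ha
    exact ⟨a, ha.2, Fin.ext rfl⟩
  · intro i hi
    simp only [lowF, Finset.mem_filter]
    exact ⟨Finset.mem_univ _, hi⟩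
  · intro i j hi hj hij
    exact congrArg Fin.val hij

lemma separates_iff_sepOn (m : ℕ) (σ : Equiv.Perm (Fin n)) :
    Separates m σ ↔ SepOn (lowF n m) σ := by
  constructor
  · intro h i hi j hj
    simp only [lowF, Finset.mem_filter] at hi hj
    exact h i j hi.2 hj.2
  · intro h i j hi hj
    exact h i (by simp [lowF, hi]) j (by simp [lowF, hj])

lemma sepCount_eq_countOn (N m k : ℕ) : sepCount N m k = countOn N (lowF N m) k := by
  rw [sepCount, Nat.card_eq_fintype_card, Fintype.card_subtype, countOn]
  congr 1
  ext σ
  simp only [Finset.mem_filter, Finset.mem_univ, true_and]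
  rw [separates_iff_sepOn]

lemma sum_nonfixed (N m k : ℕ) (hm : m ≤ N + 1) :
    ∑ σ ∈ (univ.filter fun σ : Equiv.Perm (Fin (N+1)) =>
        cycleCount σ = k ∧ Separates m σ),
      (univ.filter fun x => σ x ≠ x).card
    = (N + 1 - m) * (N + m) * sepCount N m k := by
  classical
  -- swap the summation order
  have swap : (∑ σ ∈ (univ.filter fun σ : Equiv.Perm (Fin (N+1)) =>
        cycleCount σ = k ∧ Separates m σ),
      (univ.filter fun x => σ x ≠ x).card)
      = ∑ x : Fin (N+1), NF (N+1) (lowF (N+1) m) x k := by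
    have h1 : ∀ σ : Equiv.Perm (Fin (N+1)),
        (univ.filter fun x => σ x ≠ x).card = ∑ x : Fin (N+1), if σ x ≠ x then 1 else 0 :=
      fun σ => Finset.card_filter _ _
    rw [Finset.sum_congr rfl (fun σ _ => h1 σ), Finset.sum_filter]
    have h2 : ∀ σ : Equiv.Perm (Fin (N+1)),
        (if cycleCount σ = k ∧ Separates m σ
            then ∑ x : Fin (N+1), if σ x ≠ x then 1 else 0 else 0)
          = ∑ x : Fin (N+1), if cycleCount σ = k ∧ Separates m σ then
              (if σ x ≠ x then 1 else 0) else 0 := by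
      intro σ
      by_cases hP : cycleCount σ = k ∧ Separates m σ <;> simp [hP]
    rw [Finset.sum_congr rfl (fun σ _ => h2 σ), Finset.sum_comm]
    refine Finset.sum_congr rfl (fun x _ => ?_)
    rw [NF, Finset.card_filter]
    refine Finset.sum_congr rfl (fun σ _ => ?_)
    by_cases hP : cycleCount σ = k ∧ Separates m σ
    · rw [if_pos hP]
      by_cases hQ : σ x ≠ x
      · rw [if_pos hQ, if_pos ⟨hP.1, (separates_iff_sepOn m σ).mp hP.2, hQ⟩]
      · rw [if_neg hQ, if_neg (fun hc => hQ hc.2.2)]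
    · rw [if_neg hP, if_neg (fun hc =>
        hP ⟨hc.1, (separates_iff_sepOn m σ).mpr hc.2.1⟩)]
  rw [swap, ← Finset.sum_filter_add_sum_filter_not univ (fun x : Fin (N+1) => (x : ℕ) < m)]
  -- the "x < m" part
  have hlow : ∀ x ∈ univ.filter (fun x : Fin (N+1) => (x : ℕ) < m),
      NF (N+1) (lowF (N+1) m) x k = (N + 1 - m) * sepCount N m k := by
    intro x hx
    simp only [Finset.mem_filter, Finset.mem_univ, true_and] at hx
    have hm1 : 1 ≤ m := Nat.pos_of_ne_zero (fun hc => by omega)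
    have hm1N : m - 1 ≤ N := by omega
    have hcard : (lowF (N+1) m).card = (insert (0 : Fin (N+1))
        ((lowF N (m-1)).image Fin.succ)).card := by
      rw [card_lowF hm, Finset.card_insert_of_notMem (fun hc => by
        obtain ⟨a, _, ha⟩ := Finset.mem_image.mp hc
        exact Fin.succ_ne_zero a ha)]
      rw [Finset.card_image_of_injective _ (Fin.succ_injective N), card_lowF hm1N]
      omega
    have hmem : x ∈ lowF (N+1) m ↔ (0 : Fin (N+1)) ∈ insert (0 : Fin (N+1))
        ((lowF N (m-1)).image Fin.succ) :=
      iff_of_true (by simp [lowF, hx]) (Finset.mem_insert_self _ _)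
    rw [NF_move hcard hmem, NF_zero_mem]
    have hterm : ∀ q : Fin N,
        (if q ∉ lowF N (m-1) then countOn N (insert q (lowF N (m-1))) k else 0)
          = if q ∉ lowF N (m-1) then sepCount N m k else 0 := by
      intro q
      by_cases hq : q ∉ lowF N (m-1)
      · rw [if_pos hq, if_pos hq, sepCount_eq_countOn]
        have hmN : m ≤ N := by
          have : m - 1 ≤ (q : ℕ) := by
            simp only [lowF, Finset.mem_filter, Finset.mem_univ, true_and, not_lt] at hq
            exact hq
          have := q.isLt
          omega
        refine countOn_card_eq ?_ k
        rw [Finset.card_insert_of_notMem hq, card_lowF hm1N, card_lowF hmN]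
        omega
      · rw [if_neg hq, if_neg hq]
    rw [Finset.sum_congr rfl (fun q _ => hterm q), ← Finset.sum_filter, Finset.sum_const,
      smul_eq_mul]
    congr 1
    have hsplit := Finset.card_filter_add_card_filter_not
      (s := (univ : Finset (Fin N))) (p := fun q => q ∈ lowF N (m-1))
    have hc1 : (univ.filter (fun q : Fin N => q ∈ lowF N (m-1))).card = m - 1 := by
      rw [Finset.filter_mem_eq_inter, Finset.univ_inter, card_lowF hm1N]
    rw [Finset.card_univ, Fintype.card_fin] at hsplit
    omega
  -- the "x ≥ m" part
  have hhigh : ∀ x ∈ univ.filter (fun x : Fin (N+1) => ¬ (x : ℕ) < m),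
      NF (N+1) (lowF (N+1) m) x k = N * sepCount N m k := by
    intro x hx
    simp only [Finset.mem_filter, Finset.mem_univ, true_and, not_lt] at hx
    have hmN : m ≤ N := by have := x.isLt; omega
    have hcard : (lowF (N+1) m).card = ((lowF N m).image Fin.succ).card := by
      rw [card_lowF hm, Finset.card_image_of_injective _ (Fin.succ_injective N),
        card_lowF hmN]
    have hmem : x ∈ lowF (N+1) m ↔ (0 : Fin (N+1)) ∈ (lowF N m).image Fin.succ :=
      iff_of_false (by simp [lowF]; omega) (fun hc => by
        obtain ⟨a, _, ha⟩ := Finset.mem_image.mp hc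
        exact Fin.succ_ne_zero a ha)
    rw [NF_move hcard hmem, NF_zero_notmem, sepCount_eq_countOn]
  rw [Finset.sum_congr rfl hlow, Finset.sum_congr rfl hhigh, Finset.sum_const,
    Finset.sum_const, smul_eq_mul, smul_eq_mul]
  have hc1 : (univ.filter (fun x : Fin (N+1) => (x : ℕ) < m)).card = m := card_lowF hm
  have hc2 : (univ.filter (fun x : Fin (N+1) => ¬ (x : ℕ) < m)).card = N + 1 - m := by
    have hsplit := Finset.card_filter_add_card_filter_not
      (s := (univ : Finset (Fin (N+1)))) (p := fun x : Fin (N+1) => (x : ℕ) < m)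
    rw [Finset.card_univ, Fintype.card_fin] at hsplit
    omega
  rw [hc1, hc2]
  set C := sepCount N m k
  set t := N + 1 - m
  ring


lemma arith_exc (n a b : ℕ) (han : a < n) (hbn : b < n) :
    ((if a < b then 1 else 0) +
      (if (if a = 0 then 0 else n - a) < (if b = 0 then 0 else n - b) then 1 else 0)) +
      (if b = 0 ∧ ¬ a = 0 then 1 else 0)
    = (if ¬ a = b then 1 else 0) + (if a = 0 ∧ ¬ b = 0 then 1 else 0) := by
  split_ifs <;> omega

lemma isFullCycle_sameCycle {s : Equiv.Perm (Fin n)} (hs : IsFullCycle s) (x y : Fin n) :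
    s.SameCycle x y := by
  have h1 : Nat.card (Quotient (scs s)) = 1 := by
    rw [← cycleCount_eq_card_quot]; exact hs
  have h2 : Subsingleton (Quotient (scs s)) := (Nat.card_eq_one_iff_unique.mp h1).1
  exact quot_eq.mp (Subsingleton.elim _ _)

/-- The orbit map of a full cycle. -/
def fullMap [NeZero n] (s : Equiv.Perm (Fin n)) : Fin n → Fin n := fun a => (s ^ (a : ℕ)) 0

lemma exists_pow_lt [NeZero n] {s : Equiv.Perm (Fin n)} (hs : IsFullCycle s) (x : Fin n) :
    ∃ a < n, (s ^ a) 0 = x := by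
  have hex : ∃ k : ℕ, (s ^ k) 0 = x := by
    obtain ⟨i, -, hi⟩ := (isFullCycle_sameCycle hs 0 x).exists_pow_eq'
    exact ⟨i, hi⟩
  refine ⟨Nat.find hex, ?_, Nat.find_spec hex⟩
  by_contra hge
  push_neg at hge
  have hinj : ∀ i j : ℕ, i < j → j ≤ Nat.find hex → (s ^ i) 0 ≠ (s ^ j) 0 := by
    intro i j hij hjk heq
    have h1 : (s ^ (Nat.find hex - j + i)) 0 = x := by
      have h2 : (s ^ (Nat.find hex - j)) ((s ^ j) 0) = x := by
        rw [← Equiv.Perm.mul_apply, ← pow_add, Nat.sub_add_cancel hjk]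
        exact Nat.find_spec hex
      rw [← heq, ← Equiv.Perm.mul_apply, ← pow_add] at h2
      exact h2
    exact Nat.find_min hex (by omega) h1
  have hcard : Nat.find hex + 1 ≤ n := by
    have h3 := Fintype.card_le_of_injective
      (fun i : Fin (Nat.find hex + 1) => (s ^ (i : ℕ)) 0) ?_
    · simpa using h3
    · intro i j hij
      rcases lt_trichotomy (i : ℕ) (j : ℕ) with h | h | h
      · exact absurd hij (hinj _ _ h (Nat.lt_succ_iff.mp j.isLt))
      · exact Fin.ext h
      · exact absurd hij.symm (hinj _ _ h (Nat.lt_succ_iff.mp i.isLt))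
  omega

lemma fullMap_bijective [NeZero n] {s : Equiv.Perm (Fin n)} (hs : IsFullCycle s) :
    Function.Bijective (fullMap s) := by
  have hsurj : Function.Surjective (fullMap s) := by
    intro x
    obtain ⟨a, ha, hax⟩ := exists_pow_lt hs x
    exact ⟨⟨a, ha⟩, hax⟩
  exact ⟨Finite.injective_iff_surjective.mpr hsurj, hsurj⟩

lemma pow_n_zero [NeZero n] {s : Equiv.Perm (Fin n)} (hs : IsFullCycle s) :
    (s ^ n) 0 = 0 := by
  obtain ⟨c, hc, hcs⟩ := exists_pow_lt hs ((s ^ n) 0)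
  rcases Nat.eq_zero_or_pos c with rfl | hcpos
  · rw [pow_zero] at hcs
    exact hcs.symm
  · exfalso
    have hn : 0 < n := Nat.pos_of_ne_zero (NeZero.ne n)
    have h1 : (s ^ c) 0 = s ((s ^ (c - 1)) 0) := by
      have h1' : (s ^ ((c - 1) + 1)) 0 = s ((s ^ (c - 1)) 0) := by
        rw [pow_succ', Equiv.Perm.mul_apply]
      have hc' : c - 1 + 1 = c := by omega
      rwa [hc'] at h1'
    have h2 : (s ^ n) 0 = s ((s ^ (n - 1)) 0) := by
      have h2' : (s ^ ((n - 1) + 1)) 0 = s ((s ^ (n - 1)) 0) := by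
        rw [pow_succ', Equiv.Perm.mul_apply]
      have hn' : n - 1 + 1 = n := by omega
      rwa [hn'] at h2'
    have h3 : (s ^ (c - 1)) 0 = (s ^ (n - 1)) 0 := by
      apply s.injective
      rw [← h1, ← h2, hcs]
    have h4 : fullMap s ⟨c - 1, by omega⟩ = fullMap s ⟨n - 1, by omega⟩ := h3
    have h5 := (fullMap_bijective hs).1 h4
    have : c - 1 = n - 1 := congrArg Fin.val h5
    omega

lemma pow_mod_zero [NeZero n] {s : Equiv.Perm (Fin n)} (hs : IsFullCycle s) (j : ℕ) :
    (s ^ (j % n)) 0 = (s ^ j) 0 := by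
  have hmul : ∀ q : ℕ, (s ^ (n * q)) 0 = 0 := by
    intro q
    rw [pow_mul]
    induction q with
    | zero => rfl
    | succ q ih =>
      rw [pow_succ, Equiv.Perm.mul_apply, pow_n_zero hs]
      exact ih
  conv_rhs => rw [← Nat.mod_add_div j n]
  rw [pow_add, Equiv.Perm.mul_apply, hmul]

/-- exceedCount as a filter over positions. -/
lemma exceedCount_eq_filter [NeZero n] {s : Equiv.Perm (Fin n)} (hs : IsFullCycle s)
    (π : Equiv.Perm (Fin n)) :
    exceedCount s π = (univ.filter fun x : Fin n =>
      (((Equiv.ofBijective _ (fullMap_bijective hs)).symm x : Fin n) : ℕ) <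
      (((Equiv.ofBijective _ (fullMap_bijective hs)).symm (π x) : Fin n) : ℕ)).card := by
  rw [exceedCount, Nat.card_eq_fintype_card, Fintype.card_subtype]
  congr 1
  ext x
  simp only [Finset.mem_filter, Finset.mem_univ, true_and]
  set E := Equiv.ofBijective _ (fullMap_bijective hs) with hE
  constructor
  · rintro ⟨a, b, hab, hbn, ha, hb⟩
    have han : a < n := lt_trans hab hbn
    have hax : E ⟨a, han⟩ = x := ha
    have hbx : E ⟨b, hbn⟩ = π x := hb
    have h1 : E.symm x = ⟨a, han⟩ := by rw [← hax, Equiv.symm_apply_apply]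
    have h2 : E.symm (π x) = ⟨b, hbn⟩ := by rw [← hbx, Equiv.symm_apply_apply]
    rw [h1, h2]
    exact hab
  · intro h
    refine ⟨(E.symm x : Fin n), (E.symm (π x) : Fin n), h, (E.symm (π x)).isLt, ?_, ?_⟩
    · exact E.apply_symm_apply x
    · exact E.apply_symm_apply (π x)

lemma isFullCycle_inv {s : Equiv.Perm (Fin n)} (hs : IsFullCycle s) : IsFullCycle s⁻¹ := by
  unfold IsFullCycle at hs ⊢
  rw [cycleCount_inv]
  exact hs

lemma exc_add_exc_inv [NeZero n] {s : Equiv.Perm (Fin n)} (hs : IsFullCycle s)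
    (π : Equiv.Perm (Fin n)) :
    exceedCount s π + exceedCount s⁻¹ π = (univ.filter fun x => π x ≠ x).card := by
  classical
  have hs' : IsFullCycle s⁻¹ := isFullCycle_inv hs
  set E := Equiv.ofBijective _ (fullMap_bijective hs) with hE
  set E' := Equiv.ofBijective _ (fullMap_bijective hs') with hE'
  have hEa : ∀ a : Fin n, E a = (s ^ (a : ℕ)) 0 := fun a => rfl
  have hEa' : ∀ a : Fin n, E' a = (s⁻¹ ^ (a : ℕ)) 0 := fun a => rfl
  have hpos0 : E.symm 0 = 0 := by
    have h := hEa 0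
    simp only [Fin.val_zero, pow_zero, Equiv.Perm.one_apply] at h
    conv_lhs => rw [← h]
    rw [Equiv.symm_apply_apply]
  have hpos0' : E'.symm 0 = 0 := by
    have h := hEa' 0
    simp only [Fin.val_zero, pow_zero, Equiv.Perm.one_apply] at h
    conv_lhs => rw [← h]
    rw [Equiv.symm_apply_apply]
  have hzero_iff : ∀ x : Fin n, (E.symm x : ℕ) = 0 ↔ x = 0 := by
    intro x
    constructor
    · intro h
      have : E.symm x = 0 := Fin.ext (by simpa using h)
      rw [← hpos0] at this
      exact E.symm.injective this
    · rintro rfl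
      rw [hpos0]; rfl
  have hposinv : ∀ x : Fin n, x ≠ 0 → (E'.symm x : ℕ) = n - (E.symm x : ℕ) := by
    intro x hx0
    set a := (E.symm x : ℕ) with ha
    have hax : (s ^ a) 0 = x := E.apply_symm_apply x
    have ha0 : a ≠ 0 := fun hc => hx0 ((hzero_iff x).mp hc)
    have han : a < n := (E.symm x).isLt
    have hinv : (s⁻¹ ^ (n - a)) 0 = x := by
      have h1 : (s ^ (n - a)) x = 0 := by
        rw [← hax, ← Equiv.Perm.mul_apply, ← pow_add]
        rw [show n - a + a = n by omega]
        exact pow_n_zero hs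
      have h2 : x = (s ^ (n - a))⁻¹ 0 := by
        rw [← h1, Equiv.Perm.inv_def, Equiv.symm_apply_apply]
      rw [h2, inv_pow]
    have : E' ⟨n - a, by omega⟩ = x := hinv
    rw [← this, Equiv.symm_apply_apply]
  rw [exceedCount_eq_filter hs π, exceedCount_eq_filter hs' π]
  rw [Finset.card_filter, Finset.card_filter, Finset.card_filter, ← Finset.sum_add_distrib]
  -- correction sums
  have hkey : ∀ x : Fin n,
      ((if ((E.symm x : Fin n) : ℕ) < ((E.symm (π x) : Fin n) : ℕ) then 1 else 0) +
        (if ((E'.symm x : Fin n) : ℕ) < ((E'.symm (π x) : Fin n) : ℕ) then 1 else 0)) +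
        (if π x = 0 ∧ ¬ x = 0 then 1 else 0)
      = (if π x ≠ x then 1 else 0) + (if x = 0 ∧ ¬ π 0 = 0 then 1 else 0) := by
    intro x
    set a := ((E.symm x : Fin n) : ℕ) with ha
    set b := ((E.symm (π x) : Fin n) : ℕ) with hb
    have han : a < n := (E.symm x).isLt
    have hbn : b < n := (E.symm (π x)).isLt
    have hxa : x = 0 ↔ a = 0 := (hzero_iff x).symm
    have hxb : π x = 0 ↔ b = 0 := (hzero_iff (π x)).symm
    have hfix : π x = x ↔ a = b := by
      constructor
      · intro h; rw [hb, h]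
      · intro h
        have : E.symm (π x) = E.symm x := Fin.ext (by omega)
        exact E.symm.injective this
    have ha' : ((E'.symm x : Fin n) : ℕ) = if a = 0 then 0 else n - a := by
      by_cases hx0 : x = 0
      · rw [if_pos (hxa.mp hx0), hx0, hpos0']; rfl
      · rw [if_neg (fun hc => hx0 (hxa.mpr hc)), hposinv x hx0]
    have hb' : ((E'.symm (π x) : Fin n) : ℕ) = if b = 0 then 0 else n - b := by
      by_cases hx0 : π x = 0
      · rw [if_pos (hxb.mp hx0), hx0, hpos0']; rfl
      · rw [if_neg (fun hc => hx0 (hxb.mpr hc)), hposinv _ hx0]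
    rw [ha', hb']
    have e1 : (π x = 0 ∧ ¬ x = 0) ↔ (b = 0 ∧ ¬ a = 0) := by
      rw [hxa, hxb]
    have e2 : (π x ≠ x) ↔ ¬ a = b := by rw [Ne, hfix]
    have e3 : (x = 0 ∧ ¬ π 0 = 0) ↔ (a = 0 ∧ ¬ b = 0) := by
      constructor
      · rintro ⟨h1, h2⟩
        refine ⟨hxa.mp h1, fun hc => h2 ?_⟩
        have := hxb.mpr hc
        rwa [h1] at this
      · rintro ⟨h1, h2⟩
        have hx0 : x = 0 := hxa.mpr h1
        refine ⟨hx0, fun hc => h2 (hxb.mp (by rwa [hx0]))⟩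
    rw [if_congr e1 rfl rfl, if_congr e2 rfl rfl, if_congr e3 rfl rfl]
    exact arith_exc n a b han hbn
  set i1 : Fin n → ℕ := fun x =>
    if ((E.symm x : Fin n) : ℕ) < ((E.symm (π x) : Fin n) : ℕ) then 1 else 0 with hi1
  set i2 : Fin n → ℕ := fun x =>
    if ((E'.symm x : Fin n) : ℕ) < ((E'.symm (π x) : Fin n) : ℕ) then 1 else 0 with hi2
  set K : ℕ := if π 0 = 0 then 0 else 1 with hK
  have hc1 : (∑ x : Fin n, if π x = 0 ∧ ¬ x = 0 then 1 else 0) = K := by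
    by_cases hπ0 : π 0 = 0
    · rw [hK, if_pos hπ0]
      refine Finset.sum_eq_zero (fun x _ => ?_)
      rw [if_neg]
      rintro ⟨h1, h2⟩
      exact h2 (π.injective (h1.trans hπ0.symm))
    · rw [hK, if_neg hπ0]
      have hiff : ∀ x : Fin n, (π x = 0 ∧ ¬ x = 0) ↔ x = π⁻¹ 0 := by
        intro x
        constructor
        · rintro ⟨h1, -⟩
          rw [← h1, Equiv.Perm.inv_def, Equiv.symm_apply_apply]
        · rintro rfl
          refine ⟨Equiv.apply_symm_apply π 0, fun hc => hπ0 ?_⟩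
          conv_lhs => rw [← hc]
          exact Equiv.apply_symm_apply π 0
      rw [Finset.sum_congr rfl (fun x _ => if_congr (hiff x) rfl rfl)]
      simp
  have hc2 : (∑ x : Fin n, if x = 0 ∧ ¬ π 0 = 0 then 1 else 0) = K := by
    by_cases hπ0 : π 0 = 0
    · rw [hK, if_pos hπ0]
      exact Finset.sum_eq_zero (fun x _ => by rw [if_neg (fun hc => hc.2 hπ0)])
    · rw [hK, if_neg hπ0]
      have hiff : ∀ x : Fin n, (x = 0 ∧ ¬ π 0 = 0) ↔ x = 0 := by
        intro x
        exact ⟨fun h => h.1, fun h => ⟨h, hπ0⟩⟩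
      rw [Finset.sum_congr rfl (fun x _ => if_congr (hiff x) rfl rfl)]
      simp
  have hsum1 : (∑ x : Fin n, (i1 x + i2 x)) + (∑ x : Fin n, if π x = 0 ∧ ¬ x = 0 then 1 else 0)
      = (∑ x : Fin n, if π x ≠ x then 1 else 0)
        + (∑ x : Fin n, if x = 0 ∧ ¬ π 0 = 0 then 1 else 0) := by
    rw [← Finset.sum_add_distrib, ← Finset.sum_add_distrib]
    exact Finset.sum_congr rfl (fun x _ => hkey x)
  rw [hc1, hc2] at hsum1
  exact Nat.add_right_cancel hsum1


lemma isFullCycle_finRotate (N : ℕ) : IsFullCycle (finRotate (N+1)) := by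
  unfold IsFullCycle cycleCount
  cases N with
  | zero =>
    rw [finRotate_one]
    rw [show (Equiv.refl (Fin 1)) = (1 : Equiv.Perm (Fin 1)) from rfl,
      Equiv.Perm.cycleType_one]
    simp
  | succ M =>
    rw [cycleType_finRotate]
    have hfix : (univ.filter fun x : Fin (M+2) => (finRotate (M+2)) x = x) = ∅ := by
      ext x
      simp only [Finset.mem_filter, Finset.mem_univ, true_and, Finset.notMem_empty, iff_false]
      intro hc
      have hx : x ∈ Equiv.Perm.support (finRotate (M+2)) := by
        rw [support_finRotate]; exact Finset.mem_univ x
      rw [Equiv.Perm.mem_support] at hx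
      exact hx hc
    rw [hfix]
    simp

lemma finRotate_pow_zero (N : ℕ) : ∀ j (hj : j ≤ N),
    (((finRotate (N+1)) ^ j) 0 : Fin (N+1)) = ⟨j, by omega⟩ := by
  intro j
  induction j with
  | zero =>
    intro _
    apply Fin.ext
    simp
  | succ j ih =>
    intro hj
    rw [pow_succ', Equiv.Perm.mul_apply, ih (by omega), finRotate_succ_apply]
    apply Fin.ext
    rw [Fin.val_add_one]
    have hne : (⟨j, by omega⟩ : Fin (N+1)) ≠ Fin.last N := by
      intro hc
      have := congrArg Fin.val hc
      simp [Fin.val_last] at this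
      omega
    rw [if_neg hne]

lemma card_fix_zero (N : ℕ) :
    ((univ : Finset (Equiv.Perm (Fin (N+1)))).filter fun g => g 0 = 0).card = N.factorial := by
  have h : ((univ : Finset (Equiv.Perm (Fin (N+1)))).filter fun g => g 0 = 0).card
      = ((univ : Finset (Equiv.Perm (Fin N)))).card := by
    refine Finset.card_bij' (fun g _ => (Equiv.Perm.decomposeFin g).2)
      (fun e _ => Equiv.Perm.decomposeFin.symm (0, e)) ?_ ?_ ?_ ?_
    · intro g _; exact Finset.mem_univ _
    · intro e _
      simp only [Finset.mem_filter, Finset.mem_univ, true_and]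
      exact Equiv.Perm.decomposeFin_symm_apply_zero 0 e
    · intro g hg
      simp only [Finset.mem_filter, Finset.mem_univ, true_and] at hg
      have h1 : Equiv.Perm.decomposeFin g = (0, (Equiv.Perm.decomposeFin g).2) := by
        rw [Prod.ext_iff]
        exact ⟨by rw [decomposeFin_fst]; exact hg, rfl⟩
      conv_rhs => rw [← Equiv.Perm.decomposeFin.symm_apply_apply g]
      rw [h1]
    · intro e _
      show (Equiv.Perm.decomposeFin (Equiv.Perm.decomposeFin.symm (0, e))).2 = e
      rw [Equiv.apply_symm_apply]
  rw [h, Finset.card_univ, Fintype.card_perm, Fintype.card_fin]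

lemma card_fullCycles (N : ℕ) :
    ((univ : Finset (Equiv.Perm (Fin (N+1)))).filter IsFullCycle).card = N.factorial := by
  rw [← card_fix_zero N]
  refine Finset.card_bij'
    (fun s hs => (Equiv.ofBijective (fullMap s)
      (fullMap_bijective (Finset.mem_filter.mp hs).2) : Equiv.Perm (Fin (N+1))))
    (fun g _ => g * (finRotate (N+1)) * g⁻¹) ?_ ?_ ?_ ?_
  · intro s hs
    simp only [Finset.mem_filter, Finset.mem_univ, true_and]
    show fullMap s 0 = 0
    simp [fullMap]
  · intro g hg
    simp only [Finset.mem_filter, Finset.mem_univ, true_and] at hg ⊢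
    show IsFullCycle _
    unfold IsFullCycle
    rw [cycleCount_conj g (finRotate (N+1))]
    exact isFullCycle_finRotate N
  · intro s hs'
    have hs : IsFullCycle s := (Finset.mem_filter.mp hs').2
    apply Equiv.ext
    intro x
    set E := (Equiv.ofBijective (fullMap s) (fullMap_bijective hs) : Equiv.Perm (Fin (N+1)))
      with hEdef
    show E ((finRotate (N+1)) (E⁻¹ x)) = s x
    set a := E.symm x with hadef
    have hx : (s ^ (a : ℕ)) 0 = x := E.apply_symm_apply x
    have hinv : E⁻¹ x = a := rfl
    rw [hinv, finRotate_succ_apply]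
    have hGa1 : E (a + 1) = (s ^ ((a + 1 : Fin (N+1)) : ℕ)) 0 := rfl
    rw [hGa1]
    by_cases hlast : a = Fin.last N
    · rw [Fin.val_add_one, if_pos hlast, pow_zero]
      have hsx : s x = (s ^ (N + 1)) 0 := by
        rw [← hx, hlast, Fin.val_last, ← Equiv.Perm.mul_apply, ← pow_succ']
      have h0 : (s ^ (N + 1)) 0 = 0 := pow_n_zero hs
      rw [hsx, h0]
      rfl
    · rw [Fin.val_add_one, if_neg hlast, pow_succ', Equiv.Perm.mul_apply, hx]
  · intro g hg'
    have hg : g 0 = 0 := (Finset.mem_filter.mp hg').2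
    apply Equiv.ext
    intro a
    show fullMap (g * (finRotate (N+1)) * g⁻¹) a = g a
    show ((g * (finRotate (N+1)) * g⁻¹) ^ (a : ℕ)) 0 = g a
    have hconj : (g * (finRotate (N+1)) * g⁻¹) ^ (a : ℕ)
        = g * (finRotate (N+1)) ^ (a : ℕ) * g⁻¹ := by
      have h1 := map_pow (MulAut.conj g) (finRotate (N+1)) (a : ℕ)
      simp only [MulAut.conj_apply] at h1
      exact h1.symm
    rw [hconj]
    have hg0 : g⁻¹ 0 = 0 := by
      conv_lhs => rw [← hg]
      rw [Equiv.Perm.inv_def, Equiv.symm_apply_apply]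
    rw [Equiv.Perm.mul_apply, Equiv.Perm.mul_apply, hg0,
      finRotate_pow_zero N (a : ℕ) (Nat.lt_succ_iff.mp a.isLt)]


lemma double_sum_fullCycles (N : ℕ) (π : Equiv.Perm (Fin (N+1))) :
    2 * (∑ s ∈ (univ : Finset (Equiv.Perm (Fin (N+1)))).filter IsFullCycle, exceedCount s π)
      = N.factorial * ((univ.filter fun x => π x ≠ x).card) := by
  classical
  have hswap : (∑ s ∈ (univ : Finset (Equiv.Perm (Fin (N+1)))).filter IsFullCycle,
        exceedCount s π)
      = ∑ s ∈ (univ : Finset (Equiv.Perm (Fin (N+1)))).filter IsFullCycle,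
        exceedCount s⁻¹ π := by
    refine Finset.sum_nbij' (fun s => s⁻¹) (fun s => s⁻¹) ?_ ?_ ?_ ?_ ?_
    · intro s hs
      simp only [Finset.mem_filter, Finset.mem_univ, true_and] at hs ⊢
      exact isFullCycle_inv hs
    · intro s hs
      simp only [Finset.mem_filter, Finset.mem_univ, true_and] at hs ⊢
      exact isFullCycle_inv hs
    · intro s _; simp
    · intro s _; simp
    · intro s _; rfl
  have h2 : 2 * (∑ s ∈ (univ : Finset (Equiv.Perm (Fin (N+1)))).filter IsFullCycle,
        exceedCount s π)
      = ∑ s ∈ (univ : Finset (Equiv.Perm (Fin (N+1)))).filter IsFullCycle,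
        (exceedCount s π + exceedCount s⁻¹ π) := by
    rw [Finset.sum_add_distrib, two_mul, ← hswap]
  rw [h2, Finset.sum_congr rfl (fun s hs =>
    exc_add_exc_inv (Finset.mem_filter.mp hs).2 π), Finset.sum_const, card_fullCycles,
    smul_eq_mul]

end TotalExc

open scoped Classical in
/-- For `n ≥ 1`, `m ≤ n` and `k ≥ 1`, the sum over all pairs `(s, π)`,
with `s` an `n`-cycle and `π` a permutation of `[n]` with `k` cycles separating `[m]`, of
the number of exceedances of `(s, π)` equals
`(n-1)! ( binom(n-m, 2) + m(n-m) ) C_m(n-1, k)`. -/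
theorem total_exceedances (n m k : ℕ) [NeZero n] (hm : m ≤ n) (hk : 1 ≤ k) :
    ∑ p ∈ Finset.univ.filter
        (fun p : Equiv.Perm (Fin n) × Equiv.Perm (Fin n) =>
          IsFullCycle p.1 ∧ cycleCount p.2 = k ∧ Separates m p.2),
      exceedCount p.1 p.2 =
    Nat.factorial (n - 1) * (Nat.choose (n - m) 2 + m * (n - m)) * sepCount (n - 1) m k := by
  classical
  obtain ⟨N, rfl⟩ : ∃ N, n = N + 1 := ⟨n - 1, by have := NeZero.ne n; omega⟩
  simp only [Nat.add_sub_cancel]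
  apply Nat.eq_of_mul_eq_mul_left (show 0 < 2 by norm_num)
  have e1 : (∑ p ∈ Finset.univ.filter
        (fun p : Equiv.Perm (Fin (N+1)) × Equiv.Perm (Fin (N+1)) =>
          IsFullCycle p.1 ∧ cycleCount p.2 = k ∧ Separates m p.2),
      exceedCount p.1 p.2)
      = ∑ π ∈ univ.filter (fun σ : Equiv.Perm (Fin (N+1)) =>
            cycleCount σ = k ∧ Separates m σ),
          ∑ s ∈ univ.filter (fun s : Equiv.Perm (Fin (N+1)) => IsFullCycle s),
            exceedCount s π := by
    rw [Finset.sum_filter, Fintype.sum_prod_type, Finset.sum_comm, Finset.sum_filter]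
    refine Finset.sum_congr rfl (fun π _ => ?_)
    rw [Finset.sum_filter]
    by_cases hP2 : cycleCount π = k ∧ Separates m π
    · rw [if_pos hP2]
      refine Finset.sum_congr rfl (fun s _ => ?_)
      by_cases hP1 : IsFullCycle s
      · rw [if_pos ⟨hP1, hP2⟩, if_pos hP1]
      · rw [if_neg (fun hc => hP1 hc.1), if_neg hP1]
    · rw [if_neg hP2]
      exact Finset.sum_eq_zero (fun s _ => by rw [if_neg (fun hc => hP2 hc.2)])
  rw [e1, Finset.mul_sum]
  rw [Finset.sum_congr rfl (fun π _ => TotalExc.double_sum_fullCycles N π)]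
  rw [← Finset.mul_sum, TotalExc.sum_nonfixed N m k hm]
  -- now both sides are closed-form products
  have hcoef : (N + 1 - m) * (N + m) = 2 * (Nat.choose (N + 1 - m) 2 + m * (N + 1 - m)) := by
    set j := N + 1 - m with hj
    have h2 : Nat.choose j 2 = j * (j - 1) / 2 := Nat.choose_two_right j
    have hdvd : 2 ∣ j * (j - 1) := by
      rcases Nat.even_or_odd j with he | ho
      · exact Dvd.dvd.mul_right he.two_dvd (j - 1)
      · have he1 : Even (j - 1) := by
          obtain ⟨r, hr⟩ := ho
          exact ⟨r, by omega⟩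
        exact Dvd.dvd.mul_left he1.two_dvd j
    have h3 : 2 * (j * (j - 1) / 2) = j * (j - 1) := Nat.mul_div_cancel' hdvd
    rw [h2]
    rcases Nat.eq_zero_or_pos j with h0 | hpos
    · rw [h0]; simp
    · have hNm : N + m = (j - 1) + 2 * m := by omega
      rw [hNm, Nat.mul_add 2, h3, Nat.mul_add j]
      ring
  calc N.factorial * ((N + 1 - m) * (N + m) * sepCount N m k)
      = ((N + 1 - m) * (N + m)) * (N.factorial * sepCount N m k) := by ring
    _ = (2 * (Nat.choose (N + 1 - m) 2 + m * (N + 1 - m)))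
          * (N.factorial * sepCount N m k) := by rw [hcoef]
    _ = 2 * (N.factorial * (Nat.choose (N + 1 - m) 2 + m * (N + 1 - m))
          * sepCount N m k) := by ring
end
end

section
/- Let 1 ≤ m ≤ n and m ≤ k. Then C_m(n, k) = Σ_{d=0}^{n−m} binom(n−m, d) · binom(d+m−1, d) · d! · C(n−m−d, k−m), where the d-th term counts the permutations in which exactly d of the elements of [n] \ [m] lie in the m cycles containing 1, …, m. -/
open Equiv Finset

noncomputable section

set_option linter.unusedSectionVars false

namespace SepProof

open Equiv.Perm

variable {α : Type*} [DecidableEq α] [Fintype α]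

def scSetoid (σ : Perm α) : Setoid α :=
  ⟨σ.SameCycle, ⟨fun x => SameCycle.refl σ x, fun h => h.symm, fun h h' => h.trans h'⟩⟩

def ncyc (σ : Perm α) : ℕ := Nat.card (Quotient (scSetoid σ))

lemma eq_of_sameCycle_fixed {σ : Perm α} {x y : α} (hx : σ x = x) (h : σ.SameCycle x y) :
    y = x := by
  obtain ⟨i, hi⟩ := h
  rw [← hi, zpow_apply_eq_self_of_apply_eq_self hx]

lemma ncyc_eq (σ : Perm α) :
    ncyc σ = σ.cycleType.card + (univ.filter fun x => σ x = x).card := by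
  classical
  have hmem : ∀ c ∈ σ.cycleFactorsFinset, c.support.Nonempty := by
    intro c hc
    obtain ⟨x, hx, -⟩ := (mem_cycleFactorsFinset_iff.mp hc).1
    exact ⟨x, mem_support.mpr hx⟩
  set g : {c // c ∈ σ.cycleFactorsFinset} ⊕ {x // σ x = x} → Quotient (scSetoid σ) :=
    fun s => match s with
      | Sum.inl ⟨c, hc⟩ => Quotient.mk (scSetoid σ) (hmem c hc).choose
      | Sum.inr ⟨x, _⟩ => Quotient.mk (scSetoid σ) x with hg
  have key : ∀ (c : Perm α) (hc : c ∈ σ.cycleFactorsFinset),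
      σ.cycleOf (hmem c hc).choose = c ∧ σ ((hmem c hc).choose) ≠ (hmem c hc).choose := by
    intro c hc
    have hx := (hmem c hc).choose_spec
    refine ⟨(cycle_is_cycleOf hx hc).symm, ?_⟩
    have h2 := (mem_cycleFactorsFinset_iff.mp hc).2 _ hx
    rw [← h2]
    exact mem_support.mp hx
  have hbij : Function.Bijective g := by
    constructor
    · rintro (⟨c, hc⟩ | ⟨x, hx⟩) (⟨c', hc'⟩ | ⟨x', hx'⟩) h <;>
        simp only [hg, Quotient.eq] at h
      · obtain ⟨h1, -⟩ := key c hc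
        obtain ⟨h1', -⟩ := key c' hc'
        have : σ.cycleOf (hmem c hc).choose = σ.cycleOf (hmem c' hc').choose :=
          SameCycle.cycleOf_eq h
        simp only [Sum.inl.injEq, Subtype.mk.injEq]
        rw [← h1, ← h1', this]
      · have hpe : (hmem c hc).choose = x' := eq_of_sameCycle_fixed hx' h.symm
        exact absurd (by rw [hpe]; exact hx') (key c hc).2
      · have hpe : (hmem c' hc').choose = x := eq_of_sameCycle_fixed hx h
        exact absurd (by rw [hpe]; exact hx) (key c' hc').2
      · simp only [Sum.inr.injEq, Subtype.mk.injEq]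
        exact (eq_of_sameCycle_fixed hx h).symm
    · intro q
      induction q using Quotient.ind with
      | _ x =>
        by_cases hx : σ x = x
        · exact ⟨Sum.inr ⟨x, hx⟩, rfl⟩
        · have hxs : x ∈ σ.support := mem_support.mpr hx
          have hc : σ.cycleOf x ∈ σ.cycleFactorsFinset :=
            cycleOf_mem_cycleFactorsFinset_iff.mpr hxs
          refine ⟨Sum.inl ⟨σ.cycleOf x, hc⟩, ?_⟩
          have hpt := (hmem _ hc).choose_spec
          have : σ.SameCycle x (hmem _ hc).choose :=
            (mem_support_cycleOf_iff.mp hpt).1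
          exact Quotient.sound this.symm
  have hcard := Nat.card_congr (Equiv.ofBijective g hbij)
  rw [ncyc, ← hcard, Nat.card_sum, Nat.card_eq_fintype_card, Nat.card_eq_fintype_card,
    Fintype.card_coe, Fintype.card_subtype, cycleType_def, Multiset.card_map]
  rfl


lemma sameCycle_of_pow {β : Type*} {σ : Perm β} {a b : β} {k : ℕ} (h : (σ ^ k) a = b) :
    σ.SameCycle a b := ⟨k, by simpa using h⟩

-- basic application lemmas
lemma ins_none (τ : Perm α) (x : α) :
    (swap none (some x) * τ.optionCongr) none = some x := by
  simp [Perm.mul_apply, Equiv.optionCongr]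

lemma ins_some (τ : Perm α) (x a : α) :
    (swap none (some x) * τ.optionCongr) (some a)
      = if τ a = x then none else some (τ a) := by
  by_cases h : τ a = x
  · simp [Perm.mul_apply, Equiv.optionCongr, h]
  · simp only [Perm.mul_apply, Equiv.optionCongr, coe_fn_mk, Option.map_some]
    rw [swap_apply_of_ne_of_ne (by simp) (by simpa using h), if_neg h]

lemma ins_step (τ : Perm α) (x a : α) :
    (swap none (some x) * τ.optionCongr).SameCycle (some a) (some (τ a)) := by
  set σ' := swap none (some x) * τ.optionCongr with hσ'
  by_cases h : τ a = x
  · refine sameCycle_of_pow (k := 2) ?_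
    have h1 : σ' (some a) = none := by rw [ins_some, if_pos h]
    calc (σ' ^ 2) (some a) = σ' (σ' (some a)) := by rw [pow_succ, pow_one]; rfl
    _ = some (τ a) := by rw [h1, ins_none, h]
  · exact sameCycle_of_pow (k := 1) (by rw [pow_one, ins_some, if_neg h])

lemma ins_pow_step (τ : Perm α) (x : α) (k : ℕ) (a : α) :
    (swap none (some x) * τ.optionCongr).SameCycle (some a) (some ((τ ^ k) a)) := by
  induction k generalizing a with
  | zero => exact pow_zero τ ▸ SameCycle.refl _ _
  | succ k ih =>
    have h1 : (τ ^ (k + 1)) a = (τ ^ k) (τ a) := by rw [pow_succ]; rfl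
    rw [h1]
    exact (ins_step τ x a).trans (ih (τ a))

lemma ins_sameCycle_of (τ : Perm α) (x : α) {a b : α} (h : τ.SameCycle a b) :
    (swap none (some x) * τ.optionCongr).SameCycle (some a) (some b) := by
  obtain ⟨k, -, rfl⟩ := h.exists_pow_eq'
  exact ins_pow_step τ x k a

lemma ins_sameCycle_to (τ : Perm α) (x : α) {a b : α} {k : ℕ}
    (h : ((swap none (some x) * τ.optionCongr) ^ k) (some a) = some b) :
    τ.SameCycle a b := by
  set σ' := swap none (some x) * τ.optionCongr with hσ'
  induction k using Nat.strong_induction_on generalizing a with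
  | _ k ih =>
    match k with
    | 0 => simp only [pow_zero, Perm.one_apply, Option.some.injEq] at h; exact h ▸ SameCycle.refl τ a
    | 1 =>
      rw [pow_one, ins_some] at h
      by_cases hx : τ a = x
      · rw [if_pos hx] at h; exact absurd h (by simp)
      · rw [if_neg hx] at h
        exact sameCycle_of_pow (k := 1) (by rw [pow_one]; exact Option.some.inj h)
    | (k + 2) =>
      have hsplit : ∀ z, (σ' ^ (k + 2)) z = (σ' ^ (k + 1)) (σ' z) := by
        intro z; rw [pow_succ]; rfl
      by_cases hx : τ a = x
      · have h1 : σ' (some a) = none := by rw [hσ', ins_some, if_pos hx]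
        have h2 : (σ' ^ (k + 1)) none = some b := by rw [← h1, ← hsplit, h]
        have h3 : (σ' ^ k) (some x) = some b := by
          have : (σ' ^ (k+1)) none = (σ' ^ k) (σ' none) := by rw [pow_succ]; rfl
          rw [this, hσ', ins_none] at h2; exact h2
        have h4 : τ.SameCycle x b := ih k (by omega) h3
        exact (sameCycle_of_pow (k := 1) (by rw [pow_one]; exact hx)).trans h4
      · have h1 : σ' (some a) = some (τ a) := by rw [hσ', ins_some, if_neg hx]
        have h2 : (σ' ^ (k + 1)) (some (τ a)) = some b := by rw [← h1, ← hsplit, h]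
        exact (sameCycle_of_pow (k := 1) (pow_one τ ▸ rfl)).trans (ih (k+1) (by omega) h2)

lemma ins_sameCycle_iff (τ : Perm α) (x : α) (a b : α) :
    (swap none (some x) * τ.optionCongr).SameCycle (some a) (some b) ↔ τ.SameCycle a b := by
  constructor
  · intro h
    obtain ⟨k, -, hk⟩ := h.exists_pow_eq'
    exact ins_sameCycle_to τ x hk
  · exact ins_sameCycle_of τ x

lemma ins_sameCycle_none (τ : Perm α) (x : α) :
    (swap none (some x) * τ.optionCongr).SameCycle none (some x) :=
  sameCycle_of_pow (k := 1) (by rw [pow_one, ins_none])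

lemma optionCongr_pow_apply (τ : Perm α) (k : ℕ) (z : Option α) :
    (τ.optionCongr ^ k) z = Option.map (τ ^ k) z := by
  induction k generalizing z with
  | zero => cases z <;> simp
  | succ k ih =>
    have h1 : (τ.optionCongr ^ (k+1)) z = (τ.optionCongr ^ k) (τ.optionCongr z) := by
      rw [pow_succ]; rfl
    rw [h1, show (τ.optionCongr) z = Option.map τ z from rfl, ih]
    cases z <;> simp [pow_succ]

lemma oc_sameCycle_iff (τ : Perm α) (a b : α) :
    Equiv.Perm.SameCycle τ.optionCongr (some a) (some b) ↔ τ.SameCycle a b := by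
  constructor
  · intro h
    obtain ⟨k, -, hk⟩ := h.exists_pow_eq'
    rw [optionCongr_pow_apply] at hk
    exact sameCycle_of_pow (Option.some.inj (by simpa using hk))
  · intro h
    obtain ⟨k, -, rfl⟩ := h.exists_pow_eq'
    exact sameCycle_of_pow (k := k) (by rw [optionCongr_pow_apply]; rfl)

lemma oc_not_sameCycle_none (τ : Perm α) (a : α) :
    ¬ Equiv.Perm.SameCycle τ.optionCongr none (some a) := by
  intro h
  obtain ⟨k, -, hk⟩ := h.exists_pow_eq'
  rw [optionCongr_pow_apply] at hk
  simp at hk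


lemma ncyc_ins (τ : Perm α) (x : α) :
    ncyc (swap none (some x) * τ.optionCongr) = ncyc τ := by
  classical
  set σ' := swap none (some x) * τ.optionCongr with hσ'
  set g : Quotient (scSetoid τ) → Quotient (scSetoid σ') :=
    Quotient.lift (fun a => Quotient.mk (scSetoid σ') (some a))
      (fun a b h => Quotient.sound ((ins_sameCycle_iff τ x a b).mpr h)) with hg
  have hbij : Function.Bijective g := by
    constructor
    · intro q q'
      induction q using Quotient.ind with | _ a =>
      induction q' using Quotient.ind with | _ b =>
      intro h
      exact Quotient.sound ((ins_sameCycle_iff τ x a b).mp (Quotient.eq.mp h))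
    · intro q
      induction q using Quotient.ind with | _ z =>
      match z with
      | some a => exact ⟨Quotient.mk _ a, rfl⟩
      | none => exact ⟨Quotient.mk _ x, Quotient.sound (ins_sameCycle_none τ x).symm⟩
  exact (Nat.card_congr (Equiv.ofBijective g hbij)).symm

lemma ncyc_oc (τ : Perm α) : ncyc (τ.optionCongr : Perm (Option α)) = ncyc τ + 1 := by
  classical
  set g : Option (Quotient (scSetoid τ)) → Quotient (scSetoid (τ.optionCongr : Perm (Option α))) :=
    fun o => match o with
    | none => Quotient.mk _ (none : Option α)
    | some q => Quotient.lift (fun a => Quotient.mk (scSetoid (τ.optionCongr : Perm (Option α))) (some a))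
        (fun a b h => Quotient.sound ((oc_sameCycle_iff τ a b).mpr h)) q with hg
  have hbij : Function.Bijective g := by
    constructor
    · rintro (_ | q) (_ | q')
      · intro; rfl
      · induction q' using Quotient.ind with | _ b =>
        intro h
        exact absurd (Quotient.eq.mp h) (oc_not_sameCycle_none τ b)
      · induction q using Quotient.ind with | _ a =>
        intro h
        exact absurd (Quotient.eq.mp h).symm (oc_not_sameCycle_none τ a)
      · induction q using Quotient.ind with | _ a =>
        induction q' using Quotient.ind with | _ b =>
        intro h
        exact congrArg some (Quotient.sound ((oc_sameCycle_iff τ a b).mp (Quotient.eq.mp h)))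
    · intro q
      induction q using Quotient.ind with | _ z =>
      match z with
      | some a => exact ⟨some (Quotient.mk _ a), rfl⟩
      | none => exact ⟨none, rfl⟩
  have := (Nat.card_congr (Equiv.ofBijective g hbij)).symm
  rw [ncyc, this]
  haveI : Fintype (Quotient (scSetoid τ)) := Fintype.ofFinite _
  rw [Nat.card_eq_fintype_card, Fintype.card_option, ncyc, Nat.card_eq_fintype_card]

variable {β : Type*} [DecidableEq β] [Fintype β]

lemma permCongr_pow (e : α ≃ β) (τ : Perm α) (k : ℕ) :
    (e.permCongr τ) ^ k = e.permCongr (τ ^ k) := by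
  induction k with
  | zero => ext z; simp
  | succ k ih => rw [pow_succ, pow_succ, ih]; ext z; simp [Perm.mul_apply]

lemma permCongr_sameCycle (e : α ≃ β) (τ : Perm α) (a b : α) :
    (e.permCongr τ).SameCycle (e a) (e b) ↔ τ.SameCycle a b := by
  constructor
  · intro h
    obtain ⟨k, -, hk⟩ := h.exists_pow_eq'
    rw [permCongr_pow] at hk
    simp only [permCongr_apply, symm_apply_apply] at hk
    exact ⟨k, by simpa using e.injective hk⟩
  · intro h
    obtain ⟨k, -, rfl⟩ := h.exists_pow_eq'
    exact ⟨k, by rw [zpow_natCast, permCongr_pow]; simp⟩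

lemma ncyc_permCongr (e : α ≃ β) (τ : Perm α) : ncyc (e.permCongr τ) = ncyc τ := by
  classical
  set g : Quotient (scSetoid τ) → Quotient (scSetoid (e.permCongr τ)) :=
    Quotient.lift (fun a => Quotient.mk (scSetoid (e.permCongr τ)) (e a))
      (fun a b h => Quotient.sound ((permCongr_sameCycle e τ a b).mpr h)) with hg
  have hbij : Function.Bijective g := by
    constructor
    · intro q q'
      induction q using Quotient.ind with | _ a =>
      induction q' using Quotient.ind with | _ b =>
      intro h
      exact Quotient.sound ((permCongr_sameCycle e τ a b).mp (Quotient.eq.mp h))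
    · intro q
      induction q using Quotient.ind with | _ z =>
      refine ⟨Quotient.mk _ (e.symm z), ?_⟩
      show Quotient.mk _ (e (e.symm z)) = _
      rw [e.apply_symm_apply]
  exact (Nat.card_congr (Equiv.ofBijective g hbij)).symm


lemma cycleCount_eq_ncyc {n : ℕ} (σ : Perm (Fin n)) : cycleCount σ = ncyc σ :=
  (ncyc_eq σ).symm

/-- The decomposition of a permutation of `Fin (n+1)` by the last element. -/
def decomp (n : ℕ) : Perm (Fin (n + 1)) ≃ Option (Fin n) × Perm (Fin n) :=
  (Equiv.permCongr finSuccEquivLast).trans Equiv.Perm.decomposeOption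

lemma decomp_symm (n : ℕ) (p : Option (Fin n)) (τ : Perm (Fin n)) :
    (decomp n).symm (p, τ) = Equiv.permCongr finSuccEquivLast.symm
      (swap none p * τ.optionCongr) := by
  simp [decomp, Equiv.Perm.decomposeOption]

lemma cycleCount_decomp_symm_none (n : ℕ) (τ : Perm (Fin n)) :
    cycleCount ((decomp n).symm (none, τ)) = cycleCount τ + 1 := by
  rw [decomp_symm, cycleCount_eq_ncyc, cycleCount_eq_ncyc, ncyc_permCongr]
  rw [show swap (none : Option (Fin n)) none = 1 by rw [swap_self]; rfl, one_mul, ncyc_oc]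

lemma cycleCount_decomp_symm_some (n : ℕ) (x : Fin n) (τ : Perm (Fin n)) :
    cycleCount ((decomp n).symm (some x, τ)) = cycleCount τ := by
  rw [decomp_symm, cycleCount_eq_ncyc, cycleCount_eq_ncyc, ncyc_permCongr, ncyc_ins]

lemma decomp_sameCycle (n : ℕ) (p : Option (Fin n)) (τ : Perm (Fin n)) (a b : Fin n) :
    ((decomp n).symm (p, τ)).SameCycle a.castSucc b.castSucc ↔ τ.SameCycle a b := by
  rw [decomp_symm]
  have ha : finSuccEquivLast.symm (some a) = a.castSucc := finSuccEquivLast_symm_some a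
  have hb : finSuccEquivLast.symm (some b) = b.castSucc := finSuccEquivLast_symm_some b
  rw [← ha, ← hb, permCongr_sameCycle]
  cases p with
  | none => rw [show swap (none : Option (Fin n)) none = 1 by rw [swap_self]; rfl, one_mul]
            exact oc_sameCycle_iff τ a b
  | some x => exact ins_sameCycle_iff τ x a b

lemma decomp_separates {n m : ℕ} (hmn : m ≤ n) (p : Option (Fin n)) (τ : Perm (Fin n)) :
    Separates m ((decomp n).symm (p, τ)) ↔ Separates m τ := by
  constructor
  · intro H i j hi hj hij hsc
    refine H i.castSucc j.castSucc (by simpa using hi) (by simpa using hj)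
      (by simpa [Fin.castSucc_inj] using hij) ?_
    exact (decomp_sameCycle n p τ i j).mpr hsc
  · intro H i j hi hj hij hsc
    have hi' : (i : ℕ) < n := lt_of_lt_of_le hi hmn
    have hj' : (j : ℕ) < n := lt_of_lt_of_le hj hmn
    have hia : i = (⟨(i : ℕ), hi'⟩ : Fin n).castSucc := by ext; simp
    have hja : j = (⟨(j : ℕ), hj'⟩ : Fin n).castSucc := by ext; simp
    refine H ⟨(i : ℕ), hi'⟩ ⟨(j : ℕ), hj'⟩ hi hj ?_ ?_
    · intro hcon
      exact hij (by rw [hia, hja, hcon])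
    · rw [hia, hja] at hsc
      exact (decomp_sameCycle n p τ _ _).mp hsc

lemma nat_card_prod {A B : Type*} [Fintype A] [Finite B] (P : A → B → Prop) :
    Nat.card {x : A × B // P x.1 x.2} = ∑ a : A, Nat.card {b : B // P a b} := by
  classical
  haveI : ∀ a : A, Fintype {b : B // P a b} := fun a => Fintype.ofFinite _
  rw [Nat.card_congr (Equiv.subtypeProdEquivSigmaSubtype P), Nat.card_eq_fintype_card,
    Fintype.card_sigma]
  exact Finset.sum_congr rfl fun a _ => (Nat.card_eq_fintype_card).symm

lemma sep_rec (n m k : ℕ) (hmn : m ≤ n) :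
    sepCount (n + 1) m (k + 1) = sepCount n m k + n * sepCount n m (k + 1) := by
  classical
  have step1 : sepCount (n + 1) m (k + 1) =
      Nat.card {q : Option (Fin n) × Perm (Fin n) //
        cycleCount ((decomp n).symm (q.1, q.2)) = k + 1 ∧
          Separates m ((decomp n).symm (q.1, q.2))} := by
    refine Nat.card_congr (Equiv.subtypeEquiv (decomp n) fun σ => ?_)
    rw [show ((decomp n).symm ((decomp n σ).1, (decomp n σ).2)) = σ by simp]
  rw [step1, nat_card_prod (fun p τ =>
    cycleCount ((decomp n).symm (p, τ)) = k + 1 ∧ Separates m ((decomp n).symm (p, τ)))]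
  rw [Fintype.sum_option]
  have hnone : Nat.card {τ : Perm (Fin n) //
      cycleCount ((decomp n).symm (none, τ)) = k + 1 ∧ Separates m ((decomp n).symm (none, τ))}
      = sepCount n m k := by
    refine Nat.card_congr (Equiv.subtypeEquiv (Equiv.refl _) fun τ => ?_)
    rw [cycleCount_decomp_symm_none, decomp_separates hmn]
    simp
  have hsome : ∀ x : Fin n, Nat.card {τ : Perm (Fin n) //
      cycleCount ((decomp n).symm (some x, τ)) = k + 1 ∧
        Separates m ((decomp n).symm (some x, τ))} = sepCount n m (k + 1) := by
    intro x
    refine Nat.card_congr (Equiv.subtypeEquiv (Equiv.refl _) fun τ => ?_)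
    rw [cycleCount_decomp_symm_some, decomp_separates hmn]
    simp
  rw [hnone]
  rw [Finset.sum_congr rfl fun x _ => hsome x, Finset.sum_const, card_univ, Fintype.card_fin,
    smul_eq_mul]


lemma cycleCount_one (n : ℕ) : cycleCount (1 : Perm (Fin n)) = n := by
  rw [cycleCount, cycleType_one]
  simp

lemma le_ncyc_of_separates {n m : ℕ} (hmn : m ≤ n) {σ : Perm (Fin n)}
    (hsep : Separates m σ) : m ≤ ncyc σ := by
  classical
  set f : Fin m → Quotient (scSetoid σ) :=
    fun i => Quotient.mk (scSetoid σ) (⟨(i : ℕ), lt_of_lt_of_le i.2 hmn⟩ : Fin n) with hf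
  have hinj : Function.Injective f := by
    intro i j h
    by_contra hij
    refine hsep ⟨(i : ℕ), lt_of_lt_of_le i.2 hmn⟩ ⟨(j : ℕ), lt_of_lt_of_le j.2 hmn⟩
      i.2 j.2 ?_ (Quotient.eq.mp h)
    intro hcon
    exact hij (Fin.ext (by simpa using congrArg Fin.val hcon))
  calc m = Nat.card (Fin m) := by simp
  _ ≤ Nat.card (Quotient (scSetoid σ)) := Nat.card_le_card_of_injective f hinj

lemma sepCount_eq_zero {n m k : ℕ} (hmn : m ≤ n) (hk : k < m) : sepCount n m k = 0 := by
  rw [sepCount]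
  have : IsEmpty {σ : Perm (Fin n) // cycleCount σ = k ∧ Separates m σ} := by
    refine ⟨fun ⟨σ, h1, h2⟩ => ?_⟩
    have := le_ncyc_of_separates hmn h2
    rw [← cycleCount_eq_ncyc, h1] at this
    omega
  exact Nat.card_of_isEmpty

lemma eq_one_of_separates {m : ℕ} {σ : Perm (Fin m)} (hsep : Separates m σ) : σ = 1 := by
  have hfix : ∀ a : Fin m, σ a = a := by
    intro a
    by_contra hne
    exact hsep a (σ a) a.2 (σ a).2 (fun h => hne h.symm) ⟨1, by simp⟩
  exact Equiv.ext hfix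

lemma separates_one (n m : ℕ) : Separates m (1 : Perm (Fin n)) := by
  intro i j _ _ hij hsc
  exact hij (sameCycle_one.mp hsc ▸ rfl)

lemma sepCount_diag (m k : ℕ) : sepCount m m k = if k = m then 1 else 0 := by
  split_ifs with h
  · rw [sepCount, Nat.card_eq_one_iff_unique]
    refine ⟨⟨fun a b => ?_⟩, ⟨⟨1, by rw [cycleCount_one, h], separates_one m m⟩⟩⟩
    obtain ⟨σ, -, h2⟩ := a
    obtain ⟨σ', -, h2'⟩ := b
    exact Subtype.ext ((eq_one_of_separates h2).trans (eq_one_of_separates h2').symm)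
  · rw [sepCount]
    have : IsEmpty {σ : Perm (Fin m) // cycleCount σ = k ∧ Separates m σ} := by
      refine ⟨fun ⟨σ, h1, h2⟩ => ?_⟩
      rw [eq_one_of_separates h2, cycleCount_one] at h1
      exact h (h1.symm)
    exact Nat.card_of_isEmpty

lemma stirlingCycle_eq_sepCount (N k : ℕ) : stirlingCycle N k = sepCount N 0 k := by
  refine Nat.card_congr (Equiv.subtypeEquiv (Equiv.refl _) fun σ => ?_)
  simp only [Equiv.refl_apply]
  constructor
  · exact fun h => ⟨h, fun i j hi => absurd hi (Nat.not_lt_zero _)⟩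
  · exact fun h => h.1

lemma stirlingCycle_zero (k : ℕ) : stirlingCycle 0 k = if k = 0 then 1 else 0 := by
  have hone : ∀ σ : Perm (Fin 0), σ = 1 := fun σ => Subsingleton.elim σ 1
  split_ifs with h
  · rw [stirlingCycle, Nat.card_eq_one_iff_unique]
    refine ⟨⟨fun a b => ?_⟩, ⟨⟨1, by rw [cycleCount_one, h]⟩⟩⟩
    obtain ⟨σ, -⟩ := a
    obtain ⟨σ', -⟩ := b
    exact Subtype.ext ((hone σ).trans (hone σ').symm)
  · rw [stirlingCycle]
    have : IsEmpty {σ : Perm (Fin 0) // cycleCount σ = k} := by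
      refine ⟨fun ⟨σ, h1⟩ => ?_⟩
      rw [hone σ, cycleCount_one] at h1
      exact h h1.symm
    exact Nat.card_of_isEmpty

lemma stirlingCycle_succ_zero (N : ℕ) : stirlingCycle (N + 1) 0 = 0 := by
  rw [stirlingCycle]
  have : IsEmpty {σ : Perm (Fin (N + 1)) // cycleCount σ = 0} := by
    refine ⟨fun ⟨σ, h1⟩ => ?_⟩
    have h2 : 0 < ncyc σ := Nat.card_pos
    rw [← cycleCount_eq_ncyc, h1] at h2
    omega
  exact Nat.card_of_isEmpty

lemma stirling_rec (n k : ℕ) :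
    stirlingCycle (n + 1) (k + 1) = stirlingCycle n k + n * stirlingCycle n (k + 1) := by
  rw [stirlingCycle_eq_sepCount, stirlingCycle_eq_sepCount, stirlingCycle_eq_sepCount]
  exact sep_rec n 0 k (Nat.zero_le n)


/-- rising factorial coefficient `m (m+1) ⋯ (m+d-1)`. -/
def rfac (m d : ℕ) : ℕ := (d + m - 1).choose d * d.factorial

lemma rfac_zero (m : ℕ) : rfac m 0 = 1 := by simp [rfac]

lemma rfac_succ (m : ℕ) (hm : 1 ≤ m) (d : ℕ) : rfac m (d + 1) = (m + d) * rfac m d := by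
  have h1 : (d + m).choose (d + 1) * (d + 1) = (d + m) * (d + m - 1).choose d := by
    have h := Nat.add_one_mul_choose_eq (d + m - 1) d
    rw [show d + m - 1 + 1 = d + m by omega] at h
    simpa [Nat.succ_eq_add_one] using h.symm
  unfold rfac
  rw [show d + 1 + m - 1 = d + m by omega, Nat.factorial_succ, ← mul_assoc, h1]
  ring

def R (m N K : ℕ) : ℕ := ∑ d ∈ Finset.range (N + 1), N.choose d * rfac m d * stirlingCycle (N - d) K

lemma R_K0 (m N : ℕ) : R m N 0 = rfac m N := by
  rw [R, Finset.sum_eq_single N]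
  · rw [Nat.sub_self, stirlingCycle_zero, if_pos rfl, Nat.choose_self, one_mul, mul_one]
  · intro d hd hdne
    have hdlt : d < N := by
      have := Finset.mem_range.mp hd
      omega
    obtain ⟨e, he⟩ : ∃ e, N - d = e + 1 := ⟨N - d - 1, by omega⟩
    rw [he, stirlingCycle_succ_zero, mul_zero]
  · intro h
    exact absurd (Finset.self_mem_range_succ N) h

lemma R_step (m N K : ℕ) (hm : 1 ≤ m) :
    R m (N + 1) (K + 1) = R m N K + (m + N) * R m N (K + 1) := by
  have hsplit : R m (N + 1) (K + 1) =
      (∑ d ∈ Finset.range (N + 2), N.choose d * rfac m d * stirlingCycle (N + 1 - d) (K + 1)) +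
      ∑ d ∈ Finset.range (N + 2),
        (match d with
          | 0 => 0
          | e + 1 => N.choose e * rfac m (e + 1) * stirlingCycle (N - e) (K + 1)) := by
    rw [R, ← Finset.sum_add_distrib]
    refine Finset.sum_congr rfl fun d _ => ?_
    match d with
    | 0 => simp
    | e + 1 =>
      rw [Nat.choose_succ_succ, show N + 1 - (e + 1) = N - e by omega]
      ring
  have hA : (∑ d ∈ Finset.range (N + 2), N.choose d * rfac m d * stirlingCycle (N + 1 - d) (K + 1))
      = ∑ d ∈ Finset.range (N + 1),
          N.choose d * rfac m d * (stirlingCycle (N - d) K + (N - d) * stirlingCycle (N - d) (K + 1)) := by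
    rw [Finset.sum_range_succ, Nat.choose_succ_self, zero_mul, zero_mul, add_zero]
    refine Finset.sum_congr rfl fun d hd => ?_
    have hdle : d ≤ N := by have := Finset.mem_range.mp hd; omega
    rw [show N + 1 - d = (N - d) + 1 by omega, stirling_rec]
  have hB : (∑ d ∈ Finset.range (N + 2),
        (match d with
          | 0 => 0
          | e + 1 => N.choose e * rfac m (e + 1) * stirlingCycle (N - e) (K + 1)))
      = ∑ d ∈ Finset.range (N + 1), N.choose d * ((m + d) * rfac m d) * stirlingCycle (N - d) (K + 1) := by
    rw [Finset.sum_range_succ']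
    simp only [rfac_succ m hm]
    rfl
  rw [hsplit, hA, hB, R, R, mul_sum, ← Finset.sum_add_distrib, ← Finset.sum_add_distrib]
  refine Finset.sum_congr rfl fun d hd => ?_
  have hdle : d ≤ N := by have := Finset.mem_range.mp hd; omega
  have hkey : (N - d) + (m + d) = m + N := by omega
  rw [← hkey]
  ring

lemma main_aux (m : ℕ) (hm : 1 ≤ m) : ∀ N K, sepCount (m + N) m (m + K) = R m N K := by
  intro N
  induction N with
  | zero =>
    intro K
    rw [Nat.add_zero, sepCount_diag, R, Finset.sum_range_one, Nat.choose_zero_right, one_mul,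
      rfac_zero, one_mul, Nat.sub_zero, stirlingCycle_zero]
    by_cases h : K = 0
    · rw [if_pos h, if_pos (by omega)]
    · rw [if_neg h, if_neg (by omega)]
  | succ N ih =>
    intro K
    have hrec := sep_rec (m + N) m (m + K - 1) (Nat.le_add_right m N)
    rw [show m + K - 1 + 1 = m + K by omega] at hrec
    rw [show m + (N + 1) = (m + N) + 1 by omega, hrec]
    match K with
    | 0 =>
      rw [show m + 0 - 1 = m - 1 by omega, sepCount_eq_zero (Nat.le_add_right m N) (by omega),
        ih 0, R_K0, R_K0, rfac_succ m hm, zero_add]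
    | K + 1 =>
      rw [show m + (K + 1) - 1 = m + K by omega, ih K, ih (K + 1), R_step m N K hm]


end SepProof

/-- For `1 ≤ m ≤ n` and `m ≤ k`:
`C_m(n, k) = Σ_{d=0}^{n-m} binom(n-m, d) binom(d+m-1, d) d! C(n-m-d, k-m)`. -/
theorem sepCount_eq_sum_stirling (n m k : ℕ) (hm1 : 1 ≤ m) (hmn : m ≤ n) (hmk : m ≤ k) :
    sepCount n m k =
      ∑ d ∈ Finset.range (n - m + 1),
        Nat.choose (n - m) d * Nat.choose (d + m - 1) d * Nat.factorial d *
          stirlingCycle (n - m - d) (k - m) := by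
  have h1 : sepCount n m k = SepProof.R m (n - m) (k - m) := by
    rw [show n = m + (n - m) by omega, show k = m + (k - m) by omega] at *
    rw [show m + (n - m) - m = n - m by omega, show m + (k - m) - m = k - m by omega]
    exact SepProof.main_aux m hm1 _ _
  rw [h1, SepProof.R]
  refine Finset.sum_congr rfl fun d _ => ?_
  rw [SepProof.rfac]
  ring
end
end

section
/- Let n ≥ 2 and 1 ≤ m ≤ n with n − m odd. Then Σ_{k ≡ n (mod 2)} C_m(n+1, k) = (n+m)(n+1−m)(n−1)! / (2·m!), where the sum is over all k ≥ 1 with k congruent to n modulo 2. -/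
open Equiv Finset

noncomputable section

set_option maxHeartbeats 1000000

instance sepDec {N m : ℕ} (σ : Equiv.Perm (Fin N)) : Decidable (Separates m σ) :=
  decidable_of_iff (∀ i j : Fin N, (i:ℕ) < m → (j:ℕ) < m → i ≠ j → ¬ σ.SameCycle i j) Iff.rfl

section core
set_option linter.unusedSectionVars false
variable {α : Type*} [DecidableEq α] [Fintype α]

lemma decompose_apply_some (σ : Equiv.Perm α) (i : Option α) (z : α) :
    (Equiv.Perm.decomposeOption.symm (i, σ)) (some z)
      = if some (σ z) = i then none else some (σ z) := by
  rcases i with _ | p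
  · simp
  · by_cases h : σ z = p <;>
      simp [Equiv.Perm.decomposeOption, Equiv.swap_apply_of_ne_of_ne, h,
        Equiv.swap_apply_def]

lemma decompose_apply_none (σ : Equiv.Perm α) (i : Option α) :
    (Equiv.Perm.decomposeOption.symm (i, σ)) none = i := by
  simp [Equiv.Perm.decomposeOption, Equiv.swap_apply_def]

lemma sameCycle_step (σ : Equiv.Perm α) (i : Option α) (z : α) :
    (Equiv.Perm.decomposeOption.symm (i, σ)).SameCycle (some z) (some (σ z)) := by
  by_cases h : some (σ z) = i
  · have h1 : (Equiv.Perm.decomposeOption.symm (i, σ)) (some z) = none := by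
      rw [decompose_apply_some, if_pos h]
    have h2 : (Equiv.Perm.decomposeOption.symm (i, σ)) none = some (σ z) := by
      rw [decompose_apply_none, h]
    have s1 : (Equiv.Perm.decomposeOption.symm (i, σ)).SameCycle (some z) none := ⟨1, by rw [zpow_one]; exact h1⟩
    have s2 : (Equiv.Perm.decomposeOption.symm (i, σ)).SameCycle none (some (σ z)) := ⟨1, by rw [zpow_one]; exact h2⟩
    exact s1.trans s2
  · exact ⟨1, by rw [zpow_one, decompose_apply_some, if_neg h]⟩

lemma sameCycle_decompose (σ : Equiv.Perm α) (i : Option α) (x y : α) :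
    (Equiv.Perm.decomposeOption.symm (i, σ)).SameCycle (some x) (some y) ↔ σ.SameCycle x y := by
  constructor
  · intro h
    obtain ⟨k, -, hk⟩ := h.exists_pow_eq'
    clear h
    induction k using Nat.strong_induction_on generalizing x with
    | _ k IH =>
      match k, hk with
      | 0, hk => simp at hk; exact hk ▸ Equiv.Perm.SameCycle.refl _ _
      | Nat.succ k, hk =>
        rw [pow_succ, Equiv.Perm.mul_apply] at hk
        by_cases h : some (σ x) = i
        · rw [decompose_apply_some, if_pos h] at hk
          match k, hk with
          | 0, hk => simp at hk
          | Nat.succ k, hk =>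
            rw [pow_succ, Equiv.Perm.mul_apply, decompose_apply_none] at hk
            rcases i with _ | p
            · exact absurd h (by simp)
            · have hxp : σ.SameCycle x p := ⟨1, by simpa using h⟩
              exact hxp.trans (IH k (by omega) p hk)
        · rw [decompose_apply_some, if_neg h] at hk
          have hxs : σ.SameCycle x (σ x) := ⟨1, by simp⟩
          exact hxs.trans (IH k (by omega) (σ x) hk)
  · intro h
    obtain ⟨k, -, hk⟩ := h.exists_pow_eq'
    subst hk
    clear h
    induction k with
    | zero => exact Equiv.Perm.SameCycle.refl _ _
    | succ k ihk =>
      rw [pow_succ', Equiv.Perm.mul_apply]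
      exact ihk.trans (sameCycle_step σ i _)

end core

lemma permCongr_pow_apply {α β : Type*} (e : α ≃ β) (p : Equiv.Perm α) (k : ℕ) (x : β) :
    ((e.permCongr p) ^ k) x = e ((p ^ k) (e.symm x)) := by
  induction k generalizing x with
  | zero => simp
  | succ k ih =>
      rw [pow_succ, Equiv.Perm.mul_apply, pow_succ, Equiv.Perm.mul_apply, ih]
      simp [Equiv.permCongr_apply]

lemma sameCycle_permCongr {α β : Type*} [Fintype α] [Fintype β] (e : α ≃ β) (p : Equiv.Perm α)
    (x y : β) : (e.permCongr p).SameCycle x y ↔ p.SameCycle (e.symm x) (e.symm y) := by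
  constructor
  · rintro h
    obtain ⟨k, -, hk⟩ := h.exists_pow_eq'
    rw [permCongr_pow_apply] at hk
    exact ⟨(k : ℤ), by rw [zpow_natCast, ← hk]; simp⟩
  · rintro h
    obtain ⟨k, -, hk⟩ := h.exists_pow_eq'
    exact ⟨(k : ℤ), by rw [zpow_natCast, permCongr_pow_apply, hk]; simp⟩

/-- The decomposition equivalence. -/
def Φ (N : ℕ) : Equiv.Perm (Fin (N+1)) ≃ Option (Fin N) × Equiv.Perm (Fin N) :=
  (Equiv.permCongr finSuccEquivLast).trans Equiv.Perm.decomposeOption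

lemma Φ_symm_apply (N : ℕ) (i : Option (Fin N)) (σ : Equiv.Perm (Fin N)) :
    (Φ N).symm (i, σ) = finSuccEquivLast.symm.permCongr (Equiv.Perm.decomposeOption.symm (i, σ)) := by
  rfl

lemma sep_transfer {N m : ℕ} (hm : m ≤ N) (i : Option (Fin N)) (σ : Equiv.Perm (Fin N)) :
    Separates m ((Φ N).symm (i, σ)) ↔ Separates m σ := by
  rw [Φ_symm_apply]
  constructor
  · intro H x y hx hy hxy hs
    refine H (Fin.castSucc x) (Fin.castSucc y) (by simpa using hx) (by simpa using hy)
      (by simpa [Fin.ext_iff] using hxy) ?_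
    rw [sameCycle_permCongr]
    simp only [Equiv.symm_symm, finSuccEquivLast_castSucc]
    rw [sameCycle_decompose]
    exact hs
  · intro H a b ha hb hab hs
    rw [sameCycle_permCongr] at hs
    have hane : a ≠ Fin.last N := by
      intro h; rw [h] at ha; simp at ha; omega
    have hbne : b ≠ Fin.last N := by
      intro h; rw [h] at hb; simp at hb; omega
    rw [Equiv.symm_symm] at hs
    rw [← Fin.castSucc_castPred a hane, ← Fin.castSucc_castPred b hbne] at hs
    rw [finSuccEquivLast_castSucc, finSuccEquivLast_castSucc, sameCycle_decompose] at hs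
    exact H _ _ (by simpa using ha) (by simpa using hb)
      (by simpa [Fin.ext_iff] using hab) hs

lemma sign_transfer {N : ℕ} (i : Option (Fin N)) (σ : Equiv.Perm (Fin N)) :
    Equiv.Perm.sign ((Φ N).symm (i, σ)) = (if i = none then 1 else -1) * Equiv.Perm.sign σ := by
  rw [Φ_symm_apply, Equiv.Perm.sign_permCongr]
  rcases i with _ | p
  · simp
  · simp [Equiv.Perm.decomposeOption]

def Aq (m N : ℕ) : ℚ := ∑ σ : Equiv.Perm (Fin N), if Separates m σ then 1 else 0

def Bq (m N : ℕ) : ℚ :=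
  ∑ σ : Equiv.Perm (Fin N), if Separates m σ then ((Equiv.Perm.sign σ : ℤ) : ℚ) else 0

lemma sep_one (m N : ℕ) (hm : N ≤ m) (σ : Equiv.Perm (Fin N)) : Separates m σ ↔ σ = 1 := by
  constructor
  · intro H
    ext x
    by_contra hx
    have h1 : σ x ≠ x := fun h => hx (congrArg Fin.val h)
    exact H x (σ x) (lt_of_lt_of_le x.isLt hm) (lt_of_lt_of_le (σ x).isLt hm)
      (Ne.symm h1) ⟨1, by simp⟩
  · rintro rfl i j _ _ hij hs
    exact hij (Equiv.Perm.sameCycle_one.mp hs)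

lemma Aq_base (m : ℕ) : Aq m m = 1 := by
  rw [Aq]
  rw [Finset.sum_eq_single (1 : Equiv.Perm (Fin m))]
  · simp [sep_one m m le_rfl]
  · intro σ _ hσ
    rw [if_neg]
    rw [sep_one m m le_rfl]
    exact hσ
  · simp

lemma Bq_base (m : ℕ) : Bq m m = 1 := by
  rw [Bq]
  rw [Finset.sum_eq_single (1 : Equiv.Perm (Fin m))]
  · simp [sep_one m m le_rfl]
  · intro σ _ hσ
    rw [if_neg]
    rw [sep_one m m le_rfl]
    exact hσ
  · simp

lemma Aq_rec (m N : ℕ) (hm : m ≤ N) : Aq m (N+1) = (N+1) * Aq m N := by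
  rw [Aq, ← Equiv.sum_comp ((Φ N).symm) (fun σ => if Separates m σ then (1:ℚ) else 0),
    Fintype.sum_prod_type]
  have : ∀ i : Option (Fin N), ∀ σ : Equiv.Perm (Fin N),
      (if Separates m ((Φ N).symm (i, σ)) then (1:ℚ) else 0)
        = if Separates m σ then (1:ℚ) else 0 := by
    intro i σ; simp only [sep_transfer hm]
  rw [Finset.sum_congr rfl fun i _ => Finset.sum_congr rfl fun σ _ => this i σ]
  rw [Finset.sum_const, Finset.card_univ, Fintype.card_option, Fintype.card_fin,
    nsmul_eq_mul, Aq]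
  push_cast
  ring

lemma Bq_rec (m N : ℕ) (hm : m ≤ N) : Bq m (N+1) = (1 - N) * Bq m N := by
  rw [Bq, ← Equiv.sum_comp ((Φ N).symm)
    (fun σ => if Separates m σ then ((Equiv.Perm.sign σ : ℤ) : ℚ) else 0),
    Fintype.sum_prod_type]
  have : ∀ i : Option (Fin N), ∀ σ : Equiv.Perm (Fin N),
      (if Separates m ((Φ N).symm (i, σ)) then ((Equiv.Perm.sign ((Φ N).symm (i, σ)) : ℤ) : ℚ) else 0)
        = (if i = none then (1:ℚ) else -1) *
            (if Separates m σ then ((Equiv.Perm.sign σ : ℤ) : ℚ) else 0) := by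
    intro i σ
    simp only [sep_transfer hm, sign_transfer]
    by_cases h : Separates m σ <;> by_cases hi : i = none <;> simp [h, hi]
  rw [Finset.sum_congr rfl fun i _ => Finset.sum_congr rfl fun σ _ => this i σ]
  have h2 : ∀ i : Option (Fin N),
      (∑ σ : Equiv.Perm (Fin N),
        (if i = none then (1:ℚ) else -1) * (if Separates m σ then ((Equiv.Perm.sign σ : ℤ) : ℚ) else 0))
      = (if i = none then (1:ℚ) else -1) * Bq m N := by
    intro i; rw [← Finset.mul_sum]; rfl
  rw [Finset.sum_congr rfl fun i _ => h2 i, ← Finset.sum_mul, Fintype.sum_option,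
    Finset.sum_congr rfl (fun (a : Fin N) _ => if_neg (by simp : ¬(some a : Option (Fin N)) = none)),
    if_pos rfl, Finset.sum_const, Finset.card_univ, Fintype.card_fin, nsmul_eq_mul]
  ring

lemma Aq_closed (m d : ℕ) : (m.factorial : ℚ) * Aq m (m + d) = ((m + d).factorial : ℚ) := by
  induction d with
  | zero => simp [Aq_base]
  | succ d ih =>
      rw [show m + (d+1) = (m+d)+1 from rfl, Aq_rec m (m+d) (by omega), Nat.factorial_succ]
      push_cast
      rw [show (m.factorial:ℚ) * ((↑m + ↑d + 1) * Aq m (m + d))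
          = (↑m + ↑d + 1) * ((m.factorial:ℚ) * Aq m (m + d)) by ring, ih]

lemma Bq_closed (m d : ℕ) : Bq m (m + d) = ∏ j ∈ Finset.range d, (1 - ((m + j : ℕ) : ℚ)) := by
  induction d with
  | zero => simp [Bq_base]
  | succ d ih =>
      rw [show m + (d+1) = (m+d)+1 from rfl, Bq_rec m (m+d) (by omega), ih,
        Finset.prod_range_succ]
      push_cast
      ring

lemma prod_eval (m d : ℕ) (hm1 : 1 ≤ m) :
    (m.factorial : ℚ) * ∏ j ∈ Finset.range (d+1), (((m + j : ℕ) : ℚ) - 1)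
      = (((m-1) + d).factorial : ℚ) * m * ((m:ℚ) - 1) := by
  obtain ⟨a, rfl⟩ : ∃ a, m = a + 1 := ⟨m-1, by omega⟩
  simp only [Nat.add_sub_cancel]
  induction d with
  | zero =>
      rw [Finset.prod_range_one, Nat.factorial_succ]
      push_cast
      ring
  | succ d ih =>
      rw [Finset.prod_range_succ,
        show ((a+1).factorial : ℚ) *
            ((∏ j ∈ Finset.range (d+1), (((a+1+j : ℕ) : ℚ) - 1)) * (((a+1+(d+1) : ℕ) : ℚ) - 1))
          = (((a+1).factorial : ℚ) * ∏ j ∈ Finset.range (d+1), (((a+1+j : ℕ) : ℚ) - 1)) *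
              (((a+1+(d+1) : ℕ) : ℚ) - 1) from by ring, ih,
        show a + (d+1) = (a+d)+1 from rfl, Nat.factorial_succ]
      push_cast
      ring

lemma multiset_card_le_sum (s : Multiset ℕ) (h : ∀ x ∈ s, 1 ≤ x) : Multiset.card s ≤ s.sum := by
  induction s using Multiset.induction_on with
  | empty => simp
  | cons a t ih =>
      rw [Multiset.card_cons, Multiset.sum_cons]
      have h1 := h a (by simp)
      have h2 := ih (fun x hx => h x (by simp [hx]))
      omega

lemma fixed_add_support {N : ℕ} (σ : Equiv.Perm (Fin N)) :
    σ.cycleType.sum + (Finset.univ.filter fun x => σ x = x).card = N := by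
  rw [Equiv.Perm.sum_cycleType]
  have h := Finset.card_filter_add_card_filter_not (s := (Finset.univ : Finset (Fin N)))
    (p := fun x => σ x = x)
  have hs : σ.support = Finset.univ.filter fun x => ¬ σ x = x := rfl
  rw [hs]
  rw [Finset.card_univ, Fintype.card_fin] at h
  omega

lemma cc_lower {N : ℕ} (σ : Equiv.Perm (Fin (N+1))) : 1 ≤ cycleCount σ := by
  rw [cycleCount]
  by_contra h
  have h1 : Multiset.card σ.cycleType = 0 := by omega
  have h2 : σ = 1 := Equiv.Perm.card_cycleType_eq_zero.mp h1
  subst h2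
  simp at h

lemma cc_upper {N : ℕ} (σ : Equiv.Perm (Fin (N+1))) : cycleCount σ ≤ N+1 := by
  rw [cycleCount]
  have h1 : Multiset.card σ.cycleType ≤ σ.cycleType.sum :=
    multiset_card_le_sum _ (fun x hx => le_trans (by norm_num)
      (Equiv.Perm.two_le_of_mem_cycleType hx))
  have h2 := fixed_add_support σ
  omega

lemma parity_sign {n : ℕ} (σ : Equiv.Perm (Fin (n+1))) :
    cycleCount σ % 2 = n % 2 ↔ Equiv.Perm.sign σ = -1 := by
  rw [Equiv.Perm.sign_of_cycleType, cycleCount]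
  have hfs := fixed_add_support σ
  rcases Nat.even_or_odd (σ.cycleType.sum + Multiset.card σ.cycleType) with h | h
  · rw [Even.neg_one_pow h]
    rw [Nat.even_iff] at h
    constructor
    · intro hp; exfalso; omega
    · intro h1; exact absurd h1 (by decide)
  · rw [Odd.neg_one_pow h]
    rw [Nat.odd_iff] at h
    constructor
    · intro _; rfl
    · intro _; omega

lemma sepCount_eq_card (N m k : ℕ) :
    sepCount N m k
      = (Finset.univ.filter fun σ : Equiv.Perm (Fin N) =>
          cycleCount σ = k ∧ Separates m σ).card := by
  rw [sepCount, Nat.card_eq_fintype_card, Fintype.card_subtype]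

lemma sum_red (n m : ℕ) :
    (∑ k ∈ (Finset.Icc 1 (n + 1)).filter (fun k => k % 2 = n % 2), sepCount (n + 1) m k)
      = (Finset.univ.filter fun σ : Equiv.Perm (Fin (n+1)) =>
          Separates m σ ∧ Equiv.Perm.sign σ = -1).card := by
  rw [Finset.card_eq_sum_card_fiberwise (f := cycleCount)
    (t := (Finset.Icc 1 (n + 1)).filter (fun k => k % 2 = n % 2))
    (fun σ hσ => by
      simp only [Finset.mem_coe, Finset.mem_filter, Finset.mem_univ, true_and] at hσ
      simp only [Finset.mem_coe, Finset.mem_filter, Finset.mem_Icc]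
      exact ⟨⟨cc_lower σ, cc_upper σ⟩, (parity_sign σ).mpr hσ.2⟩)]
  refine Finset.sum_congr rfl fun k hk => ?_
  rw [sepCount_eq_card]
  congr 1
  ext σ
  simp only [Finset.mem_filter, Finset.mem_univ, true_and, Finset.mem_Icc] at hk ⊢
  constructor
  · intro h
    have hcc : cycleCount σ = k := by tauto
    have h2 : Equiv.Perm.sign σ = -1 := (parity_sign σ).mp (by rw [hcc]; exact hk.2)
    tauto
  · intro h; tauto

lemma count_eq (n m : ℕ) :
    2 * ((Finset.univ.filter fun σ : Equiv.Perm (Fin (n+1)) =>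
        Separates m σ ∧ Equiv.Perm.sign σ = -1).card : ℚ)
      = Aq m (n+1) - Bq m (n+1) := by
  rw [Aq, Bq, ← Finset.sum_sub_distrib]
  have key : ∀ σ : Equiv.Perm (Fin (n+1)),
      ((if Separates m σ then (1:ℚ) else 0)
        - (if Separates m σ then ((Equiv.Perm.sign σ : ℤ) : ℚ) else 0))
      = if (Separates m σ ∧ Equiv.Perm.sign σ = -1) then 2 else 0 := by
    intro σ
    rcases Int.units_eq_one_or (Equiv.Perm.sign σ) with h | h <;>
      by_cases hs : Separates m σ <;> simp [h, hs] <;> norm_num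
  rw [Finset.sum_congr rfl fun σ _ => key σ, ← Finset.sum_filter, Finset.sum_const,
    nsmul_eq_mul]
  ring


/-- For `n ≥ 2` and `1 ≤ m ≤ n` with `n - m` odd:
`Σ_{k ≥ 1, k ≡ n (mod 2)} C_m(n+1, k) = (n+m)(n+1-m)(n-1)! / (2 m!)`,
the sum being finite since `C_m(n+1, k) = 0` for `k > n + 1` (so it may be truncated at
`k = n + 1`). -/
theorem sepCount_parity_sum_odd (n m : ℕ) (hn : 2 ≤ n) (hm1 : 1 ≤ m) (hm : m ≤ n)
    (hodd : Odd (n - m)) :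
    ((∑ k ∈ (Finset.Icc 1 (n + 1)).filter (fun k => k % 2 = n % 2),
        sepCount (n + 1) m k : ℕ) : ℚ) =
      ((n + m : ℕ) : ℚ) * ((n + 1 - m : ℕ) : ℚ) * (Nat.factorial (n - 1) : ℚ) /
        (2 * (Nat.factorial m : ℚ)) := by
  rw [sum_red n m]
  have hfacm : (m.factorial : ℚ) ≠ 0 := Nat.cast_ne_zero.mpr (Nat.factorial_ne_zero m)
  have hA := Aq_closed m (n+1-m)
  have hB := Bq_closed m (n+1-m)
  rw [show m + (n+1-m) = n+1 by omega] at hA hB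
  have heven : Even (n+1-m) := by
    rcases hodd with ⟨t, ht⟩
    exact ⟨t+1, by omega⟩
  have hBneg : Bq m (n+1) = ∏ j ∈ Finset.range (n+1-m), (((m+j:ℕ):ℚ) - 1) := by
    rw [hB]
    calc ∏ j ∈ Finset.range (n+1-m), (1 - ((m+j:ℕ):ℚ))
        = ∏ j ∈ Finset.range (n+1-m), ((-1) * ((((m+j:ℕ):ℚ)) - 1)) := by
          refine Finset.prod_congr rfl fun j _ => by ring
      _ = (-1)^(n+1-m) * ∏ j ∈ Finset.range (n+1-m), ((((m+j:ℕ):ℚ)) - 1) := by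
          rw [Finset.prod_mul_distrib, Finset.prod_const, Finset.card_range]
      _ = ∏ j ∈ Finset.range (n+1-m), ((((m+j:ℕ):ℚ)) - 1) := by
          rw [heven.neg_one_pow, one_mul]
  have hB2 : (m.factorial:ℚ) * Bq m (n+1) = ((n-1).factorial:ℚ) * m * ((m:ℚ)-1) := by
    rw [hBneg, show n+1-m = (n-m)+1 by omega, prod_eval m (n-m) hm1,
      show (m-1)+(n-m) = n-1 by omega]
  have hcard : ((Finset.univ.filter fun σ : Equiv.Perm (Fin (n+1)) =>
      Separates m σ ∧ Equiv.Perm.sign σ = -1).card : ℚ)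
      = (Aq m (n+1) - Bq m (n+1)) / 2 := by
    rw [eq_div_iff (by norm_num : (2:ℚ) ≠ 0), mul_comm]
    exact count_eq n m
  rw [hcard]
  have hAq : Aq m (n+1) = ((n+1).factorial : ℚ) / m.factorial := by
    rw [eq_div_iff hfacm, mul_comm]; exact hA
  have hBq : Bq m (n+1) = ((n-1).factorial:ℚ) * m * ((m:ℚ)-1) / m.factorial := by
    rw [eq_div_iff hfacm, mul_comm]; exact hB2
  rw [hAq, hBq]
  have hfact : ((n+1).factorial : ℚ) = ((n:ℚ)+1) * n * ((n-1).factorial) := by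
    rw [Nat.factorial_succ]
    rw_mod_cast [← Nat.mul_factorial_pred (by omega : n ≠ 0)]
    push_cast
    ring
  have hc1 : ((n+1-m : ℕ) : ℚ) = (n:ℚ) + 1 - m := by
    rw [Nat.cast_sub (by omega)]
    push_cast
    ring
  rw [hfact, hc1]
  push_cast
  field_simp
  ring
end
end
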